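/- arXiv:1407.0194 — 9 statements merged into one kernel-verified Lean document; each statement's English description precedes it below -/
import Mathlib

section
/- Let m ≥ 1 be an integer and let z be a complex number with Re z > -m such that z is not a nonpositive integer. Then the integral ∫₀^∞ s^{z-1} (e^{-s} - 1)^m e^{-s} ds converges absolutely and equals Γ(z) · Σ_{k=0}^{m} binom(m,k) (-1)^{m-k} (k+1)^{-z}. -/
open MeasureTheory Set Filter Asymptotics Real Topology

local notation "cexp" => Complex.exp

private lemma abs_exp_sub_one_le {t : ℝ} (ht : 0 ≤ t) :
    ‖cexp (-(t : ℂ)) - 1‖ ≤ min t 1 := by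
  have h1 : cexp (-(t : ℂ)) = ((Real.exp (-t) : ℝ) : ℂ) := by
    rw [Complex.ofReal_exp, Complex.ofReal_neg]
  rw [h1, show ((Real.exp (-t) : ℝ) : ℂ) - 1 = ((Real.exp (-t) - 1 : ℝ) : ℂ) by push_cast; ring,
    Complex.norm_real, Real.norm_eq_abs]
  have he : Real.exp (-t) ≤ 1 := Real.exp_le_one_iff.mpr (by linarith)
  have hpos : 0 < Real.exp (-t) := Real.exp_pos _
  rw [abs_of_nonpos (by linarith)]
  refine le_min ?_ (by linarith)
  have := Real.add_one_le_exp (-t)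
  linarith

private lemma gamma_shift (m : ℕ) (w : ℂ) (h : ∀ j : ℕ, j < m → w + j ≠ 0) :
    Complex.Gamma (w + m) = (∏ j ∈ Finset.range m, (w + j)) * Complex.Gamma w := by
  induction m with
  | zero => simp
  | succ n ih =>
    have h1 : w + (n + 1 : ℕ) = (w + n) + 1 := by push_cast; ring
    rw [h1, Complex.Gamma_add_one _ (h n (Nat.lt_succ_self n)),
      ih (fun j hj => h j (hj.trans (Nat.lt_succ_self n))), Finset.prod_range_succ]
    ring

private lemma mellin_eq (m : ℕ) (w : ℂ) (hw : 0 < w.re) :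
    mellin (fun s : ℝ => (cexp (-(s : ℂ)) - 1) ^ m * cexp (-(s : ℂ))) w
      = Complex.Gamma w *
          ∑ k ∈ Finset.range (m + 1),
            (m.choose k : ℂ) * (-1) ^ (m - k) * ((k : ℂ) + 1) ^ (-w) := by
  set a : Fin (m + 1) → ℂ := fun i => (m.choose i : ℂ) * (-1) ^ (m - (i : ℕ)) with ha
  set p : Fin (m + 1) → ℝ := fun i => (i : ℕ) + 1 with hp
  have hppos : ∀ i, (0 : ℝ) < p i := fun i => by positivity
  have hF : ∀ t ∈ Ioi (0 : ℝ), HasSum (fun i => a i * (Real.exp (-p i * t) : ℂ))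
      ((cexp (-(t : ℂ)) - 1) ^ m * cexp (-(t : ℂ))) := by
    intro t _
    have key : (cexp (-(t : ℂ)) - 1) ^ m * cexp (-(t : ℂ))
        = ∑ i : Fin (m + 1), a i * (Real.exp (-p i * t) : ℂ) := by
      rw [Fin.sum_univ_eq_sum_range (fun k => ((m.choose k : ℂ) * (-1) ^ (m - k)) *
        (Real.exp (-((k : ℝ) + 1) * t) : ℂ)) (m + 1)]
      rw [sub_eq_add_neg, show (-1 : ℂ) = -1 from rfl, add_pow, Finset.sum_mul]
      refine Finset.sum_congr rfl fun k _ => ?_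
      have he : cexp (-(t : ℂ)) ^ k * cexp (-(t : ℂ)) = (Real.exp (-((k : ℝ) + 1) * t) : ℂ) := by
        rw [← Complex.exp_nat_mul, ← Complex.exp_add, Complex.ofReal_exp]
        congr 1
        push_cast
        ring
      calc cexp (-(t:ℂ)) ^ k * (-1) ^ (m - k) * (m.choose k : ℂ) * cexp (-(t:ℂ))
          = ((m.choose k : ℂ) * (-1) ^ (m - k)) * (cexp (-(t:ℂ)) ^ k * cexp (-(t:ℂ))) := by ring
        _ = ((m.choose k : ℂ) * (-1) ^ (m - k)) * (Real.exp (-((k : ℝ) + 1) * t) : ℂ) := by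
            rw [he]
    rw [key]
    exact hasSum_fintype _
  have H := hasSum_mellin (a := a) (p := p)
    (fun i => Or.inr (hppos i)) hw hF ((hasSum_fintype _).summable)
  have h2 : mellin (fun s : ℝ => (cexp (-(s : ℂ)) - 1) ^ m * cexp (-(s : ℂ))) w
      = ∑ i : Fin (m + 1), Complex.Gamma w * a i / ((p i : ℝ) : ℂ) ^ w :=
    ((hasSum_fintype _).unique H).symm
  simp only [ha, hp] at h2
  rw [h2, Finset.mul_sum,
    Fin.sum_univ_eq_sum_range (fun k => Complex.Gamma w * ((m.choose k : ℂ) * (-1) ^ (m - k)) /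
      ((((k : ℝ) + 1 : ℝ)) : ℂ) ^ w) (m + 1)]
  refine Finset.sum_congr rfl fun k _ => ?_
  have hb : ((((k : ℝ) + 1 : ℝ)) : ℂ) = (k : ℂ) + 1 := by push_cast; ring
  rw [hb, Complex.cpow_neg, div_eq_mul_inv]
  ring

/-- For an integer `m ≥ 1` and `z : ℂ` with `Re z > -m` that is not a
nonpositive integer, the integral `∫₀^∞ s^(z-1) (e^(-s) - 1)^m e^(-s) ds` converges
absolutely and equals `Γ(z) · ∑_{k=0}^m (m choose k) (-1)^(m-k) (k+1)^(-z)`. -/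
theorem stmt_0 (m : ℕ) (hm : 1 ≤ m) (z : ℂ) (hzre : -(m : ℝ) < z.re)
    (hz : ∀ n : ℤ, n ≤ 0 → z ≠ (n : ℂ)) :
    IntegrableOn
      (fun s : ℝ => (s : ℂ) ^ (z - 1) * (Complex.exp (-(s : ℂ)) - 1) ^ m *
        Complex.exp (-(s : ℂ))) (Ioi 0) volume ∧
    ∫ s in Ioi (0 : ℝ),
        (s : ℂ) ^ (z - 1) * (Complex.exp (-(s : ℂ)) - 1) ^ m * Complex.exp (-(s : ℂ))
      = Complex.Gamma z *
          ∑ k ∈ Finset.range (m + 1),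
            (m.choose k : ℂ) * (-1) ^ (m - k) * ((k : ℂ) + 1) ^ (-z) := by
  set F : ℝ → ℂ := fun s => (cexp (-(s : ℂ)) - 1) ^ m * cexp (-(s : ℂ)) with hF
  have hcont : Continuous F := by
    apply Continuous.mul
    · exact ((Complex.continuous_exp.comp (Complex.continuous_ofReal.neg)).sub
        continuous_const).pow m
    · exact Complex.continuous_exp.comp (Complex.continuous_ofReal.neg)
  have hfc : LocallyIntegrableOn F (Ioi 0) volume :=
    hcont.locallyIntegrable.locallyIntegrableOn _
  have hnorm : ∀ t : ℝ, 0 ≤ t → ‖F t‖ ≤ min t 1 ^ m * Real.exp (-t) := by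
    intro t ht
    have h1 : ‖F t‖ = ‖cexp (-(t : ℂ)) - 1‖ ^ m * Real.exp (-t) := by
      simp [hF, map_mul, map_pow, Complex.norm_exp]
    rw [h1]
    exact mul_le_mul_of_nonneg_right
      (pow_le_pow_left₀ (norm_nonneg _) (abs_exp_sub_one_le ht) m) (Real.exp_nonneg _)
  have hf_top : F =O[atTop] fun t => Real.exp (-1 * t) := by
    refine IsBigO.of_bound 1 ?_
    filter_upwards [eventually_ge_atTop (0 : ℝ)] with t ht
    rw [Real.norm_eq_abs, abs_of_nonneg (Real.exp_nonneg _), neg_one_mul]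
    calc ‖F t‖ ≤ min t 1 ^ m * Real.exp (-t) := hnorm t ht
      _ ≤ 1 * Real.exp (-t) := mul_le_mul_of_nonneg_right
          (pow_le_one₀ (le_min ht zero_le_one) (min_le_right _ _)) (Real.exp_nonneg _)
  have hf_bot : F =O[𝓝[>] (0:ℝ)] fun t => t ^ (-(-(m : ℝ))) := by
    refine IsBigO.of_bound 1 ?_
    filter_upwards [self_mem_nhdsWithin] with t ht
    have ht' : (0 : ℝ) < t := ht
    rw [neg_neg, Real.norm_eq_abs, abs_of_nonneg (Real.rpow_nonneg ht'.le _),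
      Real.rpow_natCast, one_mul]
    calc ‖F t‖ ≤ min t 1 ^ m * Real.exp (-t) := hnorm t ht'.le
      _ ≤ t ^ m * 1 := mul_le_mul
          (pow_le_pow_left₀ (le_min ht'.le zero_le_one) (min_le_left _ _) m)
          (Real.exp_le_one_iff.mpr (by linarith)) (Real.exp_nonneg _) (pow_nonneg ht'.le m)
      _ = t ^ m := mul_one _
  -- Integrability
  have hconv : MellinConvergent F z :=
    mellinConvergent_of_isBigO_rpow_exp one_pos hfc hf_top hf_bot hzre
  have hfun : (fun s : ℝ => (s : ℂ) ^ (z - 1) * (cexp (-(s : ℂ)) - 1) ^ m * cexp (-(s : ℂ)))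
      = fun t : ℝ => (t : ℂ) ^ (z - 1) • F t := by
    funext s
    simp only [hF, smul_eq_mul, mul_assoc]
  constructor
  · rw [hfun]; exact hconv
  -- The identity, via analytic continuation
  have hzj : ∀ j : ℕ, j < m → z + j ≠ 0 := by
    intro j _ hcon
    refine hz (-(j : ℤ)) (by simp) ?_
    push_cast
    linear_combination hcon
  set S : ℂ → ℂ := fun w => ∑ k ∈ Finset.range (m + 1),
      (m.choose k : ℂ) * (-1) ^ (m - k) * ((k : ℂ) + 1) ^ (-w) with hS
  set P : ℂ → ℂ := fun w => ∏ j ∈ Finset.range m, (w + j) with hP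
  set U : Set ℂ := {w : ℂ | -(m : ℝ) < w.re} with hU
  have hUo : IsOpen U := isOpen_lt continuous_const Complex.continuous_re
  have hUc : Convex ℝ U := convex_halfSpace_re_gt _
  have hPdiff : Differentiable ℂ P :=
    Differentiable.fun_finset_prod fun j _ => differentiable_id.add_const _
  have hSdiff : Differentiable ℂ S := by
    refine Differentiable.fun_sum fun k _ => Differentiable.const_mul ?_ _
    exact Differentiable.const_cpow differentiable_id.neg (Or.inl (by
      simp only [ne_eq]
      intro hcon
      have : ((k : ℝ) + 1 : ℝ) = 0 := by exact_mod_cast (by push_cast at hcon ⊢; exact hcon :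
        (((k : ℝ) + 1 : ℝ) : ℂ) = 0)
      linarith [Nat.cast_nonneg (α := ℝ) k]))
  have hf1 : DifferentiableOn ℂ (fun w => P w * mellin F w) U := by
    intro w hw
    refine DifferentiableAt.differentiableWithinAt ?_
    exact (hPdiff w).mul
      (mellin_differentiableAt_of_isBigO_rpow_exp one_pos hfc hf_top hf_bot hw)
  have hg1 : DifferentiableOn ℂ (fun w => Complex.Gamma (w + m) * S w) U := by
    intro w hw
    refine DifferentiableAt.differentiableWithinAt (DifferentiableAt.mul ?_ (hSdiff w))
    have hne : ∀ n : ℕ, w + m ≠ -n := by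
      intro n hcon
      have := congrArg Complex.re hcon
      simp only [Complex.add_re, Complex.natCast_re, Complex.neg_re] at this
      have hw' : -(m : ℝ) < w.re := by simpa only [hU, mem_setOf_eq] using hw
      linarith [Nat.cast_nonneg (α := ℝ) n]
    exact (Complex.differentiableAt_Gamma _ hne).comp w (differentiableAt_id.add_const _)
  have heqOn : EqOn (fun w => P w * mellin F w) (fun w => Complex.Gamma (w + m) * S w) U := by
    have hmem : (1 : ℂ) ∈ U := by
      have : (1 : ℝ) ≤ (m : ℝ) := by exact_mod_cast hm
      simp only [hU, mem_setOf_eq, Complex.one_re]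
      linarith
    refine AnalyticOnNhd.eqOn_of_preconnected_of_eventuallyEq
      (hf1.analyticOnNhd hUo) (hg1.analyticOnNhd hUo) hUc.isPreconnected hmem ?_
    have hopen : IsOpen {w : ℂ | 0 < w.re} := isOpen_lt continuous_const Complex.continuous_re
    have h1mem : (1 : ℂ) ∈ {w : ℂ | 0 < w.re} := by simp
    filter_upwards [hopen.mem_nhds h1mem] with w hw
    have hw' : 0 < w.re := hw
    have hwj : ∀ j : ℕ, j < m → w + j ≠ 0 := by
      intro j _ hcon
      have := congrArg Complex.re hcon
      simp only [Complex.add_re, Complex.natCast_re, Complex.zero_re] at this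
      linarith [Nat.cast_nonneg (α := ℝ) j]
    show P w * mellin F w = Complex.Gamma (w + m) * S w
    rw [hP, hF, hS, mellin_eq m w hw', gamma_shift m w hwj]
    ring
  have hzU : z ∈ U := by simp only [hU, mem_setOf_eq]; exact hzre
  have hkey : P z * mellin F z = Complex.Gamma (z + m) * S z := heqOn hzU
  have hPne : P z ≠ 0 := by
    rw [hP]
    exact Finset.prod_ne_zero_iff.mpr fun j hj => hzj j (Finset.mem_range.mp hj)
  have hGz : Complex.Gamma (z + m) = P z * Complex.Gamma z := gamma_shift m z hzj
  have hmel : mellin F z = Complex.Gamma z * S z := by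
    apply mul_left_cancel₀ hPne
    rw [hkey, hGz]
    ring
  have : ∫ s in Ioi (0 : ℝ), (s : ℂ) ^ (z - 1) * (cexp (-(s : ℂ)) - 1) ^ m * cexp (-(s : ℂ))
      = mellin F z := by
    rw [hfun]; rfl
  rw [this, hmel]
end

section
/- Let m ≥ 1 be an integer and let z be a complex number with Re z ∈ (-m, 0) such that z is not a negative integer. Then ∫₀^∞ s^{z-1} (e^{-s} - 1)^m ds = Γ(z) f_m(z), where f_m(z) = Σ_{k=1}^{m} binom(m,k) (-1)^{m-k} k^{-z}. -/
open MeasureTheory Set Filter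
open scoped Topology

namespace Stmt1Aux

lemma norm_exp_term_le_one {t : ℝ} (ht : 0 ≤ t) : ‖Complex.exp (-(t : ℂ)) - 1‖ ≤ 1 := by
  rw [← Complex.ofReal_neg, ← Complex.ofReal_exp, ← Complex.ofReal_one, ← Complex.ofReal_sub,
    Complex.norm_real, Real.norm_eq_abs, abs_of_nonpos (by simp [Real.exp_le_one_iff]; linarith)]
  have := Real.exp_nonneg (-t)
  linarith

lemma norm_exp_term_le_self {t : ℝ} (ht : 0 ≤ t) : ‖Complex.exp (-(t : ℂ)) - 1‖ ≤ t := by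
  rw [← Complex.ofReal_neg, ← Complex.ofReal_exp, ← Complex.ofReal_one, ← Complex.ofReal_sub,
    Complex.norm_real, Real.norm_eq_abs, abs_of_nonpos (by simp [Real.exp_le_one_iff]; linarith)]
  have := Real.add_one_le_exp (-t)
  linarith

lemma exp_k_rw (k : ℕ) (s : ℝ) :
    Complex.exp (-((k : ℂ) * s)) - 1 = Complex.exp (-((k * s : ℝ) : ℂ)) - 1 := by
  push_cast; ring_nf

/-- Integrability of `s^(z-1) * (exp (-k s) - 1)` on `(0,∞)` for `-1 < re z < 0`. -/
lemma cs_integrable (k : ℕ) (hk : 1 ≤ k) {z : ℂ} (h1 : -1 < z.re) (h2 : z.re < 0) :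
    IntegrableOn (fun s : ℝ => (s : ℂ) ^ (z - 1) * (Complex.exp (-((k : ℂ) * s)) - 1))
      (Ioi 0) := by
  have hk0 : (0 : ℝ) < k := by exact_mod_cast hk
  have hfc : LocallyIntegrableOn (fun t : ℝ => Complex.exp (-((k : ℂ) * t)) - 1) (Ioi 0) := by
    exact (((Complex.continuous_exp.comp (by continuity)).sub
      continuous_const).locallyIntegrable).locallyIntegrableOn _
  have htop : (fun t : ℝ => Complex.exp (-((k : ℂ) * t)) - 1) =O[atTop]
      fun t : ℝ => t ^ (-(0 : ℝ)) := by
    rw [Asymptotics.isBigO_iff]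
    refine ⟨1, ?_⟩
    filter_upwards [eventually_ge_atTop (0 : ℝ)] with t ht
    rw [exp_k_rw]
    have : ‖Complex.exp (-((k * t : ℝ) : ℂ)) - 1‖ ≤ 1 :=
      norm_exp_term_le_one (by positivity)
    simpa [Real.rpow_zero] using this
  have hbot : (fun t : ℝ => Complex.exp (-((k : ℂ) * t)) - 1) =O[𝓝[>] (0:ℝ)]
      fun t : ℝ => t ^ (-(-1 : ℝ)) := by
    rw [Asymptotics.isBigO_iff]
    refine ⟨k, ?_⟩
    filter_upwards [self_mem_nhdsWithin] with t (ht : (0:ℝ) < t)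
    rw [exp_k_rw]
    have : ‖Complex.exp (-((k * t : ℝ) : ℂ)) - 1‖ ≤ k * t :=
      norm_exp_term_le_self (by positivity)
    calc ‖Complex.exp (-((k * t : ℝ) : ℂ)) - 1‖ ≤ k * t := this
      _ = k * ‖t ^ (-(-1:ℝ))‖ := by
          rw [neg_neg, Real.rpow_one, Real.norm_eq_abs, abs_of_pos ht]
  have := mellinConvergent_of_isBigO_rpow (a := 0) (b := -1) hfc htop h2 hbot h1
  simpa [MellinConvergent, smul_eq_mul] using this

lemma exp_decay_integrable (k : ℕ) (hk : 1 ≤ k) {z : ℂ} (h1 : -1 < z.re) :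
    IntegrableOn (fun s : ℝ => (s : ℂ) ^ z * Complex.exp (-((k : ℂ) * s))) (Ioi 0) := by
  have hk0 : (0 : ℝ) < k := by exact_mod_cast hk
  have hfc : LocallyIntegrableOn (fun t : ℝ => Complex.exp (-((k : ℂ) * t))) (Ioi 0) :=
    ((Complex.continuous_exp.comp (by continuity)).locallyIntegrable).locallyIntegrableOn _
  have hnorm : ∀ t : ℝ, ‖Complex.exp (-((k : ℂ) * t))‖ = Real.exp (-(k * t)) := by
    intro t
    rw [Complex.norm_exp]
    norm_num
  have htop : (fun t : ℝ => Complex.exp (-((k : ℂ) * t))) =O[atTop]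
      fun t : ℝ => Real.exp (-(k : ℝ) * t) := by
    rw [Asymptotics.isBigO_iff]
    exact ⟨1, by filter_upwards with t; rw [hnorm]; simp [Real.norm_eq_abs, abs_of_pos,
      Real.exp_pos, neg_mul, le_abs_self]⟩
  have hbot : (fun t : ℝ => Complex.exp (-((k : ℂ) * t))) =O[𝓝[>] (0:ℝ)]
      fun t : ℝ => t ^ (-(0 : ℝ)) := by
    rw [Asymptotics.isBigO_iff]
    refine ⟨1, ?_⟩
    filter_upwards [self_mem_nhdsWithin] with t (ht : (0:ℝ) < t)
    rw [hnorm, Real.rpow_neg ht.le, Real.rpow_zero]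
    have : Real.exp (-(↑k * t)) ≤ 1 := Real.exp_le_one_iff.2 (neg_nonpos.2 (by positivity))
    simpa using this
  have := mellinConvergent_of_isBigO_rpow_exp (a := (k:ℝ)) (b := 0) hk0 hfc htop hbot
    (s := z + 1) (by simp only [Complex.add_re, Complex.one_re]; linarith)
  have h' : IntegrableOn (fun t : ℝ => (t:ℂ) ^ (z + 1 - 1) • Complex.exp (-((k : ℂ) * t)))
      (Ioi 0) := this
  simpa [smul_eq_mul] using h'


lemma cs_value (k : ℕ) (hk : 1 ≤ k) {z : ℂ} (h1 : -1 < z.re) (h2 : z.re < 0) :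
    ∫ s in Ioi (0:ℝ), (s : ℂ) ^ (z - 1) * (Complex.exp (-((k : ℂ) * s)) - 1)
      = Complex.Gamma z * (k : ℂ) ^ (-z) := by
  have hk0 : (0 : ℝ) < k := by exact_mod_cast hk
  have hkC : ((k : ℝ) : ℂ) ≠ 0 := by exact_mod_cast hk0.ne'
  have hz0 : z ≠ 0 := fun h => by simp [h] at h2
  set F : ℝ → ℂ := fun s => (s : ℂ) ^ z / z * (Complex.exp (-((k : ℂ) * s)) - 1) with hF
  set F' : ℝ → ℂ := fun s => (s : ℂ) ^ (z - 1) * (Complex.exp (-((k : ℂ) * s)) - 1)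
      + (s : ℂ) ^ z / z * (-(k : ℂ) * Complex.exp (-((k : ℂ) * s))) with hF'
  -- derivative
  have hderiv : ∀ s ∈ Ioi (0:ℝ), HasDerivAt F (F' s) s := by
    intro s hs
    have hs0 : s ≠ 0 := (mem_Ioi.1 hs).ne'
    have h1' : HasDerivAt (fun y : ℝ => (y : ℂ) ^ z / z) ((s : ℂ) ^ (z - 1)) s := by
      have := hasDerivAt_ofReal_cpow_const' hs0 (r := z - 1) (by
        intro h
        apply hz0
        have : z - 1 + 1 = -1 + 1 := by rw [h]
        simpa using this)
      simpa [sub_add_cancel] using this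
    have h2' : HasDerivAt (fun y : ℝ => Complex.exp (-((k : ℂ) * y)) - 1)
        (-(k : ℂ) * Complex.exp (-((k : ℂ) * s))) s := by
      have hlin : HasDerivAt (fun w : ℂ => Complex.exp (-((k : ℂ) * w)))
          (Complex.exp (-((k : ℂ) * s)) * (-(k : ℂ))) (s : ℂ) := by
        have hinner : HasDerivAt (fun w : ℂ => -((k : ℂ) * w)) (-(k : ℂ)) (s : ℂ) := by
          simpa using ((hasDerivAt_id ((s : ℝ) : ℂ)).const_mul ((k : ℂ))).fun_neg
        simpa [Function.comp_def] using (Complex.hasDerivAt_exp (-((k : ℂ) * s))).comp (s : ℂ) hinner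
      have := (hlin.comp_ofReal).sub_const 1
      simpa [mul_comm] using this
    simpa [F, F'] using h1'.fun_mul h2'
  -- continuity at 0 within Ici 0
  have hF0 : F 0 = 0 := by simp [F, Complex.zero_cpow hz0]
  have hcont : ContinuousWithinAt F (Ici (0:ℝ)) 0 := by
    rw [ContinuousWithinAt, hF0]
    have hbound : ∀ s ∈ Ici (0:ℝ), ‖F s‖ ≤ (k / ‖z‖) * s ^ (z.re + 1) := by
      intro s hs
      rcases eq_or_lt_of_le (mem_Ici.1 hs) with h | h
      · rw [← h, hF0]
        simp [Real.zero_rpow (by linarith : z.re + 1 ≠ 0)]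
      · have hnorm : ‖F s‖ = ‖(s:ℂ)^z‖ / ‖z‖ * ‖Complex.exp (-((k : ℂ) * s)) - 1‖ := by
          simp [F, norm_mul, norm_div]
        rw [hnorm, Complex.norm_cpow_eq_rpow_re_of_pos h]
        have hterm : ‖Complex.exp (-((k : ℂ) * s)) - 1‖ ≤ k * s := by
          rw [exp_k_rw]; exact norm_exp_term_le_self (by positivity)
        have hzn : (0:ℝ) < ‖z‖ := by
          simpa using norm_pos_iff.2 hz0
        calc s ^ z.re / ‖z‖ * ‖Complex.exp (-((k : ℂ) * s)) - 1‖
            ≤ s ^ z.re / ‖z‖ * (k * s) := by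
              apply mul_le_mul_of_nonneg_left hterm (by positivity)
          _ = (k / ‖z‖) * (s ^ z.re * s) := by ring
          _ = (k / ‖z‖) * s ^ (z.re + 1) := by
              rw [Real.rpow_add_one h.ne']
    apply squeeze_zero_norm' (Filter.eventually_inf_principal.2
      (Filter.Eventually.of_forall hbound))
    have : Filter.Tendsto (fun s : ℝ => s ^ (z.re + 1)) (nhdsWithin 0 (Ici 0)) (nhds 0) := by
      have hc : ContinuousAt (fun s : ℝ => s ^ (z.re + 1)) 0 :=
        Real.continuousAt_rpow_const 0 _ (Or.inr (by linarith))
      have := hc.continuousWithinAt (s := Ici (0:ℝ))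
      rw [ContinuousWithinAt] at this
      simpa [Real.zero_rpow (by linarith : z.re + 1 ≠ 0)] using this
    simpa [nhdsWithin] using this.const_mul ((k : ℝ) / ‖z‖)
  -- limit at infinity
  have htop : Filter.Tendsto F atTop (nhds 0) := by
    have hbound : ∀ᶠ s in atTop, ‖F s‖ ≤ ‖z‖⁻¹ * s ^ z.re := by
      filter_upwards [eventually_gt_atTop (0:ℝ)] with s hs
      have hterm : ‖Complex.exp (-((k : ℂ) * s)) - 1‖ ≤ 1 := by
        rw [exp_k_rw]; exact norm_exp_term_le_one (by positivity)
      have hnorm : ‖F s‖ = ‖(s:ℂ)^z‖ / ‖z‖ * ‖Complex.exp (-((k : ℂ) * s)) - 1‖ := by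
        simp [F, norm_mul, norm_div]
      rw [hnorm, Complex.norm_cpow_eq_rpow_re_of_pos hs]
      calc s ^ z.re / ‖z‖ * ‖Complex.exp (-((k : ℂ) * s)) - 1‖
          ≤ s ^ z.re / ‖z‖ * 1 := by
            apply mul_le_mul_of_nonneg_left hterm (by positivity)
        _ = ‖z‖⁻¹ * s ^ z.re := by ring
    apply squeeze_zero_norm' hbound
    have : Filter.Tendsto (fun s : ℝ => s ^ (-(-z.re))) atTop (nhds 0) :=
      tendsto_rpow_neg_atTop (by linarith)
    simpa [neg_neg] using this.const_mul (‖z‖⁻¹)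
  -- integrability of F'
  have hint1 := cs_integrable k hk h1 h2
  have hint2 : IntegrableOn
      (fun s : ℝ => (s : ℂ) ^ z / z * (-(k : ℂ) * Complex.exp (-((k : ℂ) * s)))) (Ioi 0) := by
    have h0 : IntegrableOn (fun s : ℝ => -(k : ℂ) / z * ((s : ℂ) ^ z * Complex.exp (-((k : ℂ) * s))))
        (Ioi 0) := (exp_decay_integrable k hk h1).const_mul (-(k : ℂ) / z)
    apply h0.congr_fun ?_ measurableSet_Ioi
    intro s _; ring
  have hFint : IntegrableOn F' (Ioi 0) := hint1.add hint2
  have hFTC := integral_Ioi_of_hasDerivAt_of_tendsto hcont hderiv hFint htop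
  rw [hF0, sub_zero] at hFTC
  -- split
  have hsplit : ∫ s in Ioi (0:ℝ), F' s
      = (∫ s in Ioi (0:ℝ), (s : ℂ) ^ (z - 1) * (Complex.exp (-((k : ℂ) * s)) - 1))
        + ∫ s in Ioi (0:ℝ), (s : ℂ) ^ z / z * (-(k : ℂ) * Complex.exp (-((k : ℂ) * s))) :=
    integral_add hint1 hint2
  rw [hFTC] at hsplit
  have heval : ∫ s in Ioi (0:ℝ), (s : ℂ) ^ z / z * (-(k : ℂ) * Complex.exp (-((k : ℂ) * s)))
      = (-(k : ℂ) / z) * ((1 / (k:ℝ) : ℂ) ^ (z+1) * Complex.Gamma (z+1)) := by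
    rw [← Complex.integral_cpow_mul_exp_neg_mul_Ioi (a := z + 1)
      (by simp only [Complex.add_re, Complex.one_re]; linarith) hk0, ← MeasureTheory.integral_const_mul]
    apply setIntegral_congr_fun measurableSet_Ioi
    intro s _
    have : ((k:ℝ) : ℂ) = (k : ℂ) := by push_cast; rfl
    rw [add_sub_cancel_right, this]
    ring
  rw [heval] at hsplit
  have hgam : Complex.Gamma (z+1) = z * Complex.Gamma z := Complex.Gamma_add_one z hz0
  have hpow : ((1 / (k:ℝ)) : ℂ) ^ (z+1) = (k : ℂ)⁻¹ ^ z * (k : ℂ)⁻¹ := by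
    have : ((1 / (k:ℝ)) : ℂ) = (k : ℂ)⁻¹ := by push_cast; simp
    rw [this, Complex.cpow_add _ _ (inv_ne_zero (by exact_mod_cast hk0.ne')), Complex.cpow_one]
  have hinv : (k : ℂ)⁻¹ ^ z = (k : ℂ) ^ (-z) := by
    rw [Complex.inv_cpow _ _ (by
      rw [Complex.natCast_arg]; exact Real.pi_ne_zero.symm), ← Complex.cpow_neg]
  have hkC'' : (k : ℂ) ≠ 0 := Nat.cast_ne_zero.2 (by omega)
  have hI := eq_neg_of_add_eq_zero_left hsplit.symm
  rw [hpow, hinv, hgam] at hI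
  rw [hI]
  field_simp


lemma binom_expand (m : ℕ) (hm : 1 ≤ m) (s : ℝ) :
    (Complex.exp (-(s : ℂ)) - 1) ^ m
      = ∑ k ∈ Finset.Icc 1 m, (m.choose k : ℂ) * (-1) ^ (m - k)
          * (Complex.exp (-((k : ℂ) * s)) - 1) := by
  set E : ℂ := Complex.exp (-(s : ℂ)) with hE
  have hEk : ∀ k : ℕ, E ^ k = Complex.exp (-((k : ℂ) * s)) := by
    intro k
    rw [hE, ← Complex.exp_nat_mul]
    congr 1
    ring
  have hbin : (E - 1) ^ m
      = ∑ k ∈ Finset.range (m+1), E ^ k * (-1 : ℂ) ^ (m - k) * (m.choose k) := by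
    have := add_pow E (-1 : ℂ) m
    simpa [sub_eq_add_neg] using this
  have hzero : ∑ k ∈ Finset.range (m+1), (-1 : ℂ) ^ (m - k) * (m.choose k) = 0 := by
    have h := add_pow (1 : ℂ) (-1) m
    simp only [one_pow, one_mul, add_neg_cancel] at h
    rw [zero_pow (by omega)] at h
    exact h.symm
  have hins : Finset.range (m+1) = insert 0 (Finset.Icc 1 m) := by
    ext x; simp [Finset.mem_range, Finset.mem_Icc]; omega
  have h0 : (0 : ℕ) ∉ Finset.Icc 1 m := by simp
  calc (E - 1) ^ m
      = ∑ k ∈ Finset.range (m+1), E ^ k * (-1 : ℂ) ^ (m - k) * (m.choose k)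
        - ∑ k ∈ Finset.range (m+1), (-1 : ℂ) ^ (m - k) * (m.choose k) := by
        rw [hbin, hzero, sub_zero]
    _ = ∑ k ∈ Finset.range (m+1),
          ((m.choose k : ℂ) * (-1) ^ (m - k) * (E ^ k - 1)) := by
        rw [← Finset.sum_sub_distrib]
        exact Finset.sum_congr rfl fun k _ => by ring
    _ = ∑ k ∈ Finset.Icc 1 m,
          ((m.choose k : ℂ) * (-1) ^ (m - k) * (E ^ k - 1)) := by
        rw [hins, Finset.sum_insert h0]
        simp
    _ = _ := Finset.sum_congr rfl fun k _ => by rw [hEk]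

lemma base_case (m : ℕ) (hm : 1 ≤ m) {z : ℂ} (h1 : -1 < z.re) (h2 : z.re < 0) :
    ∫ s in Ioi (0:ℝ), (s : ℂ) ^ (z - 1) * (Complex.exp (-(s : ℂ)) - 1) ^ m
      = Complex.Gamma z *
          ∑ k ∈ Finset.Icc 1 m, (m.choose k : ℂ) * (-1) ^ (m - k) * (k : ℂ) ^ (-z) := by
  calc ∫ s in Ioi (0:ℝ), (s : ℂ) ^ (z - 1) * (Complex.exp (-(s : ℂ)) - 1) ^ m
      = ∫ s in Ioi (0:ℝ), ∑ k ∈ Finset.Icc 1 m,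
          (m.choose k : ℂ) * (-1) ^ (m - k)
            * ((s : ℂ) ^ (z - 1) * (Complex.exp (-((k : ℂ) * s)) - 1)) := by
        refine setIntegral_congr_fun measurableSet_Ioi fun s _ => ?_
        rw [binom_expand m hm s, Finset.mul_sum]
        exact Finset.sum_congr rfl fun k _ => by ring
    _ = ∑ k ∈ Finset.Icc 1 m, ∫ s in Ioi (0:ℝ),
          (m.choose k : ℂ) * (-1) ^ (m - k)
            * ((s : ℂ) ^ (z - 1) * (Complex.exp (-((k : ℂ) * s)) - 1)) := by
        refine integral_finset_sum _ fun k hk => ?_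
        exact ((cs_integrable k (Finset.mem_Icc.1 hk).1 h1 h2).const_mul _)
    _ = ∑ k ∈ Finset.Icc 1 m, (m.choose k : ℂ) * (-1) ^ (m - k)
          * (Complex.Gamma z * (k : ℂ) ^ (-z)) := by
        refine Finset.sum_congr rfl fun k hk => ?_
        rw [MeasureTheory.integral_const_mul, cs_value k (Finset.mem_Icc.1 hk).1 h1 h2]
    _ = _ := by
        rw [Finset.mul_sum]
        exact Finset.sum_congr rfl fun k _ => by ring



lemma convex_S (a b : ℝ) : Convex ℝ {w : ℂ | a < w.re ∧ w.re < b} := by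
  have h : {w : ℂ | a < w.re ∧ w.re < b} = Complex.reCLM ⁻¹' (Ioo a b) := rfl
  rw [h]
  exact (convex_Ioo a b).linear_preimage (Complex.reCLM : ℂ →L[ℝ] ℝ).toLinearMap

lemma convex_A (m : ℝ) : Convex ℝ {w : ℂ | (-m < w.re ∧ w.re < 0) ∧ 0 < w.im} := by
  have h : {w : ℂ | (-m < w.re ∧ w.re < 0) ∧ 0 < w.im}
      = (Complex.reCLM ⁻¹' (Ioo (-m) 0)) ∩ (Complex.imCLM ⁻¹' (Ioi 0)) := by
    ext w; simp [and_assoc]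
  rw [h]
  exact ((convex_Ioo _ _).linear_preimage (Complex.reCLM : ℂ →L[ℝ] ℝ).toLinearMap).inter
    ((convex_Ioi _).linear_preimage (Complex.imCLM : ℂ →L[ℝ] ℝ).toLinearMap)

lemma convex_B (m : ℝ) : Convex ℝ {w : ℂ | (-m < w.re ∧ w.re < 0) ∧ w.im < 0} := by
  have h : {w : ℂ | (-m < w.re ∧ w.re < 0) ∧ w.im < 0}
      = (Complex.reCLM ⁻¹' (Ioo (-m) 0)) ∩ (Complex.imCLM ⁻¹' (Iio 0)) := by
    ext w; simp [and_assoc]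
  rw [h]
  exact ((convex_Ioo _ _).linear_preimage (Complex.reCLM : ℂ →L[ℝ] ℝ).toLinearMap).inter
    ((convex_Iio _).linear_preimage (Complex.imCLM : ℂ →L[ℝ] ℝ).toLinearMap)


lemma preconn (m : ℕ) (hm : 1 ≤ m) :
    IsPreconnected {w : ℂ | (-(m:ℝ) < w.re ∧ w.re < 0) ∧ ∀ n : ℤ, n < 0 → w ≠ (n : ℂ)} := by
  have hm' : (1 : ℝ) ≤ m := by exact_mod_cast hm
  set U := {w : ℂ | (-(m:ℝ) < w.re ∧ w.re < 0) ∧ ∀ n : ℤ, n < 0 → w ≠ (n : ℂ)} with hU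
  set A := {w : ℂ | (-(m:ℝ) < w.re ∧ w.re < 0) ∧ 0 < w.im} with hA
  set B := {w : ℂ | (-(m:ℝ) < w.re ∧ w.re < 0) ∧ w.im < 0} with hB
  have hAU : A ⊆ U := by
    rintro w ⟨hw1, hw2⟩
    exact ⟨hw1, fun n hn hww => by
      rw [hww] at hw2; simp at hw2⟩
  have hBU : B ⊆ U := by
    rintro w ⟨hw1, hw2⟩
    exact ⟨hw1, fun n hn hww => by
      rw [hww] at hw2; simp at hw2⟩
  have hSU : ∀ n : ℤ, -(m:ℤ) ≤ n → n ≤ -1 →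
      {w : ℂ | (n:ℝ) < w.re ∧ w.re < (n:ℝ) + 1} ⊆ U := by
    rintro n hn1 hn2 w ⟨hw1, hw2⟩
    have hn1' : -(m:ℝ) ≤ (n:ℝ) := by exact_mod_cast hn1
    have hn2' : (n:ℝ) + 1 ≤ 0 := by
      have : (n:ℝ) ≤ -1 := by exact_mod_cast hn2
      linarith
    refine ⟨⟨by linarith, by linarith⟩, fun q hq hww => ?_⟩
    have hre : w.re = (q:ℝ) := by rw [hww]; simp
    rw [hre] at hw1 hw2
    have h1 : n < q := by exact_mod_cast hw1
    have h2 : (q:ℝ) < n + 1 := hw2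
    have h2' : q < n + 1 := by exact_mod_cast h2
    omega
  have hS0U : {w : ℂ | (-1 : ℝ) < w.re ∧ w.re < (-1:ℝ) + 1} ⊆ U := by
    have := hSU (-1) (by exact_mod_cast neg_le_neg hm') le_rfl
    simpa using this
  set x₀ : ℂ := ((-1/2 : ℝ) : ℂ) with hx₀
  have hx₀S : x₀ ∈ {w : ℂ | (-1 : ℝ) < w.re ∧ w.re < (-1:ℝ) + 1} := by
    constructor <;> · simp [hx₀]; norm_num
  apply isPreconnected_of_forall x₀
  rintro y ⟨⟨hy1, hy2⟩, hy3⟩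
  have hpS : ∀ a b : ℝ, IsPreconnected {w : ℂ | a < w.re ∧ w.re < b} :=
    fun a b => (convex_S a b).isPreconnected
  have hpA : IsPreconnected A := (convex_A m).isPreconnected
  have hpB : IsPreconnected B := (convex_B m).isPreconnected
  have hw₁A : (⟨-1/2, 1⟩ : ℂ) ∈ A := by
    refine ⟨⟨?_, ?_⟩, ?_⟩ <;> · show _ < _; norm_num; try linarith
  have hw₁S : (⟨-1/2, 1⟩ : ℂ) ∈ {w : ℂ | (-1 : ℝ) < w.re ∧ w.re < (-1:ℝ) + 1} := by
    constructor <;> · show _ < _; norm_num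
  have hpAS : IsPreconnected (A ∪ {w : ℂ | (-1 : ℝ) < w.re ∧ w.re < (-1:ℝ) + 1}) :=
    IsPreconnected.union (⟨-1/2, 1⟩ : ℂ) hw₁A hw₁S hpA (hpS _ _)
  rcases lt_trichotomy y.im 0 with him | him | him
  · -- lower half plane
    have hw₂B : (⟨-1/2, -1⟩ : ℂ) ∈ B := by
      refine ⟨⟨?_, ?_⟩, ?_⟩ <;> · show _ < _; norm_num; try linarith
    have hw₂S : (⟨-1/2, -1⟩ : ℂ) ∈ {w : ℂ | (-1 : ℝ) < w.re ∧ w.re < (-1:ℝ) + 1} := by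
      constructor <;> · show _ < _; norm_num
    refine ⟨B ∪ {w : ℂ | (-1 : ℝ) < w.re ∧ w.re < (-1:ℝ) + 1},
      union_subset hBU hS0U, Or.inr hx₀S, Or.inl ⟨⟨hy1, hy2⟩, him⟩, ?_⟩
    exact IsPreconnected.union (⟨-1/2, -1⟩ : ℂ) hw₂B hw₂S hpB (hpS _ _)
  · -- real axis
    set n : ℤ := ⌊y.re⌋ with hn
    have hfl1 : (n:ℝ) ≤ y.re := Int.floor_le _
    have hfl2 : y.re < (n:ℝ) + 1 := Int.lt_floor_add_one _
    have hnneg : n ≤ -1 := by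
      have : (n:ℝ) < 0 := lt_of_le_of_lt hfl1 hy2
      have : n < 0 := by exact_mod_cast this
      omega
    have hne : (n:ℝ) ≠ y.re := by
      intro h
      apply hy3 n (by omega)
      apply Complex.ext
      · simp [← h]
      · simp [him]
    have hlt : (n:ℝ) < y.re := lt_of_le_of_ne hfl1 hne
    have hmn : -(m:ℤ) ≤ n := by
      have h1 : -(m:ℝ) - 1 < (n:ℝ) := by linarith
      have : -(m:ℤ) - 1 < n := by exact_mod_cast h1
      omega
    have hmn' : -(m:ℝ) ≤ (n:ℝ) := by exact_mod_cast hmn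
    have hn1' : (n:ℝ) ≤ -1 := by exact_mod_cast hnneg
    have hw₂S : (⟨(n:ℝ) + 1/2, 1⟩ : ℂ) ∈ {w : ℂ | (n:ℝ) < w.re ∧ w.re < (n:ℝ) + 1} := by
      constructor <;> · show _ < _; norm_num
    have hw₂A : (⟨(n:ℝ) + 1/2, 1⟩ : ℂ) ∈ A := by
      refine ⟨⟨?_, ?_⟩, ?_⟩ <;> · show _ < _; norm_num; try linarith
    refine ⟨{w : ℂ | (n:ℝ) < w.re ∧ w.re < (n:ℝ) + 1}
        ∪ (A ∪ {w : ℂ | (-1 : ℝ) < w.re ∧ w.re < (-1:ℝ) + 1}),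
      union_subset (hSU n hmn hnneg) (union_subset hAU hS0U),
      Or.inr (Or.inr hx₀S), Or.inl ⟨hlt, hfl2⟩, ?_⟩
    exact IsPreconnected.union (⟨(n:ℝ) + 1/2, 1⟩ : ℂ) hw₂S (Or.inl hw₂A) (hpS _ _) hpAS
  · -- upper half plane
    exact ⟨A ∪ {w : ℂ | (-1 : ℝ) < w.re ∧ w.re < (-1:ℝ) + 1},
      union_subset hAU hS0U, Or.inr hx₀S, Or.inl ⟨⟨hy1, hy2⟩, him⟩, hpAS⟩



lemma strip_open (a b : ℝ) : IsOpen {w : ℂ | a < w.re ∧ w.re < b} :=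
  isOpen_Ioo.preimage Complex.continuous_re

lemma U_open (m : ℕ) :
    IsOpen {w : ℂ | (-(m:ℝ) < w.re ∧ w.re < 0) ∧ ∀ n : ℤ, n < 0 → w ≠ (n : ℂ)} := by
  classical
  set V := {w : ℂ | -(m:ℝ) < w.re ∧ w.re < 0} with hV
  set D := (↑((Finset.range m).image (fun j : ℕ => (-(j:ℂ) - 1))) : Set ℂ) with hD
  have hUVD : {w : ℂ | (-(m:ℝ) < w.re ∧ w.re < 0) ∧ ∀ n : ℤ, n < 0 → w ≠ (n : ℂ)}
      = V \ D := by
    ext w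
    simp only [mem_setOf_eq, mem_diff, hD, Finset.coe_image, Finset.coe_range, mem_image,
      mem_Iio, hV]
    constructor
    · rintro ⟨hs, hint⟩
      refine ⟨hs, ?_⟩
      rintro ⟨j, hj, hjw⟩
      exact hint (-(j:ℤ) - 1) (by omega) (by rw [← hjw]; push_cast; ring)
    · rintro ⟨hs, hDw⟩
      refine ⟨hs, fun q hq hw => ?_⟩
      apply hDw
      have hqre : w.re = (q:ℝ) := by rw [hw]; simp
      have h1 : (-(m:ℝ)) < (q:ℝ) := by rw [← hqre]; exact hs.1
      have h1' : -(m:ℤ) < q := by exact_mod_cast h1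
      have hnn : ((-q - 1).toNat : ℤ) = -q - 1 := Int.toNat_of_nonneg (by omega)
      refine ⟨(-q - 1).toNat, by omega, ?_⟩
      rw [hw]
      have : (((-q - 1).toNat : ℕ) : ℂ) = ((-q - 1 : ℤ) : ℂ) := by
        have h2 := congrArg (fun x : ℤ => (x : ℂ)) hnn
        simpa using h2
      rw [this]
      push_cast
      ring
  rw [hUVD]
  exact (strip_open _ _).sdiff ((Finset.finite_toSet _).isClosed)

end Stmt1Aux

open Stmt1Aux in
/-- For an integer `m ≥ 1` and `z : ℂ` with `Re z ∈ (-m, 0)` that is not a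
negative integer, `∫₀^∞ s^(z-1) (e^(-s) - 1)^m ds = Γ(z) · f_m(z)` where
`f_m(z) = ∑_{k=1}^m (m choose k) (-1)^(m-k) k^(-z)`. -/
theorem stmt_1 (m : ℕ) (hm : 1 ≤ m) (z : ℂ) (hzre : -(m : ℝ) < z.re) (hzre' : z.re < 0)
    (hz : ∀ n : ℤ, n < 0 → z ≠ (n : ℂ)) :
    ∫ s in Ioi (0 : ℝ), (s : ℂ) ^ (z - 1) * (Complex.exp (-(s : ℂ)) - 1) ^ m
      = Complex.Gamma z *
          ∑ k ∈ Finset.Icc 1 m, (m.choose k : ℂ) * (-1) ^ (m - k) * (k : ℂ) ^ (-z) := by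
  have hm' : (1 : ℝ) ≤ m := by exact_mod_cast hm
  set f : ℝ → ℂ := fun t => (Complex.exp (-(t : ℂ)) - 1) ^ m with hf
  set G : ℂ → ℂ := fun w => Complex.Gamma w *
      ∑ k ∈ Finset.Icc 1 m, (m.choose k : ℂ) * (-1) ^ (m - k) * (k : ℂ) ^ (-w) with hG
  set U := {w : ℂ | (-(m:ℝ) < w.re ∧ w.re < 0) ∧ ∀ n : ℤ, n < 0 → w ≠ (n : ℂ)} with hUdef
  have hUopen : IsOpen U := U_open m
  have hUconn : IsPreconnected U := preconn m hm
  -- analyticity of the Mellin transform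
  have hfc : LocallyIntegrableOn f (Ioi 0) :=
    ((((Complex.continuous_exp.comp (by continuity)).sub continuous_const).pow
      m).locallyIntegrable).locallyIntegrableOn _
  have htopf : f =O[atTop] fun t : ℝ => t ^ (-(0:ℝ)) := by
    rw [Asymptotics.isBigO_iff]
    refine ⟨1, ?_⟩
    filter_upwards [eventually_ge_atTop (0:ℝ)] with t ht
    have h1 : ‖f t‖ = ‖Complex.exp (-(t : ℂ)) - 1‖ ^ m := by simp [hf]
    rw [h1]
    have := pow_le_one₀ (norm_nonneg _) (norm_exp_term_le_one ht) (n := m)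
    simpa [Real.rpow_zero] using this
  have hbotf : f =O[𝓝[>] (0:ℝ)] fun t : ℝ => t ^ (-(-(m:ℝ))) := by
    rw [Asymptotics.isBigO_iff]
    refine ⟨1, ?_⟩
    filter_upwards [self_mem_nhdsWithin] with t (ht : (0:ℝ) < t)
    have h1 : ‖f t‖ = ‖Complex.exp (-(t : ℂ)) - 1‖ ^ m := by simp [hf]
    have h2 : ‖Complex.exp (-(t : ℂ)) - 1‖ ^ m ≤ t ^ m :=
      pow_le_pow_left₀ (norm_nonneg _) (norm_exp_term_le_self ht.le) m
    rw [h1, neg_neg, Real.norm_eq_abs, Real.abs_rpow_of_nonneg ht.le,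
      Real.rpow_natCast, one_mul, abs_of_pos (by positivity)]
    exact h2
  have hFan : AnalyticOnNhd ℂ (mellin f) U := by
    refine DifferentiableOn.analyticOnNhd (fun w hw => ?_) hUopen
    exact (mellin_differentiableAt_of_isBigO_rpow hfc htopf hw.1.2 hbotf
      hw.1.1).differentiableWithinAt
  have hGan : AnalyticOnNhd ℂ G U := by
    refine DifferentiableOn.analyticOnNhd (fun w hw => ?_) hUopen
    apply DifferentiableAt.differentiableWithinAt
    apply DifferentiableAt.mul
    · apply Complex.differentiableAt_Gamma
      intro n
      rcases Nat.eq_zero_or_pos n with rfl | hn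
      · intro h
        rw [show -((0:ℕ):ℂ) = 0 by simp] at h
        rw [h] at hw
        exact absurd hw.1.2 (by simp)
      · intro h
        refine hw.2 (-(n:ℤ)) (by exact_mod_cast neg_neg_iff_pos.mpr (by exact_mod_cast hn)) ?_
        rw [h]; push_cast; ring
    · refine DifferentiableAt.fun_sum fun k hk => DifferentiableAt.const_mul ?_ _
      exact (differentiableAt_id.neg).const_cpow
        (Or.inl (Nat.cast_ne_zero.2 (by have := (Finset.mem_Icc.1 hk).1; omega : k ≠ 0)))
  -- both agree near -1/2
  have hx₀U : ((-1/2 : ℝ) : ℂ) ∈ U := by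
    refine ⟨⟨?_, ?_⟩, fun n hn hne => ?_⟩
    · rw [Complex.ofReal_re]; linarith
    · rw [Complex.ofReal_re]; norm_num
    · have : ((-1/2 : ℝ) : ℂ).re = (n : ℝ) := by rw [hne]; simp
      rw [Complex.ofReal_re] at this
      have hn1 : (n : ℝ) ≤ -1 := by exact_mod_cast (by omega : n ≤ -1)
      linarith
  have hveq : mellin f =ᶠ[𝓝 ((-1/2 : ℝ) : ℂ)] G := by
    have hopen : IsOpen {w : ℂ | (-1:ℝ) < w.re ∧ w.re < 0} := strip_open _ _
    have hmem : ((-1/2 : ℝ) : ℂ) ∈ {w : ℂ | (-1:ℝ) < w.re ∧ w.re < 0} := by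
      constructor <;> (rw [Complex.ofReal_re]; norm_num)
    filter_upwards [hopen.mem_nhds hmem] with w hw
    have hbase := base_case m hm hw.1 hw.2
    rw [hG]
    simp only [mellin, smul_eq_mul, hf]
    exact hbase
  have hzU : z ∈ U := ⟨⟨hzre, hzre'⟩, hz⟩
  have hfinal := hFan.eqOn_of_preconnected_of_eventuallyEq hGan hUconn hx₀U hveq hzU
  simp only [mellin, smul_eq_mul, hf, hG] at hfinal
  exact hfinal
end

section
/- Let m ≥ 1 be an integer, let z be a complex number with Re z ∈ (-m, 0), and let λ be a nonzero complex number with Re λ ≥ 0. Then ∫₀^∞ s^{z-1} (e^{-λ s} - 1)^m ds = λ^{-z} · ∫₀^∞ s^{z-1} (e^{-s} - 1)^m ds, where λ^{-z} is the principal complex power. -/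
open MeasureTheory Set

namespace Stmt2Aux

open Complex

lemma norm_cexp_sub_one_le {w : ℂ} (hw : w.re ≤ 0) : ‖Complex.exp w - 1‖ ≤ ‖w‖ := by
  have hd : ∀ t ∈ Icc (0:ℝ) 1,
      HasDerivWithinAt (fun t : ℝ => Complex.exp ((t : ℂ) * w))
        (Complex.exp ((t : ℂ) * w) * w) (Icc (0:ℝ) 1) t := by
    intro t _
    have h1 : HasDerivAt (fun t : ℝ => (t : ℂ) * w) w t := by
      simpa using (Complex.ofRealCLM.hasDerivAt (x := t)).mul_const w
    simpa using (h1.cexp).hasDerivWithinAt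
  have hb : ∀ t ∈ Icc (0:ℝ) 1, ‖Complex.exp ((t : ℂ) * w) * w‖ ≤ ‖w‖ := by
    intro t ht
    rw [norm_mul, Complex.norm_exp]
    have hre : ((t:ℂ) * w).re = t * w.re := by
      simp [Complex.mul_re]
    rw [hre]
    have h1 : Real.exp (t * w.re) ≤ 1 :=
      Real.exp_le_one_iff.2 (mul_nonpos_of_nonneg_of_nonpos ht.1 hw)
    exact mul_le_of_le_one_left (norm_nonneg _) h1
  have := (convex_Icc (0:ℝ) 1).norm_image_sub_le_of_norm_hasDerivWithin_le hd hb
    (left_mem_Icc.2 zero_le_one) (right_mem_Icc.2 zero_le_one)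
  simpa using this

lemma norm_exp_term_le {l : ℂ} (hl : 0 ≤ l.re) {s : ℝ} (hs : 0 ≤ s) :
    ‖Complex.exp (-l * s) - 1‖ ≤ min 2 (‖l‖ * s) := by
  have hre : (-l * (s:ℂ)).re = -(l.re * s) := by simp [Complex.mul_re]
  have hre' : (-l * (s:ℂ)).re ≤ 0 := by
    rw [hre]; simpa using mul_nonneg hl hs
  refine le_min ?_ ?_
  · calc ‖Complex.exp (-l * s) - 1‖ ≤ ‖Complex.exp (-l * s)‖ + ‖(1:ℂ)‖ := norm_sub_le _ _
    _ ≤ 1 + 1 := by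
        rw [Complex.norm_exp]
        gcongr
        · exact Real.exp_le_one_iff.2 hre'
        · simp
    _ = 2 := by norm_num
  · have h := norm_cexp_sub_one_le hre'
    calc ‖Complex.exp (-l * s) - 1‖ ≤ ‖-l * (s:ℂ)‖ := h
      _ = ‖l‖ * s := by
        rw [norm_mul, norm_neg, Complex.norm_real, Real.norm_of_nonneg hs]

lemma integrableOn_of_bounds {f : ℝ → ℝ}
    (hmeas : AEStronglyMeasurable f (volume.restrict (Ioi 0)))
    {C₁ C₂ a b : ℝ} (ha : -1 < a) (hb : b < -1)
    (h₁ : ∀ s ∈ Ioc (0:ℝ) 1, ‖f s‖ ≤ C₁ * s ^ a)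
    (h₂ : ∀ s ∈ Ioi (1:ℝ), ‖f s‖ ≤ C₂ * s ^ b) :
    IntegrableOn f (Ioi (0:ℝ)) := by
  have hu : Ioc (0:ℝ) 1 ∪ Ioi 1 = Ioi 0 := Ioc_union_Ioi_eq_Ioi zero_le_one
  rw [← hu]
  have m1 : AEStronglyMeasurable f (volume.restrict (Ioc (0:ℝ) 1)) :=
    hmeas.mono_measure (Measure.restrict_mono Ioc_subset_Ioi_self le_rfl)
  have m2 : AEStronglyMeasurable f (volume.restrict (Ioi (1:ℝ))) :=
    hmeas.mono_measure (Measure.restrict_mono (Ioi_subset_Ioi zero_le_one) le_rfl)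
  refine IntegrableOn.union ?_ ?_
  · have int1 : IntegrableOn (fun s : ℝ => C₁ * s ^ a) (Ioc (0:ℝ) 1) := by
      have := (intervalIntegral.intervalIntegrable_rpow' (a := 0) (b := 1) ha)
      rw [intervalIntegrable_iff_integrableOn_Ioc_of_le zero_le_one] at this
      exact this.const_mul C₁
    exact Integrable.mono' int1 m1 ((ae_restrict_iff' measurableSet_Ioc).2 (ae_of_all _ h₁))
  · have int2 : IntegrableOn (fun s : ℝ => C₂ * s ^ b) (Ioi (1:ℝ)) :=
      (integrableOn_Ioi_rpow_of_lt hb zero_lt_one).const_mul C₂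
    exact Integrable.mono' int2 m2 ((ae_restrict_iff' measurableSet_Ioi).2 (ae_of_all _ h₂))


variable {m : ℕ} {z : ℂ}

lemma bound1_integrable (hz1 : -(m:ℝ) < z.re) (hz2 : z.re < 0)
    {C : ℝ} (hC : 0 < C) :
    IntegrableOn (fun s : ℝ => s ^ (z.re - 1) * min 2 (C * s) ^ m) (Ioi (0:ℝ)) := by
  apply integrableOn_of_bounds (C₁ := C ^ m) (C₂ := 2 ^ m) (a := z.re - 1 + m) (b := z.re - 1)
  · refine ContinuousOn.aestronglyMeasurable (ContinuousOn.mul ?_ ?_) measurableSet_Ioi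
    · exact fun s hs =>
        (Real.continuousAt_rpow_const s _ (Or.inl (ne_of_gt hs))).continuousWithinAt
    · exact ((continuous_const.min (continuous_const.mul continuous_id)).pow m).continuousOn
  · linarith
  · linarith
  · rintro s ⟨hs0, _⟩
    have h1 : (0:ℝ) ≤ min 2 (C * s) := le_min (by norm_num) (by positivity)
    have hnn : 0 ≤ s ^ (z.re - 1) := Real.rpow_nonneg hs0.le _
    rw [Real.norm_of_nonneg (by positivity)]
    calc s ^ (z.re - 1) * min 2 (C * s) ^ m ≤ s ^ (z.re - 1) * (C * s) ^ m :=
          mul_le_mul_of_nonneg_left (pow_le_pow_left₀ h1 (min_le_right _ _) m) hnn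
      _ = C ^ m * s ^ (z.re - 1 + m) := by
          rw [mul_pow, Real.rpow_add hs0, Real.rpow_natCast]; ring
  · intro s hs
    have hs0 : (0:ℝ) < s := lt_trans zero_lt_one hs
    have h1 : (0:ℝ) ≤ min 2 (C * s) := le_min (by norm_num) (by positivity)
    have hnn : 0 ≤ s ^ (z.re - 1) := Real.rpow_nonneg hs0.le _
    rw [Real.norm_of_nonneg (by positivity)]
    calc s ^ (z.re - 1) * min 2 (C * s) ^ m ≤ s ^ (z.re - 1) * 2 ^ m :=
          mul_le_mul_of_nonneg_left (pow_le_pow_left₀ h1 (min_le_left _ _) m) hnn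
      _ = 2 ^ m * s ^ (z.re - 1) := by ring

lemma bound2_integrable (hm : 1 ≤ m) (hz1 : -(m:ℝ) < z.re) (hz2 : z.re < 0)
    {R eps : ℝ} (hR : 0 < R) (heps : 0 < eps) :
    IntegrableOn
      (fun s : ℝ => (m:ℝ) * s ^ z.re * min 2 (R * s) ^ (m - 1) * Real.exp (-(eps * s)))
      (Ioi (0:ℝ)) := by
  have hm1 : ((m - 1 : ℕ) : ℝ) = (m:ℝ) - 1 := by
    push_cast [Nat.cast_sub hm]; ring
  have hmeas : AEStronglyMeasurable
      (fun s : ℝ => (m:ℝ) * s ^ z.re * min 2 (R * s) ^ (m - 1) * Real.exp (-(eps * s)))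
      (volume.restrict (Ioi 0)) := by
    refine ContinuousOn.aestronglyMeasurable ?_ measurableSet_Ioi
    refine ContinuousOn.mul (ContinuousOn.mul (ContinuousOn.mul continuousOn_const ?_) ?_) ?_
    · exact fun s hs =>
        (Real.continuousAt_rpow_const s _ (Or.inl (ne_of_gt hs))).continuousWithinAt
    · exact ((continuous_const.min (continuous_const.mul continuous_id)).pow _).continuousOn
    · exact ((continuous_const.mul continuous_id).neg.rexp).continuousOn
  apply integrableOn_of_bounds hmeas (C₁ := m * R ^ (m - 1))
    (C₂ := m * 2 ^ (m - 1) * (4 / eps ^ 2)) (a := z.re + ((m:ℝ) - 1)) (b := -2)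
  · linarith
  · norm_num
  · rintro s ⟨hs0, _⟩
    have h1 : (0:ℝ) ≤ min 2 (R * s) := le_min (by norm_num) (by positivity)
    have hexp : Real.exp (-(eps * s)) ≤ 1 :=
      Real.exp_le_one_iff.2 (neg_nonpos_of_nonneg (by positivity))
    rw [Real.norm_of_nonneg (by positivity)]
    calc (m:ℝ) * s ^ z.re * min 2 (R * s) ^ (m-1) * Real.exp (-(eps * s))
        ≤ (m:ℝ) * s ^ z.re * (R * s) ^ (m-1) * 1 := by
          gcongr
          exact min_le_right _ _
      _ = m * R ^ (m-1) * s ^ (z.re + ((m:ℝ) - 1)) := by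
          rw [mul_pow, mul_one, Real.rpow_add hs0, ← hm1, Real.rpow_natCast]; ring
  · intro s hs
    have hs0 : (0:ℝ) < s := lt_trans zero_lt_one hs
    have h1 : (0:ℝ) ≤ min 2 (R * s) := le_min (by norm_num) (by positivity)
    have hrp : s ^ z.re ≤ 1 := Real.rpow_le_one_of_one_le_of_nonpos hs.le hz2.le
    have hs2 : s ^ (-2:ℝ) = (s ^ 2)⁻¹ := by
      rw [Real.rpow_neg hs0.le, show ((2:ℝ)) = ((2:ℕ):ℝ) by norm_num, Real.rpow_natCast]
    have hexp : Real.exp (-(eps * s)) ≤ 4 / eps ^ 2 * s ^ (-2 : ℝ) := by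
      have h4 : (eps * s) ^ 2 / 4 ≤ Real.exp (eps * s) := by
        have h2 : Real.exp (eps * s) = Real.exp (eps * s / 2) * Real.exp (eps * s / 2) := by
          rw [← Real.exp_add]; ring_nf
        have h3 := Real.add_one_le_exp (eps * s / 2)
        rw [h2]
        nlinarith [mul_pos heps hs0, Real.exp_pos (eps * s / 2)]
      have h5 : (0:ℝ) < (eps * s) ^ 2 / 4 := by positivity
      rw [Real.exp_neg, hs2]
      calc (Real.exp (eps * s))⁻¹ ≤ ((eps * s) ^ 2 / 4)⁻¹ := by
            exact inv_anti₀ h5 h4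
        _ = 4 / eps ^ 2 * (s ^ 2)⁻¹ := by
            field_simp
    rw [Real.norm_of_nonneg (by positivity)]
    calc (m:ℝ) * s ^ z.re * min 2 (R * s) ^ (m-1) * Real.exp (-(eps * s))
        ≤ (m:ℝ) * 1 * 2 ^ (m-1) * (4 / eps ^ 2 * s ^ (-2:ℝ)) := by
          gcongr
          exact min_le_left _ _
      _ = m * 2 ^ (m-1) * (4 / eps ^ 2) * s ^ (-2:ℝ) := by ring


lemma integrand_contOn (l : ℂ) :
    ContinuousOn (fun s : ℝ => (s:ℂ) ^ (z-1) * (Complex.exp (-l * s) - 1) ^ m) (Ioi 0) := by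
  apply ContinuousOn.mul
  · exact fun s hs =>
      (continuousAt_ofReal_cpow_const s (z-1) (Or.inr (ne_of_gt hs))).continuousWithinAt
  · exact (((continuous_const.mul Complex.continuous_ofReal).cexp.sub continuous_const).pow m).continuousOn

lemma norm_cpow_eq {s : ℝ} (hs : 0 < s) : ‖(s:ℂ) ^ (z-1)‖ = s ^ (z.re - 1) := by
  rw [Complex.norm_cpow_eq_rpow_re_of_pos hs]
  simp [Complex.sub_re]

lemma norm_integrand_le {l : ℂ} (hl : 0 ≤ l.re) {R : ℝ} (hlR : ‖l‖ ≤ R) {s : ℝ} (hs : 0 < s) :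
    ‖(s:ℂ) ^ (z-1) * (Complex.exp (-l * s) - 1) ^ m‖ ≤ s ^ (z.re - 1) * min 2 (R * s) ^ m := by
  rw [norm_mul, norm_pow, norm_cpow_eq hs]
  have h1 : ‖Complex.exp (-l * s) - 1‖ ≤ min 2 (R * s) :=
    (norm_exp_term_le hl hs.le).trans
      (min_le_min le_rfl (mul_le_mul_of_nonneg_right hlR hs.le))
  exact mul_le_mul_of_nonneg_left (pow_le_pow_left₀ (norm_nonneg _) h1 m)
    (Real.rpow_nonneg hs.le _)

lemma integrand_integrable (hz1 : -(m:ℝ) < z.re) (hz2 : z.re < 0)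
    {l : ℂ} (hl : 0 ≤ l.re) (hl0 : l ≠ 0) :
    IntegrableOn (fun s : ℝ => (s:ℂ) ^ (z-1) * (Complex.exp (-l * s) - 1) ^ m) (Ioi 0) := by
  refine Integrable.mono' (bound1_integrable hz1 hz2 (C := ‖l‖) (norm_pos_iff.2 hl0))
    ((integrand_contOn l).aestronglyMeasurable measurableSet_Ioi) ?_
  filter_upwards [ae_restrict_mem measurableSet_Ioi] with s hs
  exact norm_integrand_le hl le_rfl hs

lemma real_scaling (hz1 : -(m:ℝ) < z.re) (hz2 : z.re < 0) {t : ℝ} (ht : 0 < t) :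
    ∫ s in Ioi (0:ℝ), (s:ℂ) ^ (z-1) * (Complex.exp (-(t:ℂ) * s) - 1) ^ m
      = (t:ℂ) ^ (-z) * ∫ s in Ioi (0:ℝ), (s:ℂ) ^ (z-1) * (Complex.exp (-1 * s) - 1) ^ m := by
  have htne : (t:ℂ) ≠ 0 := Complex.ofReal_ne_zero.2 (ne_of_gt ht)
  have key := integral_comp_mul_left_Ioi
    (fun u : ℝ => (u:ℂ) ^ (z-1) * (Complex.exp (-1 * u) - 1) ^ m) 0 ht
  rw [mul_zero] at key
  have h1 : ∀ x ∈ Ioi (0:ℝ),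
      ((t * x : ℝ):ℂ) ^ (z-1) * (Complex.exp (-1 * ((t * x : ℝ):ℂ)) - 1) ^ m
        = (t:ℂ) ^ (z-1) * ((x:ℂ) ^ (z-1) * (Complex.exp (-(t:ℂ) * x) - 1) ^ m) := by
    intro x hx
    rw [Complex.ofReal_mul, mul_cpow_ofReal_nonneg ht.le (le_of_lt hx)]
    have e : (-1 : ℂ) * ((t:ℂ) * (x:ℂ)) = -(t:ℂ) * x := by ring
    rw [e]
    ring
  rw [setIntegral_congr_fun measurableSet_Ioi h1] at key
  rw [integral_const_mul] at key
  -- key : (t:ℂ)^(z-1) * ∫ (integrand at t) = t⁻¹ • ∫ (integrand at 1)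
  have hsmul : (t⁻¹ : ℝ) • (∫ s in Ioi (0:ℝ), (s:ℂ) ^ (z-1) * (Complex.exp (-1 * s) - 1) ^ m)
      = ((t:ℂ))⁻¹ * ∫ s in Ioi (0:ℝ), (s:ℂ) ^ (z-1) * (Complex.exp (-1 * s) - 1) ^ m := by
    rw [Complex.real_smul, Complex.ofReal_inv]
  rw [hsmul] at key
  have hz : (t:ℂ) ^ (-z) = ((t:ℂ) ^ (z-1))⁻¹ * ((t:ℂ))⁻¹ := by
    rw [← Complex.cpow_neg]
    rw [show ((t:ℂ))⁻¹ = (t:ℂ) ^ (-1 : ℂ) by rw [Complex.cpow_neg_one]]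
    rw [← Complex.cpow_add _ _ htne]
    ring_nf
  have hcp : (t:ℂ) ^ (z-1) ≠ 0 := by
    rw [Complex.cpow_def_of_ne_zero htne]
    exact Complex.exp_ne_zero _
  calc ∫ s in Ioi (0:ℝ), (s:ℂ) ^ (z-1) * (Complex.exp (-(t:ℂ) * s) - 1) ^ m
      = ((t:ℂ) ^ (z-1))⁻¹ * ((t:ℂ) ^ (z-1) *
          ∫ s in Ioi (0:ℝ), (s:ℂ) ^ (z-1) * (Complex.exp (-(t:ℂ) * s) - 1) ^ m) := by
        rw [inv_mul_cancel_left₀ hcp]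
    _ = ((t:ℂ) ^ (z-1))⁻¹ * (((t:ℂ))⁻¹ *
          ∫ s in Ioi (0:ℝ), (s:ℂ) ^ (z-1) * (Complex.exp (-1 * s) - 1) ^ m) := by rw [key]
    _ = (t:ℂ) ^ (-z) * ∫ s in Ioi (0:ℝ), (s:ℂ) ^ (z-1) * (Complex.exp (-1 * s) - 1) ^ m := by
        rw [hz]; ring


lemma F_differentiable (hm : 1 ≤ m) (hz1 : -(m:ℝ) < z.re) (hz2 : z.re < 0)
    {l₀ : ℂ} (hl₀ : 0 < l₀.re) :
    DifferentiableAt ℂ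
      (fun l : ℂ => ∫ s in Ioi (0:ℝ), (s:ℂ) ^ (z-1) * (Complex.exp (-l * s) - 1) ^ m) l₀ := by
  set eps := l₀.re / 2 with heps
  have heps0 : 0 < eps := half_pos hl₀
  set R := ‖l₀‖ + eps with hRdef
  have hR : 0 < R := add_pos_of_nonneg_of_pos (norm_nonneg _) heps0
  have hball : ∀ l ∈ Metric.ball l₀ eps, eps ≤ l.re ∧ ‖l‖ ≤ R := by
    intro l hl
    rw [Metric.mem_ball, dist_eq_norm] at hl
    have h1 : |l.re - l₀.re| ≤ ‖l - l₀‖ := by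
      simpa [Complex.sub_re] using Complex.abs_re_le_norm (l - l₀)
    have h2 := abs_le.mp (h1.trans hl.le)
    constructor
    · have := h2.1; rw [heps]; linarith
    · calc ‖l‖ = ‖l₀ + (l - l₀)‖ := by ring_nf
        _ ≤ ‖l₀‖ + ‖l - l₀‖ := norm_add_le _ _
        _ ≤ R := by rw [hRdef]; linarith
  set F' : ℂ → ℝ → ℂ := fun l s =>
    (s:ℂ) ^ (z-1) * ((m:ℂ) * (Complex.exp (-l * s) - 1) ^ (m-1) *
      (Complex.exp (-l * s) * (-1 * (s:ℂ)))) with hF'def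
  have key := hasDerivAt_integral_of_dominated_loc_of_deriv_le (μ := volume.restrict (Ioi 0))
    (F := fun l s => (s:ℂ) ^ (z-1) * (Complex.exp (-l * s) - 1) ^ m) (F' := F')
    (x₀ := l₀)
    (bound := fun s => (m:ℝ) * s ^ z.re * min 2 (R * s) ^ (m - 1) * Real.exp (-(eps * s)))
    (Metric.ball_mem_nhds l₀ heps0)
    (Filter.Eventually.of_forall fun l =>
      (integrand_contOn l).aestronglyMeasurable measurableSet_Ioi)
    (integrand_integrable hz1 hz2 hl₀.le (fun h => by simp [h] at hl₀))
    ?_ ?_ ?_ ?_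
  · exact key.2.differentiableAt
  · -- measurability of F' l₀
    refine ContinuousOn.aestronglyMeasurable ?_ measurableSet_Ioi
    refine ContinuousOn.mul ?_ ?_
    · exact fun s hs =>
        (continuousAt_ofReal_cpow_const s (z-1) (Or.inr (ne_of_gt hs))).continuousWithinAt
    · have hc : Continuous fun s : ℝ => Complex.exp (-l₀ * s) :=
        (continuous_const.mul Complex.continuous_ofReal).cexp
      exact ((continuous_const.mul ((hc.sub continuous_const).pow (m-1))).mul
        (hc.mul (continuous_const.mul Complex.continuous_ofReal))).continuousOn
  · -- bound
    filter_upwards [ae_restrict_mem measurableSet_Ioi] with s hs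
    intro l hl
    obtain ⟨hle, hlR⟩ := hball l hl
    have hl0 : 0 ≤ l.re := le_trans heps0.le hle
    have hs0 : (0:ℝ) < s := hs
    have e1 : ‖F' l s‖ = s ^ (z.re - 1) * ((m:ℝ) * ‖Complex.exp (-l * s) - 1‖ ^ (m-1) *
        (Real.exp ((-l * (s:ℂ)).re) * s)) := by
      rw [hF'def]
      simp only [norm_mul, norm_pow, Complex.norm_exp]
      rw [norm_cpow_eq hs0]
      simp [Complex.norm_natCast, _root_.abs_of_nonneg hs0.le, hs0.le]
    have hre : (-l * (s:ℂ)).re = -(l.re * s) := by simp [Complex.mul_re]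
    have hminb : ‖Complex.exp (-l * s) - 1‖ ^ (m-1) ≤ min 2 (R * s) ^ (m-1) := by
      apply pow_le_pow_left₀ (norm_nonneg _)
      exact (norm_exp_term_le hl0 hs0.le).trans
        (min_le_min le_rfl (mul_le_mul_of_nonneg_right hlR hs0.le))
    have hexpb : Real.exp ((-l * (s:ℂ)).re) ≤ Real.exp (-(eps * s)) := by
      rw [hre]
      exact Real.exp_le_exp.2 (by nlinarith)
    have hsz : s ^ (z.re - 1) * s = s ^ z.re := by
      rw [← Real.rpow_add_one (ne_of_gt hs0)]; ring_nf
    rw [e1]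
    calc s ^ (z.re - 1) * ((m:ℝ) * ‖Complex.exp (-l * s) - 1‖ ^ (m-1) *
          (Real.exp ((-l * (s:ℂ)).re) * s))
        ≤ s ^ (z.re - 1) * ((m:ℝ) * min 2 (R * s) ^ (m-1) * (Real.exp (-(eps * s)) * s)) := by
          have hnn : (0:ℝ) ≤ s ^ (z.re - 1) := Real.rpow_nonneg hs0.le _
          gcongr
      _ = (m:ℝ) * s ^ z.re * min 2 (R * s) ^ (m-1) * Real.exp (-(eps * s)) := by
          rw [← hsz]; ring
  · exact bound2_integrable hm hz1 hz2 hR heps0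
  · -- differentiability
    filter_upwards [ae_restrict_mem measurableSet_Ioi] with s _
    intro l _
    have h0 : HasDerivAt (fun l : ℂ => -l * (s:ℂ)) (-1 * (s:ℂ)) l :=
      (hasDerivAt_id l).neg.mul_const (s:ℂ)
    have h3 : HasDerivAt (fun l : ℂ => (Complex.exp (-l * s) - 1) ^ m)
        ((m:ℂ) * (Complex.exp (-l * s) - 1) ^ (m-1) * (Complex.exp (-l * s) * (-1 * (s:ℂ)))) l :=
      (h0.cexp.sub_const 1).pow m
    exact h3.const_mul ((s:ℂ) ^ (z-1))


lemma F_eq_G_on (hm : 1 ≤ m) (hz1 : -(m:ℝ) < z.re) (hz2 : z.re < 0) :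
    EqOn (fun l : ℂ => ∫ s in Ioi (0:ℝ), (s:ℂ) ^ (z-1) * (Complex.exp (-l * s) - 1) ^ m)
      (fun l : ℂ => l ^ (-z) *
        ∫ s in Ioi (0:ℝ), (s:ℂ) ^ (z-1) * (Complex.exp (-1 * s) - 1) ^ m)
      {l : ℂ | 0 < l.re} := by
  set U : Set ℂ := {l : ℂ | 0 < l.re} with hU
  have hopen : IsOpen U := isOpen_lt continuous_const Complex.continuous_re
  have hFan : AnalyticOnNhd ℂ
      (fun l : ℂ => ∫ s in Ioi (0:ℝ), (s:ℂ) ^ (z-1) * (Complex.exp (-l * s) - 1) ^ m) U :=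
    DifferentiableOn.analyticOnNhd
      (fun l hl => (F_differentiable hm hz1 hz2 hl).differentiableWithinAt) hopen
  have hGan : AnalyticOnNhd ℂ
      (fun l : ℂ => l ^ (-z) *
        ∫ s in Ioi (0:ℝ), (s:ℂ) ^ (z-1) * (Complex.exp (-1 * s) - 1) ^ m) U := by
    apply DifferentiableOn.analyticOnNhd ?_ hopen
    intro l hl
    exact ((differentiableAt_id.cpow (differentiableAt_const (-z))
      (Or.inl hl)).mul_const _).differentiableWithinAt
  have hpre : IsPreconnected U := (convex_halfSpace_re_gt (0:ℝ)).isPreconnected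
  have h1U : (1:ℂ) ∈ U := by simp [hU]
  have hseq : Filter.Tendsto (fun n : ℕ => (((1 + 1/(n+1) : ℝ)) : ℂ)) Filter.atTop
      (nhdsWithin (1:ℂ) {(1:ℂ)}ᶜ) := by
    rw [tendsto_nhdsWithin_iff]
    constructor
    · have : Filter.Tendsto (fun n : ℕ => (1 + 1/(n+1) : ℝ)) Filter.atTop (nhds 1) := by
        have := tendsto_one_div_add_atTop_nhds_zero_nat (𝕜 := ℝ)
        simpa using (tendsto_const_nhds (x := (1:ℝ)) (f := Filter.atTop)).add this
      have h2 := (Complex.continuous_ofReal.tendsto (1:ℝ)).comp this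
      simpa [Function.comp_def] using h2
    · filter_upwards with n
      simp only [mem_compl_iff, mem_singleton_iff]
      intro h
      have : (1 + 1/(n+1) : ℝ) = 1 := by exact_mod_cast h
      have hpos : (0:ℝ) < 1/(n+1) := by positivity
      linarith
  have hfreq : ∃ᶠ l in nhdsWithin (1:ℂ) {(1:ℂ)}ᶜ,
      (fun l : ℂ => ∫ s in Ioi (0:ℝ), (s:ℂ) ^ (z-1) * (Complex.exp (-l * s) - 1) ^ m) l
        = (fun l : ℂ => l ^ (-z) *
            ∫ s in Ioi (0:ℝ), (s:ℂ) ^ (z-1) * (Complex.exp (-1 * s) - 1) ^ m) l := by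
    apply hseq.frequently
    apply Filter.Frequently.of_forall
    intro n
    exact real_scaling hz1 hz2 (by positivity)
  exact hFan.eqOn_of_preconnected_of_frequently_eq hGan hpre h1U hfreq

theorem stmt_2' (hm : 1 ≤ m) (hzre : -(m : ℝ) < z.re) (hzre' : z.re < 0)
    (lam : ℂ) (hlam : lam ≠ 0) (hlamre : 0 ≤ lam.re) :
    ∫ s in Ioi (0 : ℝ), (s : ℂ) ^ (z - 1) * (Complex.exp (-lam * (s : ℂ)) - 1) ^ m
      = lam ^ (-z) *
          ∫ s in Ioi (0 : ℝ), (s : ℂ) ^ (z - 1) * (Complex.exp (-(s : ℂ)) - 1) ^ m := by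
  set U : Set ℂ := {l : ℂ | 0 < l.re} with hU
  set G : ℂ → ℂ := fun l : ℂ => l ^ (-z) *
      ∫ s in Ioi (0:ℝ), (s:ℂ) ^ (z-1) * (Complex.exp (-1 * s) - 1) ^ m with hGdef
  set F : ℂ → ℂ :=
      fun l : ℂ => ∫ s in Ioi (0:ℝ), (s:ℂ) ^ (z-1) * (Complex.exp (-l * s) - 1) ^ m with hFdef
  have heq : EqOn F G U := F_eq_G_on hm hzre hzre'
  -- lam is in the closure of U
  have hclos : lam ∈ closure U := by
    have htend : Filter.Tendsto (fun n : ℕ => lam + ((1/(n+1) : ℝ) : ℂ)) Filter.atTop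
        (nhds lam) := by
      have : Filter.Tendsto (fun n : ℕ => (1/(n+1) : ℝ)) Filter.atTop (nhds 0) :=
        tendsto_one_div_add_atTop_nhds_zero_nat
      have h2 := (Complex.continuous_ofReal.tendsto (0:ℝ)).comp this
      simpa using (tendsto_const_nhds (x := lam) (f := Filter.atTop)).add h2
    refine mem_closure_of_tendsto htend ?_
    filter_upwards with n
    have hpos : (0:ℝ) < 1/(n+1) := by positivity
    simp only [hU, mem_setOf_eq, Complex.add_re, Complex.ofReal_re]
    linarith
  have hne : (nhdsWithin lam U).NeBot := mem_closure_iff_nhdsWithin_neBot.mp hclos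
  -- G is continuous at lam
  have hGcont : Filter.Tendsto G (nhdsWithin lam U) (nhds (G lam)) := by
    have hslit : lam ∈ Complex.slitPlane := by
      rcases lt_or_eq_of_le hlamre with h | h
      · exact Or.inl h
      · refine Or.inr ?_
        intro him
        exact hlam (Complex.ext (by simp [← h]) (by simp [him]))
    have : ContinuousAt G lam :=
      (continuousAt_cpow_const hslit).mul continuousAt_const
    exact this.continuousWithinAt
  -- F tends to F lam along U
  have hFcont : Filter.Tendsto F (nhdsWithin lam U) (nhds (F lam)) := by
    set r : ℝ := ‖lam‖ / 2 with hrdef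
    have hr : 0 < r := half_pos (norm_pos_iff.2 hlam)
    set R : ℝ := ‖lam‖ + r with hRdef
    have hR : 0 < R := by positivity
    rw [hFdef]
    apply tendsto_integral_filter_of_dominated_convergence
      (bound := fun s : ℝ => s ^ (z.re - 1) * min 2 (R * s) ^ m)
    · filter_upwards with l
      exact (integrand_contOn l).aestronglyMeasurable measurableSet_Ioi
    · have hb : Metric.ball lam r ∩ U ∈ nhdsWithin lam U :=
        Filter.inter_mem
          (nhdsWithin_le_nhds (Metric.ball_mem_nhds lam hr)) self_mem_nhdsWithin
      filter_upwards [hb] with l hl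
      obtain ⟨hlball, hlU⟩ := hl
      filter_upwards [ae_restrict_mem measurableSet_Ioi] with s hs
      have hlR : ‖l‖ ≤ R := by
        rw [Metric.mem_ball, dist_eq_norm] at hlball
        calc ‖l‖ = ‖lam + (l - lam)‖ := by ring_nf
          _ ≤ ‖lam‖ + ‖l - lam‖ := norm_add_le _ _
          _ ≤ R := by rw [hRdef]; linarith
      exact norm_integrand_le (le_of_lt hlU) hlR hs
    · exact bound1_integrable hzre hzre' hR
    · filter_upwards [ae_restrict_mem measurableSet_Ioi] with s _
      have hc : Continuous fun l : ℂ => (s:ℂ) ^ (z-1) * (Complex.exp (-l * s) - 1) ^ m :=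
        continuous_const.mul
          (((continuous_id.neg.mul continuous_const).cexp.sub continuous_const).pow m)
      exact (hc.tendsto lam).mono_left nhdsWithin_le_nhds
  have hFG : Filter.Tendsto F (nhdsWithin lam U) (nhds (G lam)) := by
    refine hGcont.congr' ?_
    filter_upwards [self_mem_nhdsWithin] with l hl
    exact (heq hl).symm
  have hmain : F lam = G lam := tendsto_nhds_unique hFcont hFG
  rw [hFdef, hGdef] at hmain
  simp only [neg_one_mul] at hmain
  exact hmain


end Stmt2Aux

/-- For an integer `m ≥ 1`, `z : ℂ` with `Re z ∈ (-m, 0)`, and a nonzero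
`λ : ℂ` with `Re λ ≥ 0`, one has
`∫₀^∞ s^(z-1) (e^(-λs) - 1)^m ds = λ^(-z) · ∫₀^∞ s^(z-1) (e^(-s) - 1)^m ds`,
where `λ^(-z)` is the principal complex power. -/
theorem stmt_2 (m : ℕ) (hm : 1 ≤ m) (z : ℂ) (hzre : -(m : ℝ) < z.re) (hzre' : z.re < 0)
    (lam : ℂ) (hlam : lam ≠ 0) (hlamre : 0 ≤ lam.re) :
    ∫ s in Ioi (0 : ℝ), (s : ℂ) ^ (z - 1) * (Complex.exp (-lam * (s : ℂ)) - 1) ^ m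
      = lam ^ (-z) *
          ∫ s in Ioi (0 : ℝ), (s : ℂ) ^ (z - 1) * (Complex.exp (-(s : ℂ)) - 1) ^ m := by
  exact Stmt2Aux.stmt_2' hm hzre hzre' lam hlam hlamre
end

section
/- Let α > 1/2 be real, let m be a positive integer with m > α - 1/2, let μ > 0, let t ∈ ℝ, and let σ ∈ {+1, -1}. Assume z := 1/2 - α + it is not an integer. Then ∫₀^∞ s^{it} (sμ)^{1/2 - α} (e^{-σ i μ s} - 1)^m ds/s = e^{-σ i (π/2)(1/2 - α + it)} · μ^{-it} · Γ(1/2 - α + it) · f_m(1/2 - α + it), where f_m(z) = Σ_{k=1}^{m} binom(m,k) (-1)^{m-k} k^{-z}. -/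
open MeasureTheory Set Real
open Filter Topology

namespace Stmt3Aux

open Complex

/-- MVT bound: `‖exp u - 1‖ ≤ ‖u‖` when `Re u ≤ 0`. -/
lemma norm_cexp_sub_one_le {u : ℂ} (hu : u.re ≤ 0) : ‖Complex.exp u - 1‖ ≤ ‖u‖ := by
  have key : ∀ t ∈ Icc (0:ℝ) 1, HasDerivAt (fun t : ℝ => Complex.exp ((t : ℂ) * u))
      (u * Complex.exp ((t : ℂ) * u)) t := by
    intro t _
    have h1 : HasDerivAt (fun w : ℂ => Complex.exp (w * u)) (Complex.exp ((t:ℂ) * u) * u) (t:ℂ) := by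
      simpa using ((hasDerivAt_id ((t:ℂ))).mul_const u).cexp
    simpa [mul_comm] using h1.comp_ofReal
  have bound : ∀ t ∈ Ico (0:ℝ) 1, ‖u * Complex.exp ((t : ℂ) * u)‖ ≤ ‖u‖ := by
    intro t ht
    rw [norm_mul]
    have : ‖Complex.exp ((t:ℂ) * u)‖ ≤ 1 := by
      rw [Complex.norm_exp]
      have : ((t:ℂ) * u).re = t * u.re := by simp [Complex.mul_re]
      rw [this]
      exact Real.exp_le_one_iff.2 (mul_nonpos_of_nonneg_of_nonpos ht.1 hu)
    calc ‖u‖ * ‖Complex.exp ((t:ℂ)*u)‖ ≤ ‖u‖ * 1 := by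
          exact mul_le_mul_of_nonneg_left this (norm_nonneg _)
      _ = ‖u‖ := mul_one _
  have := norm_image_sub_le_of_norm_deriv_le_segment' (f := fun t : ℝ => Complex.exp ((t:ℂ) * u))
    (fun t ht => (key t ht).hasDerivWithinAt) bound 1 (right_mem_Icc.2 zero_le_one)
  simpa using this

lemma norm_cexp_sub_one_le_two {u : ℂ} (hu : u.re ≤ 0) : ‖Complex.exp u - 1‖ ≤ 2 := by
  calc ‖Complex.exp u - 1‖ ≤ ‖Complex.exp u‖ + ‖(1:ℂ)‖ := norm_sub_le _ _
    _ ≤ 1 + 1 := by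
        refine add_le_add ?_ (by simp)
        rw [Complex.norm_exp]
        exact Real.exp_le_one_iff.2 hu
    _ = 2 := by norm_num


/-! ### The function `(exp(-(w s)) - 1)^m` and its Mellin transform -/

section FM

variable (w : ℂ) (m : ℕ)

lemma re_neg_mul (s : ℝ) (hw : 0 ≤ w.re) (hs : 0 ≤ s) : (-(w * (s:ℂ))).re ≤ 0 := by
  simp only [neg_re, Complex.mul_re, Complex.ofReal_re, Complex.ofReal_im, mul_zero, sub_zero]
  have := mul_nonneg hw hs
  linarith

lemma fm_norm_le_two_pow (hw : 0 ≤ w.re) {s : ℝ} (hs : 0 ≤ s) :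
    ‖(Complex.exp (-(w * s)) - 1) ^ m‖ ≤ 2 ^ m := by
  rw [norm_pow]
  exact pow_le_pow_left₀ (norm_nonneg _) (Stmt3Aux.norm_cexp_sub_one_le_two (re_neg_mul w s hw hs)) m

lemma fm_norm_le_pow (hw : 0 ≤ w.re) {s : ℝ} (hs : 0 ≤ s) :
    ‖(Complex.exp (-(w * s)) - 1) ^ m‖ ≤ (‖w‖ * s) ^ m := by
  rw [norm_pow]
  refine pow_le_pow_left₀ (norm_nonneg _) ?_ m
  calc ‖Complex.exp (-(w * s)) - 1‖ ≤ ‖-(w * (s:ℂ))‖ :=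
        Stmt3Aux.norm_cexp_sub_one_le (re_neg_mul w s hw hs)
    _ = ‖w‖ * s := by
        rw [norm_neg, norm_mul, Complex.norm_real, Real.norm_eq_abs, _root_.abs_of_nonneg hs]

lemma fm_continuous : Continuous (fun s : ℝ => (Complex.exp (-(w * s)) - 1) ^ m) := by
  fun_prop

lemma fm_locInt : LocallyIntegrableOn (fun s : ℝ => (Complex.exp (-(w * s)) - 1) ^ m) (Ioi 0) :=
  ((fm_continuous w m).locallyIntegrable).locallyIntegrableOn _

lemma fm_bigO_top (hw : 0 ≤ w.re) :
    (fun s : ℝ => (Complex.exp (-(w * s)) - 1) ^ m) =O[atTop] (· ^ (-(0:ℝ))) := by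
  rw [Asymptotics.isBigO_iff]
  refine ⟨2 ^ m, ?_⟩
  filter_upwards [Ioi_mem_atTop (0:ℝ)] with s hs
  have h1 : ((s:ℝ) ^ (-(0:ℝ))) = 1 := by
    rw [neg_zero, Real.rpow_zero]
  rw [h1, norm_one, mul_one]
  exact fm_norm_le_two_pow w m hw (le_of_lt hs)

lemma fm_bigO_bot (hw : 0 ≤ w.re) :
    (fun s : ℝ => (Complex.exp (-(w * s)) - 1) ^ m) =O[𝓝[>] (0:ℝ)] (· ^ (-(-(m:ℝ)))) := by
  rw [Asymptotics.isBigO_iff]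
  refine ⟨‖w‖ ^ m, ?_⟩
  filter_upwards [self_mem_nhdsWithin] with s hs
  rw [mem_Ioi] at hs
  have h1 : ((s:ℝ) ^ (-(-(m:ℝ)))) = s ^ m := by
    rw [neg_neg, Real.rpow_natCast]
  rw [h1]
  calc ‖(Complex.exp (-(w * s)) - 1) ^ m‖ ≤ (‖w‖ * s) ^ m := fm_norm_le_pow w m hw hs.le
    _ = ‖w‖ ^ m * s ^ m := mul_pow _ _ _
    _ ≤ ‖w‖ ^ m * ‖(s:ℝ) ^ m‖ := by
        rw [Real.norm_eq_abs, _root_.abs_of_nonneg (pow_nonneg hs.le m)]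

lemma fm_mellinConv (hw : 0 ≤ w.re) {z : ℂ} (h1 : -(m:ℝ) < z.re) (h2 : z.re < 0) :
    IntegrableOn (fun s : ℝ => (s:ℂ) ^ (z - 1) * (Complex.exp (-(w * s)) - 1) ^ m) (Ioi 0) := by
  have := mellinConvergent_of_isBigO_rpow (a := 0) (b := -(m:ℝ))
    (fm_locInt w m) (fm_bigO_top w m hw) h2 (fm_bigO_bot w m hw) h1
  simpa only [MellinConvergent, smul_eq_mul] using this

lemma fm_mellin_diff (hw : 0 ≤ w.re) {z : ℂ} (h1 : -(m:ℝ) < z.re) (h2 : z.re < 0) :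
    DifferentiableAt ℂ (mellin (fun s : ℝ => (Complex.exp (-(w * s)) - 1) ^ m)) z :=
  mellin_differentiableAt_of_isBigO_rpow (a := 0) (b := -(m:ℝ))
    (fm_locInt w m) (fm_bigO_top w m hw) h2 (fm_bigO_bot w m hw) h1

end FM

/-! ### Integrability of `s^c * exp(-δ s)` -/

lemma integrable_rpow_exp {c δ : ℝ} (hδ : 0 < δ) (hc : -1 < c) :
    IntegrableOn (fun s : ℝ => s ^ c * Real.exp (-(δ * s))) (Ioi 0) := by
  have h0 : IntegrableOn (fun x : ℝ => Real.exp (-x) * x ^ (c + 1 - 1)) (Ioi 0) :=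
    Real.GammaIntegral_convergent (by linarith)
  have h1 : IntegrableOn (fun x : ℝ => Real.exp (-(δ * x)) * (δ * x) ^ (c + 1 - 1)) (Ioi 0) := by
    have := (integrableOn_Ioi_comp_mul_left_iff
      (fun x : ℝ => Real.exp (-x) * x ^ (c + 1 - 1)) 0 hδ).2
    simpa using this (by simpa using h0)
  have h2 : IntegrableOn (fun x : ℝ => δ ^ (-c) * (Real.exp (-(δ * x)) * (δ * x) ^ (c + 1 - 1)))
      (Ioi 0) := h1.const_mul (δ ^ (-c))
  refine (h2.congr_fun ?_ measurableSet_Ioi)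
  intro x hx
  rw [mem_Ioi] at hx
  have e : (δ * x) ^ (c + 1 - 1) = δ ^ c * x ^ c := by
    rw [add_sub_cancel_right, Real.mul_rpow hδ.le hx.le]
  simp only [e, Real.rpow_neg hδ.le]
  field_simp [ne_of_gt (Real.rpow_pos_of_pos hδ c)]

lemma integrable_cpow_exp {ζ w : ℂ} (hζ : 0 < ζ.re) (hw : 0 < w.re) :
    IntegrableOn (fun s : ℝ => (s:ℂ) ^ (ζ - 1) * Complex.exp (-(w * s))) (Ioi 0) := by
  refine Integrable.mono' (g := fun s : ℝ => s ^ (ζ.re - 1) * Real.exp (-(w.re * s)))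
    (integrable_rpow_exp hw (by linarith : (-1:ℝ) < ζ.re - 1)) ?_ ?_
  · refine (ContinuousOn.aestronglyMeasurable ?_ measurableSet_Ioi)
    refine ContinuousOn.mul ?_ (Continuous.continuousOn (by fun_prop))
    intro x hx
    exact (continuousAt_ofReal_cpow_const _ _ (Or.inr (ne_of_gt hx))).continuousWithinAt
  · rw [ae_restrict_iff' measurableSet_Ioi]
    refine ae_of_all _ fun s hs => ?_
    rw [mem_Ioi] at hs
    rw [norm_mul]
    have e1 : ‖(s:ℂ) ^ (ζ - 1)‖ = s ^ (ζ.re - 1) := by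
      rw [Complex.norm_cpow_eq_rpow_re_of_pos hs, Complex.sub_re,
        Complex.one_re]
    have e2 : ‖Complex.exp (-(w * s))‖ = Real.exp (-(w.re * s)) := by
      rw [Complex.norm_exp]
      congr 1
      simp [Complex.mul_re]
    rw [e1, e2]


/-! ### measurability helper -/

lemma aesm_cpow_mul (c : ℂ) {g : ℝ → ℂ} (hg : Continuous g) :
    AEStronglyMeasurable (fun s : ℝ => (s:ℂ) ^ c * g s) (volume.restrict (Ioi 0)) := by
  refine ContinuousOn.aestronglyMeasurable ?_ measurableSet_Ioi
  refine ContinuousOn.mul ?_ hg.continuousOn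
  intro x hx
  exact (continuousAt_ofReal_cpow_const _ _ (Or.inr (ne_of_gt hx))).continuousWithinAt

/-! ### Step 1: rotated Gamma integral -/

lemma gamma_rotation {ζ : ℂ} (hζ : 0 < ζ.re) {w : ℂ} (hw : 0 < w.re) :
    ∫ s in Ioi (0:ℝ), (s:ℂ) ^ (ζ - 1) * Complex.exp (-(w * s)) = Complex.Gamma ζ * w ^ (-ζ) := by
  have hUo : IsOpen {v : ℂ | 0 < v.re} := isOpen_lt continuous_const Complex.continuous_re
  set F : ℂ → ℂ := fun v => ∫ s in Ioi (0:ℝ), (s:ℂ) ^ (ζ - 1) * Complex.exp (-(v * s)) with hF_def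
  set G : ℂ → ℂ := fun v => Complex.Gamma ζ * v ^ (-ζ) with hG_def
  have hF : DifferentiableOn ℂ F {v : ℂ | 0 < v.re} := by
    intro v₀ hv₀
    rw [Set.mem_setOf_eq] at hv₀
    refine DifferentiableAt.differentiableWithinAt ?_
    have key := hasDerivAt_integral_of_dominated_loc_of_deriv_le
      (F := fun v (s:ℝ) => (s:ℂ) ^ (ζ - 1) * Complex.exp (-(v * s)))
      (F' := fun v (s:ℝ) => (s:ℂ) ^ (ζ - 1) * (Complex.exp (-(v * s)) * (-(s:ℂ))))
      (x₀ := v₀) (s := Metric.ball v₀ (v₀.re / 2))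
      (bound := fun s : ℝ => s ^ ζ.re * Real.exp (-(v₀.re / 2 * s)))
      (μ := volume.restrict (Ioi 0)) (Metric.ball_mem_nhds _ (by linarith)) ?_ ?_ ?_ ?_ ?_ ?_
    · exact key.2.differentiableAt
    · filter_upwards with v
      exact aesm_cpow_mul _ (by fun_prop)
    · exact integrable_cpow_exp hζ hv₀
    · exact aesm_cpow_mul _ (by fun_prop)
    · rw [ae_restrict_iff' measurableSet_Ioi]
      refine ae_of_all _ fun s hs => fun v hv => ?_
      rw [mem_Ioi] at hs
      have hvre : v₀.re / 2 ≤ v.re := by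
        have h1 : |(v - v₀).re| ≤ ‖v - v₀‖ := Complex.abs_re_le_norm _
        have h2 : ‖v - v₀‖ < v₀.re / 2 := by
          simpa [Metric.mem_ball, dist_eq_norm] using hv
        have := abs_le.1 h1
        simp only [Complex.sub_re] at this
        linarith [this.1, h2]
      rw [norm_mul, norm_mul]
      have e1 : ‖(s:ℂ) ^ (ζ - 1)‖ = s ^ (ζ.re - 1) := by
        rw [Complex.norm_cpow_eq_rpow_re_of_pos hs, Complex.sub_re,
          Complex.one_re]
      have e2 : ‖Complex.exp (-(v * s))‖ = Real.exp (-(v.re * s)) := by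
        rw [Complex.norm_exp]
        congr 1
        simp [Complex.mul_re]
      have e3 : ‖(-(s:ℂ))‖ = s := by
        rw [norm_neg, Complex.norm_real, Real.norm_eq_abs, _root_.abs_of_nonneg hs.le]
      rw [e1, e2, e3]
      have : s ^ (ζ.re - 1) * (Real.exp (-(v.re * s)) * s) = s ^ (ζ.re - 1) * s * Real.exp (-(v.re * s)) := by ring
      rw [this]
      have e4 : s ^ (ζ.re - 1) * s = s ^ ζ.re := by
        nth_rewrite 2 [← Real.rpow_one s]
        rw [← Real.rpow_add hs]
        norm_num
      rw [e4]
      refine mul_le_mul_of_nonneg_left ?_ (Real.rpow_nonneg hs.le _)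
      exact Real.exp_le_exp.2 (by nlinarith)
    · exact integrable_rpow_exp (by linarith) (by linarith)
    · rw [ae_restrict_iff' measurableSet_Ioi]
      refine ae_of_all _ fun s hs => fun v hv => ?_
      simpa using (((((hasDerivAt_id v).mul_const ((s:ℂ))).neg.cexp).const_mul
        ((s:ℂ) ^ (ζ - 1))))
  have hG : DifferentiableOn ℂ G {v : ℂ | 0 < v.re} := by
    intro v hv
    rw [Set.mem_setOf_eq] at hv
    refine DifferentiableAt.differentiableWithinAt ?_
    refine DifferentiableAt.const_mul ?_ _
    exact differentiableAt_id.cpow (differentiableAt_const _) (Or.inl hv)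
  have hfreq : ∃ᶠ v in 𝓝[≠] (1:ℂ), F v = G v := by
    have hmap : Filter.Tendsto (fun x : ℝ => (x:ℂ)) (𝓝[≠] (1:ℝ)) (𝓝[≠] (1:ℂ)) := by
      rw [tendsto_nhdsWithin_iff]
      constructor
      · exact ((Complex.continuous_ofReal.tendsto 1).mono_left nhdsWithin_le_nhds)
      · filter_upwards [self_mem_nhdsWithin] with x hx
        simpa [Complex.ofReal_eq_one] using hx
    refine hmap.frequently ?_
    have hev : ∀ᶠ x : ℝ in 𝓝[≠] (1:ℝ), F (x:ℂ) = G (x:ℂ) := by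
      have hIoi : Ioi (0:ℝ) ∈ 𝓝[≠] (1:ℝ) :=
        nhdsWithin_le_nhds (Ioi_mem_nhds one_pos)
      filter_upwards [hIoi] with r hr
      rw [mem_Ioi] at hr
      have h1 := Complex.integral_cpow_mul_exp_neg_mul_Ioi hζ hr
      rw [hF_def, hG_def]
      simp only
      rw [h1]
      have e2 : ((1:ℂ) / r) ^ ζ = (r:ℂ) ^ (-ζ) := by
        rw [one_div, Complex.cpow_neg, ← Complex.inv_cpow]
        rw [Complex.arg_ofReal_of_nonneg hr.le]
        exact Real.pi_ne_zero.symm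
      rw [e2, mul_comm]
    exact hev.frequently
  have hpre : IsPreconnected {v : ℂ | 0 < v.re} := (convex_halfSpace_re_gt 0).isPreconnected
  have := AnalyticOnNhd.eqOn_of_preconnected_of_frequently_eq
    (hF.analyticOnNhd hUo) (hG.analyticOnNhd hUo) hpre
    (by simp : (1:ℂ) ∈ {v : ℂ | 0 < v.re}) hfreq
  exact this (by simpa using hw)


/-! ### Step 2: the case `m = 1` by integration by parts -/

lemma step2 {w : ℂ} (hw : 0 < w.re) {z : ℂ} (hz1 : -1 < z.re) (hz2 : z.re < 0) :
    ∫ s in Ioi (0:ℝ), (s:ℂ) ^ (z - 1) * (Complex.exp (-(w * s)) - 1)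
      = Complex.Gamma z * w ^ (-z) := by
  have hz0 : z ≠ 0 := by
    intro h
    rw [h] at hz2
    simp at hz2
  have hw0 : w ≠ 0 := by
    intro h
    rw [h] at hw
    simp at hw
  set F : ℝ → ℂ := fun s => (s:ℂ) ^ z / z * (Complex.exp (-(w * s)) - 1) with hFdef
  set F' : ℝ → ℂ := fun s => (s:ℂ) ^ (z - 1) * (Complex.exp (-(w * s)) - 1)
    + (s:ℂ) ^ z / z * (Complex.exp (-(w * s)) * (-w)) with hF'def
  have hderiv : ∀ s ∈ Ioi (0:ℝ), HasDerivAt F (F' s) s := by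
    intro s hs
    rw [mem_Ioi] at hs
    have hd1 : HasDerivAt (fun y : ℝ => (y:ℂ) ^ z / z) ((s:ℂ) ^ (z - 1)) s := by
      have hne : z - 1 ≠ -1 := by
        intro h
        apply hz0
        have := congrArg (· + 1) h
        simpa using this
      have := hasDerivAt_ofReal_cpow_const' (ne_of_gt hs) hne
      rw [sub_add_cancel] at this
      exact this
    have hd2 : HasDerivAt (fun y : ℝ => Complex.exp (-(w * y)) - 1)
        (Complex.exp (-(w * s)) * (-w)) s := by
      have hc : HasDerivAt (fun v : ℂ => Complex.exp (-(w * v)) - 1)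
          (Complex.exp (-(w * s)) * (-w)) (s:ℂ) := by
        simpa [mul_comm] using (((hasDerivAt_id ((s:ℂ))).const_mul w).neg.cexp.sub_const 1)
      exact hc.comp_ofReal
    exact hd1.mul hd2
  have hF0 : F 0 = 0 := by
    simp [hFdef]
  have hcont : ContinuousWithinAt F (Ici 0) 0 := by
    rw [ContinuousWithinAt, hF0]
    apply squeeze_zero_norm' (a := fun s : ℝ => ‖w‖ / ‖z‖ * s ^ (z.re + 1))
    · filter_upwards [self_mem_nhdsWithin] with s (hs : s ∈ Ici 0)
      rcases eq_or_lt_of_le (mem_Ici.1 hs) with h | h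
    -- s = 0
      · rw [← h]
        rw [hF0]
        simp [Real.zero_rpow (by linarith : z.re + 1 ≠ 0)]
      · have hs0 : 0 < s := h
        rw [hFdef]
        simp only [norm_mul, norm_div]
        have e1 : ‖(s:ℂ) ^ z‖ = s ^ z.re := by
          rw [Complex.norm_cpow_eq_rpow_re_of_pos hs0]
        have e2 : ‖Complex.exp (-(w * s)) - 1‖ ≤ ‖w‖ * s :=
          le_trans (Stmt3Aux.norm_cexp_sub_one_le (re_neg_mul w s hw.le hs0.le))
            (by rw [norm_neg, norm_mul, Complex.norm_real, Real.norm_eq_abs,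
              _root_.abs_of_nonneg hs0.le])
        calc ‖(s:ℂ) ^ z‖ / ‖z‖ * ‖Complex.exp (-(w * s)) - 1‖
            ≤ s ^ z.re / ‖z‖ * (‖w‖ * s) := by
              rw [e1]
              refine mul_le_mul_of_nonneg_left e2 (by positivity)
          _ = ‖w‖ / ‖z‖ * s ^ (z.re + 1) := by
              rw [Real.rpow_add hs0, Real.rpow_one]
              ring
    · have hc : ContinuousAt (fun x : ℝ => x ^ (z.re + 1)) 0 :=
        Real.continuousAt_rpow_const 0 (z.re + 1) (Or.inr (by linarith))
      have := (hc.tendsto.mono_left (nhdsWithin_le_nhds (s := Ici (0:ℝ))))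
      rw [Real.zero_rpow (by linarith : z.re + 1 ≠ 0)] at this
      simpa using this.const_mul (‖w‖ / ‖z‖)
  have hlim : Filter.Tendsto F atTop (𝓝 0) := by
    apply squeeze_zero_norm' (a := fun s : ℝ => 2 / ‖z‖ * s ^ z.re)
    · filter_upwards [Ioi_mem_atTop (0:ℝ)] with s hs
      rw [mem_Ioi] at hs
      rw [hFdef]
      simp only [norm_mul, norm_div]
      have e1 : ‖(s:ℂ) ^ z‖ = s ^ z.re := by
        rw [Complex.norm_cpow_eq_rpow_re_of_pos hs]
      rw [e1]
      calc s ^ z.re / ‖z‖ * ‖Complex.exp (-(w * s)) - 1‖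
          ≤ s ^ z.re / ‖z‖ * 2 := by
            refine mul_le_mul_of_nonneg_left
              (Stmt3Aux.norm_cexp_sub_one_le_two (re_neg_mul w s hw.le hs.le)) (by positivity)
        _ = 2 / ‖z‖ * s ^ z.re := by ring
    · have h0 : Filter.Tendsto (fun s : ℝ => s ^ z.re) atTop (𝓝 0) := by
        have := tendsto_rpow_neg_atTop (y := -z.re) (by linarith)
        simpa using this
      simpa using h0.const_mul (2 / ‖z‖)
  have hint1 : IntegrableOn (fun s : ℝ => (s:ℂ) ^ (z - 1) * (Complex.exp (-(w * s)) - 1))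
      (Ioi 0) := by
    have := fm_mellinConv w 1 hw.le (z := z) (by push_cast; linarith) hz2
    simpa using this
  have hint2' : IntegrableOn (fun s : ℝ => -w / z * ((s:ℂ) ^ ((z + 1) - 1)
      * Complex.exp (-(w * s)))) (Ioi 0) :=
    (integrable_cpow_exp (by simp; linarith) hw).const_mul _
  have hint2 : IntegrableOn (fun s : ℝ => (s:ℂ) ^ z / z * (Complex.exp (-(w * s)) * (-w)))
      (Ioi 0) := by
    refine hint2'.congr_fun (fun s hs => ?_) measurableSet_Ioi
    rw [add_sub_cancel_right]
    ring
  have key := integral_Ioi_of_hasDerivAt_of_tendsto hcont hderiv (hint1.add hint2) hlim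
  rw [hF0, sub_zero] at key
  have split := integral_add hint1 hint2
  rw [hF'def] at key
  rw [split] at key
  have e2 : ∫ s in Ioi (0:ℝ), (s:ℂ) ^ z / z * (Complex.exp (-(w * s)) * (-w))
      = -w / z * (Complex.Gamma (z + 1) * w ^ (-(z + 1))) := by
    have hrw : ∀ s ∈ Ioi (0:ℝ), (s:ℂ) ^ z / z * (Complex.exp (-(w * s)) * (-w))
        = -w / z * ((s:ℂ) ^ ((z + 1) - 1) * Complex.exp (-(w * s))) := by
      intro s hs
      rw [add_sub_cancel_right]
      ring
    rw [setIntegral_congr_fun measurableSet_Ioi hrw, MeasureTheory.integral_const_mul,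
      gamma_rotation (by simp; linarith) hw]
  rw [e2] at key
  have hH : (∫ s in Ioi (0:ℝ), (s:ℂ) ^ (z - 1) * (Complex.exp (-(w * s)) - 1))
      = -(-w / z * (Complex.Gamma (z + 1) * w ^ (-(z + 1)))) :=
    eq_neg_of_add_eq_zero_left key
  rw [hH, Complex.Gamma_add_one z hz0]
  have hcp : w ^ (-(z + 1)) = w ^ (-z) * w⁻¹ := by
    have : -(z + 1) = -z + (-1) := by ring
    rw [this, Complex.cpow_add _ _ hw0, Complex.cpow_neg_one]
  rw [hcp]
  field_simp


/-! ### Step 3: binomial expansion -/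

lemma pow_sub_one_eq {m : ℕ} (hm : 1 ≤ m) (x : ℂ) :
    (x - 1) ^ m = ∑ k ∈ Finset.Icc 1 m, (m.choose k : ℂ) * (-1) ^ (m - k) * (x ^ k - 1) := by
  have hsub : Finset.Icc 1 m ⊆ Finset.range (m + 1) := by
    intro k hk
    rw [Finset.mem_Icc] at hk
    exact Finset.mem_range.2 (Nat.lt_succ_of_le hk.2)
  rw [Finset.sum_subset hsub (fun k hk hk' => ?_)]
  · have e1 : (x - 1) ^ m
        = ∑ k ∈ Finset.range (m + 1), x ^ k * (-1 : ℂ) ^ (m - k) * (m.choose k) := by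
      rw [sub_eq_add_neg, add_pow]
    have e2 : (0 : ℂ)
        = ∑ k ∈ Finset.range (m + 1), (1:ℂ) ^ k * (-1 : ℂ) ^ (m - k) * (m.choose k) := by
      have h := add_pow (1:ℂ) (-1) m
      rw [add_neg_cancel, zero_pow (by omega : m ≠ 0)] at h
      exact h
    calc (x - 1) ^ m = (x - 1) ^ m - 0 := by ring
      _ = (∑ k ∈ Finset.range (m + 1), x ^ k * (-1 : ℂ) ^ (m - k) * (m.choose k))
          - ∑ k ∈ Finset.range (m + 1), (1:ℂ) ^ k * (-1 : ℂ) ^ (m - k) * (m.choose k) := by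
          rw [← e1, ← e2]
      _ = ∑ k ∈ Finset.range (m + 1),
            (x ^ k * (-1 : ℂ) ^ (m - k) * (m.choose k)
              - (1:ℂ) ^ k * (-1 : ℂ) ^ (m - k) * (m.choose k)) := by
          rw [Finset.sum_sub_distrib]
      _ = ∑ k ∈ Finset.range (m + 1), (m.choose k : ℂ) * (-1) ^ (m - k) * (x ^ k - 1) := by
          refine Finset.sum_congr rfl fun k _ => ?_
          ring
  · have hk0 : k = 0 := by
      rw [Finset.mem_range] at hk
      rw [Finset.mem_Icc] at hk'
      omega
    simp [hk0]

lemma step3 {w : ℂ} (hw : 0 < w.re) {m : ℕ} (hm : 1 ≤ m) {z : ℂ}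
    (hz1 : -1 < z.re) (hz2 : z.re < 0) :
    ∫ s in Ioi (0:ℝ), (s:ℂ) ^ (z - 1) * (Complex.exp (-(w * s)) - 1) ^ m
      = Complex.Gamma z * ∑ k ∈ Finset.Icc 1 m,
          (m.choose k : ℂ) * (-1) ^ (m - k) * (((k:ℂ) * w) ^ (-z)) := by
  have hptw : ∀ s : ℝ, (s:ℂ) ^ (z - 1) * (Complex.exp (-(w * s)) - 1) ^ m
      = ∑ k ∈ Finset.Icc 1 m, (m.choose k : ℂ) * (-1) ^ (m - k)
          * ((s:ℂ) ^ (z - 1) * (Complex.exp (-((k:ℂ) * w * s)) - 1)) := by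
    intro s
    rw [pow_sub_one_eq hm (Complex.exp (-(w * s))), Finset.mul_sum]
    refine Finset.sum_congr rfl fun k hk => ?_
    have he : Complex.exp (-(w * s)) ^ k = Complex.exp (-((k:ℂ) * w * s)) := by
      rw [← Complex.exp_nat_mul]
      congr 1
      ring
    rw [he]
    ring
  have hint : ∀ k ∈ Finset.Icc 1 m, IntegrableOn
      (fun s : ℝ => (m.choose k : ℂ) * (-1) ^ (m - k)
        * ((s:ℂ) ^ (z - 1) * (Complex.exp (-((k:ℂ) * w * s)) - 1))) (Ioi 0) := by
    intro k hk
    rw [Finset.mem_Icc] at hk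
    have hkw : (0:ℝ) ≤ ((k:ℂ) * w).re := by
      simp only [Complex.mul_re, Complex.natCast_re, Complex.natCast_im, zero_mul, sub_zero]
      positivity
    have := fm_mellinConv ((k:ℂ) * w) 1 hkw (z := z) (by push_cast; linarith) hz2
    simpa [IntegrableOn] using this.const_mul _
  calc ∫ s in Ioi (0:ℝ), (s:ℂ) ^ (z - 1) * (Complex.exp (-(w * s)) - 1) ^ m
      = ∫ s in Ioi (0:ℝ), ∑ k ∈ Finset.Icc 1 m, (m.choose k : ℂ) * (-1) ^ (m - k)
          * ((s:ℂ) ^ (z - 1) * (Complex.exp (-((k:ℂ) * w * s)) - 1)) :=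
        integral_congr_ae (ae_of_all _ fun s => hptw s)
    _ = ∑ k ∈ Finset.Icc 1 m, ∫ s in Ioi (0:ℝ), (m.choose k : ℂ) * (-1) ^ (m - k)
          * ((s:ℂ) ^ (z - 1) * (Complex.exp (-((k:ℂ) * w * s)) - 1)) :=
        integral_finset_sum _ hint
    _ = ∑ k ∈ Finset.Icc 1 m, (m.choose k : ℂ) * (-1) ^ (m - k)
          * (Complex.Gamma z * ((k:ℂ) * w) ^ (-z)) := by
        refine Finset.sum_congr rfl fun k hk => ?_
        rw [Finset.mem_Icc] at hk
        rw [MeasureTheory.integral_const_mul]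
        congr 1
        have hkw : 0 < ((k:ℂ) * w).re := by
          simp only [Complex.mul_re, Complex.natCast_re, Complex.natCast_im, zero_mul, sub_zero]
          have : (1:ℝ) ≤ (k:ℝ) := by exact_mod_cast hk.1
          nlinarith
        exact step2 hkw hz1 hz2
    _ = Complex.Gamma z * ∑ k ∈ Finset.Icc 1 m,
          (m.choose k : ℂ) * (-1) ^ (m - k) * (((k:ℂ) * w) ^ (-z)) := by
        rw [Finset.mul_sum]
        refine Finset.sum_congr rfl fun k _ => ?_
        ring


/-! ### The domain: strip minus integer points -/

lemma neg_half_ne_int (n : ℤ) : ((-1/2 : ℝ) : ℂ) + Complex.I * 0 ≠ (n:ℂ) := by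
  intro h
  have hre := congrArg Complex.re h
  simp only [Complex.add_re, Complex.ofReal_re, Complex.mul_re, Complex.I_re, Complex.I_im,
    Complex.intCast_re] at hre
  norm_num at hre
  have : (2 * n : ℝ) = -1 := by linarith
  have h2 : ((2 * n : ℤ) : ℝ) = ((-1 : ℤ) : ℝ) := by push_cast; linarith
  have := Int.cast_injective h2
  omega

lemma seg_re_mem {a b : ℂ} {x : ℂ} (hx : x ∈ segment ℝ a b) :
    ∃ u v : ℝ, 0 ≤ u ∧ 0 ≤ v ∧ u + v = 1 ∧ x.re = u * a.re + v * b.re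
      ∧ x.im = u * a.im + v * b.im := by
  obtain ⟨u, v, hu, hv, huv, rfl⟩ := hx
  refine ⟨u, v, hu, hv, huv, ?_, ?_⟩ <;>
    simp [Complex.add_re, Complex.add_im, Complex.real_smul, Complex.mul_re, Complex.mul_im]

set_option maxHeartbeats 1000000 in
lemma strip_preconnected (m : ℕ) (hm : 1 ≤ m) :
    IsPreconnected {v : ℂ | -(m:ℝ) < v.re ∧ v.re < 0 ∧ ∀ n : ℤ, v ≠ (n:ℂ)} := by
  set D : Set ℂ := {v : ℂ | -(m:ℝ) < v.re ∧ v.re < 0 ∧ ∀ n : ℤ, v ≠ (n:ℂ)} with hD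
  have hm' : -(m:ℝ) < -1/2 := by
    have : (1:ℝ) ≤ m := by exact_mod_cast hm
    linarith
  have hne_of_im : ∀ x : ℂ, x.im ≠ 0 → ∀ n : ℤ, x ≠ (n:ℂ) := by
    intro x hx n h
    apply hx
    rw [h]
    simp
  have hhalf : ∀ x : ℂ, x.re = -1/2 → ∀ n : ℤ, x ≠ (n:ℂ) := by
    intro x hx n h
    have hre := congrArg Complex.re h
    rw [hx] at hre
    simp only [Complex.intCast_re] at hre
    have h2 : ((2 * n : ℤ) : ℝ) = ((-1 : ℤ) : ℝ) := by push_cast; linarith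
    have := Int.cast_injective h2
    omega
  apply isPreconnected_of_forall (((-1/2 : ℝ) : ℂ) + (1:ℝ) * Complex.I)
  intro y hy
  obtain ⟨hy1, hy2, hy3⟩ := hy
  set h : ℝ := if 0 ≤ y.im then 1 else -1 with hh
  have hne : h ≠ 0 := by
    rw [hh]
    split <;> norm_num
  set p2 : ℂ := (y.re : ℝ) + h * Complex.I with hp2
  set p3 : ℂ := ((-1/2 : ℝ) : ℂ) + h * Complex.I with hp3
  set p4 : ℂ := ((-1/2 : ℝ) : ℂ) + (1:ℝ) * Complex.I with hp4
  have hp2re : p2.re = y.re := by simp [hp2]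
  have hp2im : p2.im = h := by simp [hp2]
  have hp3re : p3.re = -1/2 := by simp [hp3]
  have hp3im : p3.im = h := by simp [hp3]
  have hp4re : p4.re = -1/2 := by simp [hp4]
  have hp4im : p4.im = 1 := by simp [hp4]
  refine ⟨segment ℝ y p2 ∪ segment ℝ p2 p3 ∪ segment ℝ p3 p4, ?_, ?_, ?_, ?_⟩
  · -- subset of D
    rintro x (hx | hx)
    · rcases hx with hx | hx
      · -- seg y p2 : vertical
        obtain ⟨u, v, hu, hv, huv, hre, him⟩ := seg_re_mem hx
        rw [hp2re] at hre
        rw [hp2im] at him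
        have hxre : x.re = y.re := by rw [hre, ← add_mul, huv, one_mul]
        by_cases him0 : x.im = 0
        · -- then v = 0 and x = y
          have hv0 : v = 0 := by
            rw [him0] at him
            by_cases hyim : 0 ≤ y.im
            · rw [hh, if_pos hyim] at him
              nlinarith
            · rw [hh, if_neg hyim] at him
              push_neg at hyim
              nlinarith
          have hu1 : u = 1 := by linarith
          have hxy : x = y := by
            apply Complex.ext
            · rw [hxre]
            · rw [him0]
              rw [him0, hv0, hu1] at him
              simp at him
              linarith
          rw [hxy]
          exact ⟨hy1, hy2, hy3⟩
        · exact ⟨by rw [hxre]; exact hy1, by rw [hxre]; exact hy2, hne_of_im x him0⟩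
      · -- seg p2 p3 : horizontal at height h
        obtain ⟨u, v, hu, hv, huv, hre, him⟩ := seg_re_mem hx
        rw [hp2re, hp3re] at hre
        rw [hp2im, hp3im] at him
        have hxim : x.im = h := by rw [him, ← add_mul, huv, one_mul]
        refine ⟨?_, ?_, hne_of_im x (by rw [hxim]; exact hne)⟩
        · rw [hre]
          rcases lt_or_ge 0 u with hu' | hu'
          · have hA : 0 < u * (y.re + (m:ℝ)) := mul_pos hu' (by linarith)
            have hB : 0 ≤ v * ((m:ℝ) - 1/2) := mul_nonneg hv (by linarith)
            nlinarith
          · have hu0 : u = 0 := le_antisymm hu' hu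
            have hv1 : v = 1 := by linarith
            rw [hu0, hv1]
            linarith
        · rw [hre]
          rcases lt_or_ge 0 u with hu' | hu'
          · have hA : u * y.re < 0 := mul_neg_of_pos_of_neg hu' hy2
            have hB : v * (-1/2 : ℝ) ≤ 0 := mul_nonpos_of_nonneg_of_nonpos hv (by norm_num)
            nlinarith
          · have hu0 : u = 0 := le_antisymm hu' hu
            have hv1 : v = 1 := by linarith
            rw [hu0, hv1]
            linarith
    · -- seg p3 p4 : vertical at re = -1/2
      obtain ⟨u, v, hu, hv, huv, hre, him⟩ := seg_re_mem hx
      rw [hp3re, hp4re] at hre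
      have hxre : x.re = -1/2 := by rw [hre, ← add_mul, huv, one_mul]
      exact ⟨by rw [hxre]; linarith, by rw [hxre]; norm_num, hhalf x hxre⟩
  · -- base point in t
    exact Or.inr (right_mem_segment ℝ p3 p4)
  · -- y ∈ t
    exact Or.inl (Or.inl (left_mem_segment ℝ y p2))
  · -- preconnected
    refine IsPreconnected.union p3 ?_ ?_ ?_ ?_
    · exact Or.inr (right_mem_segment ℝ p2 p3)
    · exact left_mem_segment ℝ p3 p4
    · refine IsPreconnected.union p2 ?_ ?_ ?_ ?_
      · exact right_mem_segment ℝ y p2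
      · exact left_mem_segment ℝ p2 p3
      · exact (convex_segment y p2).isPreconnected
      · exact (convex_segment p2 p3).isPreconnected
    · exact (convex_segment p3 p4).isPreconnected

lemma strip_open (m : ℕ) :
    IsOpen {v : ℂ | -(m:ℝ) < v.re ∧ v.re < 0 ∧ ∀ n : ℤ, v ≠ (n:ℂ)} := by
  have heq : {v : ℂ | -(m:ℝ) < v.re ∧ v.re < 0 ∧ ∀ n : ℤ, v ≠ (n:ℂ)}
      = ({v : ℂ | -(m:ℝ) < v.re} ∩ {v : ℂ | v.re < 0})
        \ (↑((Finset.Icc (-(m:ℤ)) 0).image (fun n : ℤ => (n:ℂ)))) := by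
    ext v
    simp only [Set.mem_setOf_eq, Set.mem_diff, Set.mem_inter_iff, Finset.coe_image,
      Set.mem_image, Finset.mem_coe, Finset.mem_Icc]
    constructor
    · rintro ⟨h1, h2, h3⟩
      exact ⟨⟨h1, h2⟩, by rintro ⟨n, _, rfl⟩; exact h3 n rfl⟩
    · rintro ⟨⟨h1, h2⟩, h3⟩
      refine ⟨h1, h2, fun n hn => ?_⟩
      refine h3 ⟨n, ⟨?_, ?_⟩, hn.symm⟩
      · have : -(m:ℝ) < (n:ℝ) := by
          rw [hn] at h1
          simpa using h1
        exact_mod_cast this.le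
      · have : (n:ℝ) < 0 := by
          rw [hn] at h2
          simpa using h2
        exact_mod_cast this.le
  rw [heq]
  refine IsOpen.sdiff ?_ (Set.Finite.isClosed (Finset.finite_toSet _))
  exact (isOpen_lt continuous_const Complex.continuous_re).inter
    (isOpen_lt Complex.continuous_re continuous_const)


lemma re_neg_half_ne_int {x : ℂ} (hx : x.re = -1/2) (n : ℤ) : x ≠ (n:ℂ) := by
  intro h
  have hre := congrArg Complex.re h
  rw [hx] at hre
  simp only [Complex.intCast_re] at hre
  have h2 : ((2 * n : ℤ) : ℝ) = ((-1 : ℤ) : ℝ) := by push_cast; linarith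
  have := Int.cast_injective h2
  omega

/-! ### Step 4: analytic continuation in `z` -/

lemma step4 {w : ℂ} (hw : 0 < w.re) {m : ℕ} (hm : 1 ≤ m) {z : ℂ}
    (hz1 : -(m:ℝ) < z.re) (hz2 : z.re < 0) (hzint : ∀ n : ℤ, z ≠ (n:ℂ)) :
    ∫ s in Ioi (0:ℝ), (s:ℂ) ^ (z - 1) * (Complex.exp (-(w * s)) - 1) ^ m
      = Complex.Gamma z * ∑ k ∈ Finset.Icc 1 m,
          (m.choose k : ℂ) * (-1) ^ (m - k) * (((k:ℂ) * w) ^ (-z)) := by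
  have hw0 : w ≠ 0 := by
    intro h
    rw [h] at hw
    simp at hw
  set D : Set ℂ := {v : ℂ | -(m:ℝ) < v.re ∧ v.re < 0 ∧ ∀ n : ℤ, v ≠ (n:ℂ)} with hDdef
  set F : ℂ → ℂ := mellin (fun s : ℝ => (Complex.exp (-(w * s)) - 1) ^ m) with hFdef
  set G : ℂ → ℂ := fun v => Complex.Gamma v * ∑ k ∈ Finset.Icc 1 m,
      (m.choose k : ℂ) * (-1) ^ (m - k) * (((k:ℂ) * w) ^ (-v)) with hGdef
  have hDo : IsOpen D := strip_open m
  have hDp : IsPreconnected D := strip_preconnected m hm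
  have hFd : DifferentiableOn ℂ F D := fun v hv =>
    (fm_mellin_diff w m hw.le hv.1 hv.2.1).differentiableWithinAt
  have hGd : DifferentiableOn ℂ G D := by
    intro v hv
    obtain ⟨hv1, hv2, hv3⟩ := hv
    refine DifferentiableAt.differentiableWithinAt ?_
    refine DifferentiableAt.mul ?_ ?_
    · refine Complex.differentiableAt_Gamma v fun n => ?_
      have := hv3 (-(n:ℤ))
      intro h
      apply this
      rw [h]
      push_cast
      ring
    · refine DifferentiableAt.fun_sum fun k hk => ?_
      rw [Finset.mem_Icc] at hk
      have hk0 : ((k:ℂ) * w) ≠ 0 := by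
        refine mul_ne_zero ?_ hw0
        have : k ≠ 0 := by omega
        exact_mod_cast this
      refine DifferentiableAt.const_mul ?_ _
      have hd : HasDerivAt (fun v : ℂ => ((k:ℂ) * w) ^ (-v))
          ((((k:ℂ) * w) ^ (-v) * Complex.log ((k:ℂ) * w)) * (-1)) v := by
        have houter : HasDerivAt (fun y : ℂ => ((k:ℂ) * w) ^ y)
            (((k:ℂ) * w) ^ (-v) * Complex.log ((k:ℂ) * w)) (-v) :=
          (hasStrictDerivAt_const_cpow (Or.inl hk0)).hasDerivAt
        exact houter.comp v (hasDerivAt_neg v)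
      exact hd.differentiableAt
  have hmem : ((-(1/2) : ℝ) : ℂ) ∈ D := by
    refine ⟨?_, ?_, fun n => re_neg_half_ne_int (by simp; norm_num) n⟩
    · simp only [Complex.ofReal_re]
      have : (1:ℝ) ≤ m := by exact_mod_cast hm
      norm_num
      linarith
    · simp only [Complex.ofReal_re]
      norm_num
  have hfreq : ∃ᶠ v in 𝓝[≠] ((-(1/2) : ℝ) : ℂ), F v = G v := by
    refine Filter.Eventually.frequently ?_
    refine Filter.Eventually.filter_mono nhdsWithin_le_nhds ?_
    have hV : IsOpen {v : ℂ | -1 < v.re ∧ v.re < 0} :=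
      (isOpen_lt continuous_const Complex.continuous_re).inter
        (isOpen_lt Complex.continuous_re continuous_const)
    have hVm : ((-(1/2) : ℝ) : ℂ) ∈ {v : ℂ | -1 < v.re ∧ v.re < 0} := by
      constructor <;> simp <;> norm_num
    filter_upwards [hV.mem_nhds hVm] with v hv
    rw [hFdef, hGdef]
    simp only [mellin, smul_eq_mul]
    exact step3 hw hm hv.1 hv.2
  have heq := AnalyticOnNhd.eqOn_of_preconnected_of_frequently_eq
    (hFd.analyticOnNhd hDo) (hGd.analyticOnNhd hDo) hDp hmem hfreq
  have := heq (⟨hz1, hz2, hzint⟩ : z ∈ D)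
  rw [hFdef] at this
  simp only [mellin, smul_eq_mul] at this
  exact this


/-! ### Step 5: passing to the boundary `Re w = 0` -/

lemma integrable_bound_aux {m : ℕ} (hm : 1 ≤ m) {p : ℝ} (h1 : -(m:ℝ) < p) (h2 : p < 0)
    {C : ℝ} (hC : 0 ≤ C) :
    IntegrableOn (fun s : ℝ => s ^ (p - 1) * min ((C * s) ^ m) (2 ^ m)) (Ioi 0) := by
  have hcont : ContinuousOn (fun s : ℝ => s ^ (p - 1) * min ((C * s) ^ m) (2 ^ m)) (Ioi 0) := by
    refine ContinuousOn.mul ?_ ?_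
    · intro x hx
      exact (Real.continuousAt_rpow_const _ _ (Or.inl (ne_of_gt hx))).continuousWithinAt
    · exact (Continuous.min (by fun_prop) continuous_const).continuousOn
  rw [← Ioc_union_Ioi_eq_Ioi (zero_le_one : (0:ℝ) ≤ 1), integrableOn_union]
  constructor
  · refine Integrable.mono' (g := fun s : ℝ => C ^ m * s ^ (p - 1 + m)) ?_ ?_ ?_
    · have hint : IntegrableOn (fun s : ℝ => s ^ (p - 1 + m)) (Ioc (0:ℝ) 1) := by
        have := intervalIntegral.intervalIntegrable_rpow' (a := 0) (b := 1) (r := p - 1 + m) (by linarith)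
        rwa [intervalIntegrable_iff_integrableOn_Ioc_of_le zero_le_one] at this
      exact hint.const_mul _
    · exact (hcont.mono Ioc_subset_Ioi_self).aestronglyMeasurable measurableSet_Ioc
    · rw [ae_restrict_iff' measurableSet_Ioc]
      refine ae_of_all _ fun s hs => ?_
      obtain ⟨hs0, _⟩ := hs
      have hmin : (0:ℝ) ≤ min ((C * s) ^ m) (2 ^ m) := le_min (by positivity) (by positivity)
      rw [Real.norm_eq_abs, abs_mul, _root_.abs_of_nonneg (Real.rpow_nonneg hs0.le _),
        _root_.abs_of_nonneg hmin]
      calc s ^ (p - 1) * min ((C * s) ^ m) (2 ^ m) ≤ s ^ (p - 1) * (C * s) ^ m := by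
            exact mul_le_mul_of_nonneg_left (min_le_left _ _) (Real.rpow_nonneg hs0.le _)
        _ = C ^ m * s ^ (p - 1 + m) := by
            rw [mul_pow, Real.rpow_add hs0, Real.rpow_natCast]
            ring
  · refine Integrable.mono' (g := fun s : ℝ => 2 ^ m * s ^ (p - 1)) ?_ ?_ ?_
    · exact (integrableOn_Ioi_rpow_of_lt (by linarith) one_pos).const_mul _
    · exact (hcont.mono (Ioi_subset_Ioi zero_le_one)).aestronglyMeasurable measurableSet_Ioi
    · rw [ae_restrict_iff' measurableSet_Ioi]
      refine ae_of_all _ fun s hs => ?_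
      rw [mem_Ioi] at hs
      have hs0 : (0:ℝ) < s := lt_trans one_pos hs
      have hmin : (0:ℝ) ≤ min ((C * s) ^ m) (2 ^ m) := le_min (by positivity) (by positivity)
      rw [Real.norm_eq_abs, abs_mul, _root_.abs_of_nonneg (Real.rpow_nonneg hs0.le _),
        _root_.abs_of_nonneg hmin]
      calc s ^ (p - 1) * min ((C * s) ^ m) (2 ^ m) ≤ s ^ (p - 1) * 2 ^ m := by
            exact mul_le_mul_of_nonneg_left (min_le_right _ _) (Real.rpow_nonneg hs0.le _)
        _ = 2 ^ m * s ^ (p - 1) := by ring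

lemma step5 {w : ℂ} (hre : w.re = 0) (him : w.im ≠ 0) {m : ℕ} (hm : 1 ≤ m) {z : ℂ}
    (hz1 : -(m:ℝ) < z.re) (hz2 : z.re < 0) (hzint : ∀ n : ℤ, z ≠ (n:ℂ)) :
    ∫ s in Ioi (0:ℝ), (s:ℂ) ^ (z - 1) * (Complex.exp (-(w * s)) - 1) ^ m
      = Complex.Gamma z * ∑ k ∈ Finset.Icc 1 m,
          (m.choose k : ℂ) * (-1) ^ (m - k) * (((k:ℂ) * w) ^ (-z)) := by
  set wn : ℕ → ℂ := fun n => w + ((1/(n+1) : ℝ) : ℂ) with hwndef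
  have hwn_re : ∀ n, 0 < (wn n).re := by
    intro n
    simp only [hwndef, Complex.add_re, Complex.ofReal_re, hre, zero_add]
    positivity
  have hwn_tend : Filter.Tendsto wn atTop (𝓝 w) := by
    have h0 : Filter.Tendsto (fun n : ℕ => (1/(n+1) : ℝ)) atTop (𝓝 0) :=
      tendsto_one_div_add_atTop_nhds_zero_nat
    have h1 : Filter.Tendsto (fun n : ℕ => ((1/(n+1) : ℝ) : ℂ)) atTop (𝓝 ((0:ℝ):ℂ)) :=
      (Complex.continuous_ofReal.tendsto 0).comp h0
    rw [Complex.ofReal_zero] at h1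
    have h2 := tendsto_const_nhds (x := w) (f := atTop (α := ℕ)) |>.add h1
    rw [add_zero] at h2
    exact h2
  have hwn_norm : ∀ n, ‖wn n‖ ≤ ‖w‖ + 1 := by
    intro n
    refine le_trans (norm_add_le _ _) ?_
    refine add_le_add le_rfl ?_
    rw [Complex.norm_real, Real.norm_eq_abs, _root_.abs_of_nonneg (by positivity)]
    rw [div_le_one (by positivity)]
    linarith [Nat.cast_nonneg (α := ℝ) n]
  have hLHS : Filter.Tendsto
      (fun n => ∫ s in Ioi (0:ℝ), (s:ℂ) ^ (z - 1) * (Complex.exp (-(wn n * s)) - 1) ^ m) atTop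
      (𝓝 (∫ s in Ioi (0:ℝ), (s:ℂ) ^ (z - 1) * (Complex.exp (-(w * s)) - 1) ^ m)) := by
    refine tendsto_integral_of_dominated_convergence
      (fun s : ℝ => s ^ (z.re - 1) * min (((‖w‖ + 1) * s) ^ m) (2 ^ m)) ?_ ?_ ?_ ?_
    · intro n
      exact aesm_cpow_mul _ (by fun_prop)
    · exact integrable_bound_aux hm hz1 hz2 (by positivity)
    · intro n
      rw [ae_restrict_iff' measurableSet_Ioi]
      refine ae_of_all _ fun s hs => ?_
      rw [mem_Ioi] at hs
      rw [norm_mul]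
      have e1 : ‖(s:ℂ) ^ (z - 1)‖ = s ^ (z.re - 1) := by
        rw [Complex.norm_cpow_eq_rpow_re_of_pos hs, Complex.sub_re,
          Complex.one_re]
      rw [e1]
      refine mul_le_mul_of_nonneg_left ?_ (Real.rpow_nonneg hs.le _)
      refine le_min ?_ (fm_norm_le_two_pow _ m (hwn_re n).le hs.le)
      refine le_trans (fm_norm_le_pow _ m (hwn_re n).le hs.le) ?_
      refine pow_le_pow_left₀ (by positivity) ?_ m
      exact mul_le_mul_of_nonneg_right (hwn_norm n) hs.le
    · rw [ae_restrict_iff' measurableSet_Ioi]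
      refine ae_of_all _ fun s hs => ?_
      have hcont : Continuous (fun v : ℂ => (s:ℂ) ^ (z - 1) * (Complex.exp (-(v * s)) - 1) ^ m) := by
        fun_prop
      exact (hcont.tendsto w).comp hwn_tend
  have hRHS : Filter.Tendsto
      (fun n => Complex.Gamma z * ∑ k ∈ Finset.Icc 1 m,
        (m.choose k : ℂ) * (-1) ^ (m - k) * (((k:ℂ) * wn n) ^ (-z))) atTop
      (𝓝 (Complex.Gamma z * ∑ k ∈ Finset.Icc 1 m,
        (m.choose k : ℂ) * (-1) ^ (m - k) * (((k:ℂ) * w) ^ (-z)))) := by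
    refine Filter.Tendsto.const_mul _ ?_
    refine tendsto_finset_sum _ fun k hk => ?_
    refine Filter.Tendsto.const_mul _ ?_
    rw [Finset.mem_Icc] at hk
    have hk1 : 1 ≤ k := hk.1
    have hkim : ((k:ℂ) * w).im ≠ 0 := by
      simp only [Complex.mul_im, Complex.natCast_re, Complex.natCast_im, zero_mul, add_zero]
      refine mul_ne_zero ?_ him
      exact_mod_cast (by omega : k ≠ 0)
    have hcpow : ContinuousAt (fun x : ℂ => x ^ (-z)) ((k:ℂ) * w) :=
      continuousAt_cpow_const (Or.inr hkim)
    have hmul : Filter.Tendsto (fun n => (k:ℂ) * wn n) atTop (𝓝 ((k:ℂ) * w)) :=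
      Filter.Tendsto.const_mul _ hwn_tend
    exact hcpow.tendsto.comp hmul
  have heqn : ∀ n, ∫ s in Ioi (0:ℝ), (s:ℂ) ^ (z - 1) * (Complex.exp (-(wn n * s)) - 1) ^ m
      = Complex.Gamma z * ∑ k ∈ Finset.Icc 1 m,
          (m.choose k : ℂ) * (-1) ^ (m - k) * (((k:ℂ) * wn n) ^ (-z)) := fun n =>
    step4 (hwn_re n) hm hz1 hz2 hzint
  refine tendsto_nhds_unique ?_ hRHS
  have : (fun n => ∫ s in Ioi (0:ℝ), (s:ℂ) ^ (z - 1) * (Complex.exp (-(wn n * s)) - 1) ^ m)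
      = fun n => Complex.Gamma z * ∑ k ∈ Finset.Icc 1 m,
          (m.choose k : ℂ) * (-1) ^ (m - k) * (((k:ℂ) * wn n) ^ (-z)) := funext heqn
  rw [← this]
  exact hLHS

end Stmt3Aux


/-- For `α > 1/2`, a positive integer `m > α - 1/2`, `μ > 0`, `t ∈ ℝ` and
`σ ∈ {+1, -1}`, assuming `z = 1/2 - α + it` is not an integer,
`∫₀^∞ s^(it) (sμ)^(1/2-α) (e^(-σiμs) - 1)^m ds/s
  = e^(-σi(π/2)(1/2-α+it)) μ^(-it) Γ(1/2-α+it) f_m(1/2-α+it)`,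
where `f_m(z) = ∑_{k=1}^m (m choose k) (-1)^(m-k) k^(-z)`. -/
theorem stmt_3 (α : ℝ) (hα : 1 / 2 < α) (m : ℕ) (hm : 1 ≤ m) (hmα : α - 1 / 2 < (m : ℝ))
    (μ : ℝ) (hμ : 0 < μ) (t : ℝ) (σ : ℝ) (hσ : σ = 1 ∨ σ = -1)
    (hz : ∀ n : ℤ, (1 / 2 : ℂ) - (α : ℂ) + (t : ℂ) * Complex.I ≠ (n : ℂ)) :
    ∫ s in Ioi (0 : ℝ),
        (s : ℂ) ^ ((t : ℂ) * Complex.I) * ((s * μ) ^ (1 / 2 - α) : ℝ) *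
          (Complex.exp (-(σ : ℂ) * Complex.I * (μ : ℂ) * (s : ℂ)) - 1) ^ m / (s : ℂ)
      = Complex.exp (-(σ : ℂ) * Complex.I * ((π : ℂ) / 2) *
            ((1 / 2 : ℂ) - (α : ℂ) + (t : ℂ) * Complex.I)) *
          (μ : ℂ) ^ (-((t : ℂ) * Complex.I)) *
          Complex.Gamma ((1 / 2 : ℂ) - (α : ℂ) + (t : ℂ) * Complex.I) *
          ∑ k ∈ Finset.Icc 1 m,
            (m.choose k : ℂ) * (-1) ^ (m - k) *
              (k : ℂ) ^ (-((1 / 2 : ℂ) - (α : ℂ) + (t : ℂ) * Complex.I)) := by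
  open Stmt3Aux Complex in
  set z : ℂ := (1 / 2 : ℂ) - (α : ℂ) + (t : ℂ) * Complex.I with hzdef
  set w : ℂ := (σ : ℂ) * (μ : ℂ) * Complex.I with hwdef
  have hσ0 : σ ≠ 0 := by rcases hσ with h | h <;> rw [h] <;> norm_num
  have hμ0 : (μ:ℂ) ≠ 0 := Complex.ofReal_ne_zero.2 (ne_of_gt hμ)
  have hwre : w.re = 0 := by
    rw [hwdef]
    simp [Complex.mul_re, Complex.mul_im]
  have hwim : w.im = σ * μ := by
    rw [hwdef]
    simp [Complex.mul_im, Complex.mul_re]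
  have hzre : z.re = 1 / 2 - α := by
    rw [hzdef]
    simp [Complex.add_re, Complex.sub_re, Complex.mul_re]
  have hz1 : -(m:ℝ) < z.re := by rw [hzre]; linarith
  have hz2 : z.re < 0 := by rw [hzre]; linarith
  have hwim0 : w.im ≠ 0 := by rw [hwim]; exact mul_ne_zero hσ0 (ne_of_gt hμ)
  have key := Stmt3Aux.step5 hwre hwim0 hm hz1 hz2 hz
  set c : ℂ := ((μ ^ (1/2 - α) : ℝ) : ℂ) with hcdef
  have hLHSeq : (∫ s in Ioi (0 : ℝ),
        (s : ℂ) ^ ((t : ℂ) * Complex.I) * ((s * μ) ^ (1 / 2 - α) : ℝ) *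
          (Complex.exp (-(σ : ℂ) * Complex.I * (μ : ℂ) * (s : ℂ)) - 1) ^ m / (s : ℂ))
      = c * ∫ s in Ioi (0:ℝ), (s:ℂ) ^ (z - 1) * (Complex.exp (-(w * s)) - 1) ^ m := by
    rw [← MeasureTheory.integral_const_mul]
    refine setIntegral_congr_fun measurableSet_Ioi fun s hs => ?_
    rw [mem_Ioi] at hs
    have hsne : (s:ℂ) ≠ 0 := Complex.ofReal_ne_zero.2 (ne_of_gt hs)
    have hexp : Complex.exp (-(σ : ℂ) * Complex.I * (μ : ℂ) * (s : ℂ))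
        = Complex.exp (-(w * s)) := by
      rw [hwdef]
      congr 1
      ring
    have hsplit : (((s * μ) ^ (1/2 - α) : ℝ) : ℂ) = (s:ℂ) ^ ((1/2 - α : ℝ):ℂ) * c := by
      rw [Real.mul_rpow hs.le hμ.le, Complex.ofReal_mul, Complex.ofReal_cpow hs.le]
    have hcpow : (s:ℂ) ^ ((t:ℂ) * Complex.I) * (s:ℂ) ^ ((1/2 - α : ℝ):ℂ) / (s:ℂ)
        = (s:ℂ) ^ (z - 1) := by
      rw [← Complex.cpow_add _ _ hsne]
      nth_rewrite 2 [show (s:ℂ) = (s:ℂ) ^ (1:ℂ) from (Complex.cpow_one _).symm]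
      rw [← Complex.cpow_sub _ _ hsne]
      congr 1
      rw [hzdef]
      push_cast
      ring
    calc (s : ℂ) ^ ((t : ℂ) * Complex.I) * ((s * μ) ^ (1 / 2 - α) : ℝ) *
          (Complex.exp (-(σ : ℂ) * Complex.I * (μ : ℂ) * (s : ℂ)) - 1) ^ m / (s : ℂ)
        = c * (((s:ℂ) ^ ((t:ℂ) * Complex.I) * (s:ℂ) ^ ((1/2 - α : ℝ):ℂ) / (s:ℂ))
            * (Complex.exp (-(w * s)) - 1) ^ m) := by
          rw [hsplit, hexp]
          ring
      _ = c * ((s:ℂ) ^ (z - 1) * (Complex.exp (-(w * s)) - 1) ^ m) := by rw [hcpow]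
  have hterm : ∀ k ∈ Finset.Icc 1 m, ((k:ℂ) * w) ^ (-z)
      = Complex.exp (-(σ : ℂ) * Complex.I * ((π : ℂ) / 2) * z)
        * ((μ:ℂ) ^ (-z) * (k:ℂ) ^ (-z)) := by
    intro k hk
    rw [Finset.mem_Icc] at hk
    have hk1 : (1:ℝ) ≤ (k:ℝ) := by exact_mod_cast hk.1
    have hkμ : (0:ℝ) < (k:ℝ) * μ := by nlinarith
    have hσI : (σ:ℂ) * Complex.I ≠ 0 := by
      refine mul_ne_zero ?_ Complex.I_ne_zero
      exact Complex.ofReal_ne_zero.2 hσ0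
    have e0 : (k:ℂ) * w = (((k:ℝ) * μ : ℝ) : ℂ) * ((σ:ℂ) * Complex.I) := by
      rw [hwdef]
      push_cast
      ring
    have hkw0 : (k:ℂ) * w ≠ 0 := by
      rw [e0]
      exact mul_ne_zero (Complex.ofReal_ne_zero.2 (ne_of_gt hkμ)) hσI
    have hlogσI : Complex.log ((σ:ℂ) * Complex.I) = (σ:ℂ) * ((π:ℂ)/2) * Complex.I := by
      rcases hσ with h | h <;> rw [h] <;> push_cast <;> simp [Complex.log_I, Complex.log_neg_I]
        <;> ring
    have hlog : Complex.log ((k:ℂ) * w)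
        = ((Real.log ((k:ℝ) * μ) : ℝ) : ℂ) + (σ:ℂ) * ((π:ℂ)/2) * Complex.I := by
      rw [e0, Complex.log_ofReal_mul hkμ hσI, hlogσI]
    rw [Complex.cpow_def_of_ne_zero hkw0, hlog]
    have hsplit : (((Real.log ((k:ℝ) * μ) : ℝ) : ℂ) + (σ:ℂ) * ((π:ℂ)/2) * Complex.I) * (-z)
        = (-(σ : ℂ) * Complex.I * ((π : ℂ) / 2) * z)
          + ((Real.log ((k:ℝ) * μ) : ℝ) : ℂ) * (-z) := by ring
    rw [hsplit, Complex.exp_add]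
    congr 1
    have e1 : Complex.exp (((Real.log ((k:ℝ) * μ) : ℝ) : ℂ) * (-z))
        = (((k:ℝ) * μ : ℝ) : ℂ) ^ (-z) := by
      rw [Complex.cpow_def_of_ne_zero (Complex.ofReal_ne_zero.2 (ne_of_gt hkμ)),
        ← Complex.ofReal_log hkμ.le]
    rw [e1, Complex.ofReal_mul, Complex.mul_cpow_ofReal_nonneg (by positivity) hμ.le]
    rw [mul_comm]
    norm_num
  rw [hLHSeq, key]
  have hsum : ∑ k ∈ Finset.Icc 1 m, (m.choose k : ℂ) * (-1) ^ (m - k) * (((k:ℂ) * w) ^ (-z))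
      = Complex.exp (-(σ : ℂ) * Complex.I * ((π : ℂ) / 2) * z) * (μ:ℂ) ^ (-z)
        * ∑ k ∈ Finset.Icc 1 m, (m.choose k : ℂ) * (-1) ^ (m - k) * (k:ℂ) ^ (-z) := by
    rw [Finset.mul_sum]
    refine Finset.sum_congr rfl fun k hk => ?_
    rw [hterm k hk]
    ring
  rw [hsum]
  have hfactor : c * (μ:ℂ) ^ (-z) = (μ:ℂ) ^ (-((t:ℂ) * Complex.I)) := by
    rw [hcdef, Complex.ofReal_cpow hμ.le, ← Complex.cpow_add _ _ hμ0]
    congr 1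
    rw [hzdef]
    push_cast
    ring
  calc c * (Complex.Gamma z * (Complex.exp (-(σ : ℂ) * Complex.I * ((π : ℂ) / 2) * z)
        * (μ:ℂ) ^ (-z) * ∑ k ∈ Finset.Icc 1 m,
          (m.choose k : ℂ) * (-1) ^ (m - k) * (k:ℂ) ^ (-z)))
      = Complex.exp (-(σ : ℂ) * Complex.I * ((π : ℂ) / 2) * z) * (c * (μ:ℂ) ^ (-z))
        * Complex.Gamma z * ∑ k ∈ Finset.Icc 1 m,
          (m.choose k : ℂ) * (-1) ^ (m - k) * (k:ℂ) ^ (-z) := by ring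
    _ = _ := by rw [hfactor]
end

section
/- Let m ≥ 1 be an integer, β ∈ ℝ, and define f : ℝ → ℂ by f(t) = Σ_{k=1}^{m} binom(m,k) (-1)^{m-k} k^{-β - it}. Then there exist constants C, ε, δ > 0 such that every interval I ⊆ ℝ of length |I| ≥ C contains a subinterval J ⊆ I of length |J| ≥ δ with |f(t)| ≥ ε for all t ∈ J. Consequently, there exist ε' > 0, δ > 0 and N ∈ ℕ such that Σ_{k=-N}^{N} |f(t + kδ)| ≥ ε' for every t ∈ ℝ. -/
open MeasureTheory Set

/-- The exponential sum `f(t) = ∑_{k=1}^m (m choose k) (-1)^(m-k) k^(-β-it)`. -/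
noncomputable def expSum (m : ℕ) (β : ℝ) (t : ℝ) : ℂ :=
  ∑ k ∈ Finset.Icc 1 m,
    (m.choose k : ℂ) * (-1) ^ (m - k) * (k : ℂ) ^ (-(β : ℂ) - (t : ℂ) * Complex.I)

/-- The character `t ↦ k^{-it}` written via `exp`. -/
noncomputable def eChar (k : ℕ) (t : ℝ) : ℂ :=
  Complex.exp ((-(Real.log k : ℂ) * Complex.I) * (t : ℂ))

/-- The coefficient of the `k`-th character. -/
noncomputable def coefC (m : ℕ) (β : ℝ) (k : ℕ) : ℂ :=
  (m.choose k : ℂ) * (-1) ^ (m - k) * Complex.exp (-(β : ℂ) * (Real.log k : ℂ))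

lemma expSum_eq (m : ℕ) (β : ℝ) (t : ℝ) :
    expSum m β t = ∑ k ∈ Finset.Icc 1 m, coefC m β k * eChar k t := by
  unfold expSum coefC eChar
  refine Finset.sum_congr rfl fun k hk => ?_
  have hk1 : 1 ≤ k := (Finset.mem_Icc.mp hk).1
  have hk0 : (k : ℂ) ≠ 0 := Nat.cast_ne_zero.mpr (by omega)
  rw [Complex.cpow_def_of_ne_zero hk0]
  rw [show Complex.log (k : ℂ) = ((Real.log k : ℝ) : ℂ) by
    rw [Complex.ofReal_log (Nat.cast_nonneg k), Complex.ofReal_natCast]]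
  rw [mul_assoc, mul_assoc, mul_assoc]
  congr 1
  rw [← Complex.exp_add]
  congr 1
  ring

lemma abs_exp_neg_mul_I (r x : ℝ) :
    ‖Complex.exp (-(r : ℂ) * Complex.I * (x : ℂ))‖ = 1 := by
  rw [show -(r : ℂ) * Complex.I * (x : ℂ) = ((-(r * x) : ℝ) : ℂ) * Complex.I by
    push_cast; ring]
  exact Complex.norm_exp_ofReal_mul_I _

lemma norm_eChar (k : ℕ) (t : ℝ) : ‖eChar k t‖ = 1 := by
  unfold eChar
  exact abs_exp_neg_mul_I _ _

lemma hasDerivAt_eChar (k : ℕ) (t : ℝ) :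
    HasDerivAt (eChar k) ((-(Real.log k : ℂ) * Complex.I) * eChar k t) t := by
  have h1 : HasDerivAt (fun y : ℝ => (-(Real.log k : ℂ) * Complex.I) * (y : ℂ))
      (-(Real.log k : ℂ) * Complex.I) t := by
    simpa only [mul_one, id_eq] using ((hasDerivAt_id ((t : ℝ) : ℂ)).const_mul
      (-(Real.log k : ℂ) * Complex.I)).comp_ofReal
  have h2 := h1.cexp
  unfold eChar
  convert h2 using 1
  ring

lemma continuous_eChar (k : ℕ) : Continuous (eChar k) :=
  Complex.continuous_exp.comp (continuous_const.mul Complex.continuous_ofReal)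

lemma norm_coefC (m : ℕ) (β : ℝ) (k : ℕ) :
    ‖coefC m β k‖ = (m.choose k : ℝ) * Real.exp (-β * Real.log k) := by
  unfold coefC
  rw [norm_mul, norm_mul, norm_pow, norm_neg, norm_one, one_pow, mul_one,
    Complex.norm_natCast, Complex.norm_exp]
  congr 1
  rw [show -(β : ℂ) * (Real.log k : ℂ) = ((-β * Real.log k : ℝ) : ℂ) by push_cast; ring,
    Complex.ofReal_re]

lemma norm_coefC_one (m : ℕ) (β : ℝ) : ‖coefC m β 1‖ = m := by
  rw [norm_coefC]
  simp

/-- Integral bound for nontrivial characters. -/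
lemma integral_eChar_bound (k : ℕ) (hk : 2 ≤ k) (a b : ℝ) :
    ‖∫ t in a..b, eChar k t‖ ≤ 2 / Real.log 2 := by
  have hlog : 0 < Real.log k := Real.log_pos (by exact_mod_cast hk)
  have hc : (-(Real.log k : ℂ) * Complex.I) ≠ 0 := by
    simp only [ne_eq, mul_eq_zero, neg_eq_zero, Complex.ofReal_eq_zero, Complex.I_ne_zero,
      or_false]
    exact ne_of_gt hlog
  have := integral_exp_mul_complex (a := a) (b := b) hc
  unfold eChar
  rw [this, norm_div]
  have habs : ‖(-(Real.log k : ℂ) * Complex.I)‖ = Real.log k := by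
    rw [norm_mul, norm_neg, Complex.norm_real, Complex.norm_I, mul_one,
      Real.norm_eq_abs, abs_of_pos hlog]
  rw [habs]
  have hnum : ‖Complex.exp (-(Real.log k : ℂ) * Complex.I * (b : ℂ))
      - Complex.exp (-(Real.log k : ℂ) * Complex.I * (a : ℂ))‖ ≤ 2 := by
    refine (norm_sub_le _ _).trans ?_
    have e1 : ∀ x : ℝ, ‖Complex.exp (-(Real.log k : ℂ) * Complex.I * (x : ℂ))‖ = 1 := by
      intro x
      exact abs_exp_neg_mul_I _ _
    rw [e1 a, e1 b]; norm_num
  have hlog2 : 0 < Real.log 2 := Real.log_pos one_lt_two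
  have hmono : 2 / Real.log k ≤ 2 / Real.log 2 := by
    apply div_le_div_of_nonneg_left (by norm_num) hlog2
    exact Real.log_le_log (by norm_num) (by exact_mod_cast hk)
  calc ‖_ - _‖ / Real.log k ≤ 2 / Real.log k := by
        apply div_le_div_of_nonneg_right hnum hlog.le
      _ ≤ 2 / Real.log 2 := hmono

lemma eChar_one (t : ℝ) : eChar 1 t = 1 := by
  unfold eChar; simp

/-- Lipschitz bound for `expSum`. -/
lemma expSum_lipschitz (m : ℕ) (β : ℝ) (s t : ℝ) :
    ‖expSum m β t - expSum m β s‖ ≤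
      (∑ k ∈ Finset.Icc 1 m, ‖coefC m β k‖ * Real.log k) * |t - s| := by
  set L := ∑ k ∈ Finset.Icc 1 m, ‖coefC m β k‖ * Real.log k with hL
  have hderiv : ∀ x : ℝ, HasDerivAt (expSum m β)
      (∑ k ∈ Finset.Icc 1 m, coefC m β k * ((-(Real.log k : ℂ) * Complex.I) * eChar k x)) x := by
    intro x
    have : HasDerivAt (fun t => ∑ k ∈ Finset.Icc 1 m, coefC m β k * eChar k t)
        (∑ k ∈ Finset.Icc 1 m, coefC m β k * ((-(Real.log k : ℂ) * Complex.I) * eChar k x)) x :=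
      HasDerivAt.fun_sum fun k _ => (hasDerivAt_eChar k x).const_mul (coefC m β k)
    have heq : (fun t => ∑ k ∈ Finset.Icc 1 m, coefC m β k * eChar k t) = expSum m β := by
      funext t; rw [expSum_eq]
    rwa [heq] at this
  have hbound : ∀ x : ℝ,
      ‖∑ k ∈ Finset.Icc 1 m, coefC m β k * ((-(Real.log k : ℂ) * Complex.I) * eChar k x)‖
        ≤ L := by
    intro x
    refine (norm_sum_le _ _).trans ?_
    apply Finset.sum_le_sum
    intro k hk
    have hk1 : 1 ≤ k := (Finset.mem_Icc.mp hk).1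
    have hlog : 0 ≤ Real.log k := Real.log_nonneg (by exact_mod_cast hk1)
    rw [norm_mul, norm_mul, norm_mul, norm_neg, Complex.norm_real, norm_eChar,
      Complex.norm_I, Real.norm_eq_abs, abs_of_nonneg hlog]
    apply le_of_eq
    ring
  have := Convex.norm_image_sub_le_of_norm_hasDerivWithin_le
    (f := expSum m β)
    (f' := fun x => ∑ k ∈ Finset.Icc 1 m,
      coefC m β k * ((-(Real.log k : ℂ) * Complex.I) * eChar k x))
    (s := (Set.univ : Set ℝ))
    (fun x _ => (hderiv x).hasDerivWithinAt) (fun x _ => hbound x) convex_univ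
    (Set.mem_univ s) (Set.mem_univ t)
  simpa [Real.norm_eq_abs] using this

/-- For an integer `m ≥ 1` and `β ∈ ℝ`, with
`f(t) = ∑_{k=1}^m (m choose k)(-1)^(m-k) k^(-β-it)`: there exist `C, ε, δ > 0` such that every
interval of length at least `C` contains a subinterval of length at least `δ` on which
`|f| ≥ ε`; consequently there are `ε' > 0`, `δ > 0` and `N ∈ ℕ` with
`∑_{k=-N}^N |f(t + kδ)| ≥ ε'` for all `t`. -/
theorem stmt_5 (m : ℕ) (hm : 1 ≤ m) (β : ℝ) :
    (∃ C ε δ : ℝ, 0 < C ∧ 0 < ε ∧ 0 < δ ∧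
      ∀ a b : ℝ, C ≤ b - a → ∃ c d : ℝ, a ≤ c ∧ d ≤ b ∧ δ ≤ d - c ∧
        ∀ t ∈ Icc c d, ε ≤ ‖expSum m β t‖) ∧
    (∃ ε' δ : ℝ, 0 < ε' ∧ 0 < δ ∧ ∃ N : ℕ, ∀ t : ℝ,
      ε' ≤ ∑ k ∈ Finset.Icc (-(N : ℤ)) (N : ℤ),
        ‖expSum m β (t + (k : ℝ) * δ)‖) := by
  classical
  set B := ∑ k ∈ Finset.Icc 2 m, ‖coefC m β k‖ * (2 / Real.log 2) with hBdef
  set L := ∑ k ∈ Finset.Icc 1 m, ‖coefC m β k‖ * Real.log k with hLdef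
  have hB0 : 0 ≤ B := Finset.sum_nonneg fun k _ => mul_nonneg (norm_nonneg _)
    (by positivity)
  have hL0 : 0 ≤ L := Finset.sum_nonneg fun k hk => mul_nonneg (norm_nonneg _)
    (Real.log_nonneg (by exact_mod_cast (Finset.mem_Icc.mp hk).1))
  have hm1 : (1 : ℝ) ≤ m := by exact_mod_cast hm
  set δ := (m : ℝ) / (8 * (L + 1)) with hδdef
  have hδ : 0 < δ := by
    apply div_pos (by linarith) (by linarith)
  set ε := (m : ℝ) / 4 with hεdef
  have hε : 0 < ε := by rw [hεdef]; linarith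
  set C := 2 * B + 2 * δ + 1 with hCdef
  have hC : 0 < C := by rw [hCdef]; linarith
  have hLδ : L * δ ≤ (m : ℝ) / 8 := by
    have h8 : δ * (8 * (L + 1)) = m := div_mul_cancel₀ _ (by linarith)
    nlinarith [hδ.le]
  have key : ∀ a b : ℝ, C ≤ b - a → ∃ c d : ℝ, a ≤ c ∧ d ≤ b ∧ δ ≤ d - c ∧
      ∀ t ∈ Icc c d, ε ≤ ‖expSum m β t‖ := by
    intro a b hab
    have hab' : a ≤ b := by linarith
    -- integral decomposition
    have hint : ∫ t in a..b, expSum m β t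
        = ∑ k ∈ Finset.Icc 1 m, coefC m β k * ∫ t in a..b, eChar k t := by
      have : ∀ t : ℝ, expSum m β t = ∑ k ∈ Finset.Icc 1 m, coefC m β k * eChar k t :=
        expSum_eq m β
      simp_rw [this]
      rw [intervalIntegral.integral_finset_sum (f := fun k t => coefC m β k * eChar k t) (fun k _ =>
        (continuous_const.mul (continuous_eChar k)).intervalIntegrable _ _)]
      exact Finset.sum_congr rfl fun k _ => intervalIntegral.integral_const_mul _ _
    have hsplit : Finset.Icc 1 m = insert 1 (Finset.Icc 2 m) := by
      ext x; simp only [Finset.mem_Icc, Finset.mem_insert]; omega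
    have hnotmem : (1 : ℕ) ∉ Finset.Icc 2 m := by simp
    rw [hsplit, Finset.sum_insert hnotmem] at hint
    have hchar1 : (∫ t in a..b, eChar 1 t) = ((b - a : ℝ) : ℂ) := by
      simp_rw [eChar_one]
      simp
    have h1norm : ‖coefC m β 1 * ∫ t in a..b, eChar 1 t‖ = m * (b - a) := by
      have habs' : |b - a| = b - a := abs_of_nonneg (by linarith)
      rw [norm_mul, norm_coefC_one, hchar1, Complex.norm_real, Real.norm_eq_abs, habs']
    have hrest : ‖∑ k ∈ Finset.Icc 2 m, coefC m β k * ∫ t in a..b, eChar k t‖ ≤ B := by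
      refine (norm_sum_le _ _).trans ?_
      rw [hBdef]
      refine Finset.sum_le_sum fun k hk => ?_
      rw [norm_mul]
      exact mul_le_mul_of_nonneg_left
        (integral_eChar_bound k (Finset.mem_Icc.mp hk).1 a b) (norm_nonneg _)
    have hlow : m * (b - a) - B ≤ ‖∫ t in a..b, expSum m β t‖ := by
      have htri : ‖coefC m β 1 * ∫ t in a..b, eChar 1 t‖
          ≤ ‖∫ t in a..b, expSum m β t‖
            + ‖∑ k ∈ Finset.Icc 2 m, coefC m β k * ∫ t in a..b, eChar k t‖ := by
        rw [hint]
        exact norm_le_add_norm_add _ _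
      rw [h1norm] at htri
      linarith
    -- a point where |f| is large
    have hex : ∃ t0 ∈ Icc a b, (m : ℝ) / 2 ≤ ‖expSum m β t0‖ := by
      by_contra hcon
      push_neg at hcon
      have hup : ‖∫ t in a..b, expSum m β t‖ ≤ ((m : ℝ) / 2) * |b - a| := by
        refine intervalIntegral.norm_integral_le_of_norm_le_const fun x hx => ?_
        rw [Set.uIoc_of_le hab'] at hx
        exact (hcon x ⟨hx.1.le, hx.2⟩).le
      rw [abs_of_nonneg (by linarith)] at hup
      have hmb : (b - a) ≤ m * (b - a) :=
        le_mul_of_one_le_left (by linarith) hm1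
      nlinarith
    obtain ⟨t0, ht0, hft0⟩ := hex
    have hnear : ∀ u : ℝ, |u - t0| ≤ δ → ε ≤ ‖expSum m β u‖ := by
      intro u hu
      have hlip := expSum_lipschitz m β t0 u
      have h1 : ‖expSum m β u - expSum m β t0‖ ≤ L * δ :=
        hlip.trans (mul_le_mul_of_nonneg_left hu hL0)
      have h2 : ‖expSum m β t0‖ - ‖expSum m β u‖ ≤ ‖expSum m β t0 - expSum m β u‖ :=
        norm_sub_norm_le _ _
      rw [norm_sub_rev] at h2
      rw [hεdef]
      linarith
    by_cases hcase : t0 + δ ≤ b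
    · refine ⟨t0, t0 + δ, ht0.1, hcase, by linarith, fun t ht => ?_⟩
      exact hnear t (abs_le.mpr ⟨by linarith [ht.1], by linarith [ht.2]⟩)
    · push_neg at hcase
      refine ⟨t0 - δ, t0, ?_, ht0.2, by linarith, fun t ht => ?_⟩
      · have hba : a + C ≤ b := by linarith
        rw [hCdef] at hba
        linarith
      · exact hnear t (abs_le.mpr ⟨by linarith [ht.1], by linarith [ht.2]⟩)
  refine ⟨⟨C, ε, δ, hC, hε, hδ, key⟩, ε, δ, hε, hδ, ⌈C / δ⌉₊ + 1, fun t => ?_⟩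
  set N : ℕ := ⌈C / δ⌉₊ + 1 with hN
  obtain ⟨c, d, hc, hd, hlen, hbnd⟩ := key t (t + C) (by linarith)
  set k0 : ℤ := ⌈(c - t) / δ⌉ with hk0
  have hk0a : (0 : ℤ) ≤ k0 := Int.ceil_nonneg (div_nonneg (by linarith) hδ.le)
  have hctC : c - t ≤ C := by linarith
  have hk0b : k0 ≤ (N : ℤ) := by
    rw [hk0, Int.ceil_le, hN]
    push_cast
    calc (c - t) / δ ≤ C / δ := by
          exact div_le_div_of_nonneg_right hctC hδ.le
      _ ≤ (⌈C / δ⌉₊ : ℝ) := Nat.le_ceil _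
      _ ≤ (⌈C / δ⌉₊ : ℝ) + 1 := by linarith
  have hs1 : c ≤ t + (k0 : ℝ) * δ := by
    have := Int.le_ceil ((c - t) / δ)
    rw [← hk0] at this
    have h' : c - t ≤ (k0 : ℝ) * δ := (div_le_iff₀ hδ).mp this
    linarith
  have hs2 : t + (k0 : ℝ) * δ ≤ d := by
    have h1 : ((⌈(c - t) / δ⌉ : ℤ) : ℝ) < (c - t) / δ + 1 := Int.ceil_lt_add_one _
    rw [← hk0] at h1
    have h2 : (k0 : ℝ) * δ < ((c - t) / δ + 1) * δ :=
      mul_lt_mul_of_pos_right h1 hδ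
    rw [add_mul, one_mul, div_mul_cancel₀ _ hδ.ne'] at h2
    linarith
  have hmem : k0 ∈ Finset.Icc (-(N : ℤ)) (N : ℤ) := Finset.mem_Icc.mpr ⟨by omega, hk0b⟩
  calc ε ≤ ‖expSum m β (t + (k0 : ℝ) * δ)‖ := hbnd _ ⟨hs1, hs2⟩
    _ ≤ ∑ k ∈ Finset.Icc (-(N : ℤ)) (N : ℤ),
        ‖expSum m β (t + (k : ℝ) * δ)‖ :=
      Finset.single_le_sum (f := fun k : ℤ => ‖expSum m β (t + (k : ℝ) * δ)‖)
        (fun i _ => norm_nonneg _) hmem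
end

section
/- Let m ≥ 2 be an integer and β ∈ ℝ. Then there exist n ∈ ℕ and c > 0 such that for all t ∈ ℝ: |Σ_{k=1}^{m} binom(m,k) (-1)^{m-k} k^{-β} (log k)^n e^{-it log k}| ≥ c. In particular, n can be chosen so large that m^{-β} (log m)^n > Σ_{k=2}^{m-1} binom(m,k) k^{-β} (log k)^n. -/
open MeasureTheory Set

/-- For an integer `m ≥ 2` and `β ∈ ℝ` there exist `n ∈ ℕ` and `c > 0`
such that `|∑_{k=1}^m (m choose k)(-1)^(m-k) k^(-β) (log k)^n e^(-it log k)| ≥ c` for all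
`t ∈ ℝ`; in particular `n` can be chosen so large that
`m^(-β) (log m)^n > ∑_{k=2}^{m-1} (m choose k) k^(-β) (log k)^n`. -/
theorem stmt_6 (m : ℕ) (hm : 2 ≤ m) (β : ℝ) :
    ∃ (n : ℕ) (c : ℝ), 0 < c ∧
      (∀ t : ℝ, c ≤ ‖(∑ k ∈ Finset.Icc 1 m,
        (m.choose k : ℂ) * (-1) ^ (m - k) * (((k : ℝ) ^ (-β) * Real.log k ^ n : ℝ) : ℂ) *
          Complex.exp (-(t : ℂ) * (Real.log k : ℂ) * Complex.I))‖) ∧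
      (∑ k ∈ Finset.Icc 2 (m - 1), (m.choose k : ℝ) * (k : ℝ) ^ (-β) * Real.log k ^ n
        < (m : ℝ) ^ (-β) * Real.log m ^ n) := by
  have hL : 0 < Real.log m := Real.log_pos (by exact_mod_cast (by omega : 1 < m))
  have hm1pos : (0:ℝ) < ((m-1 : ℕ) : ℝ) := by exact_mod_cast (by omega : 0 < m-1)
  have hlt : ((m-1:ℕ):ℝ) < (m:ℝ) := by exact_mod_cast (by omega : m-1 < m)
  have hloglt : Real.log ((m-1:ℕ):ℝ) < Real.log m := Real.log_lt_log hm1pos hlt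
  have hlog0 : 0 ≤ Real.log ((m-1:ℕ):ℝ) :=
    Real.log_nonneg (by exact_mod_cast (by omega : 1 ≤ m-1))
  set r := Real.log ((m-1:ℕ):ℝ) / Real.log m with hr
  have hr0 : 0 ≤ r := div_nonneg hlog0 hL.le
  have hr1 : r < 1 := (div_lt_one hL).mpr hloglt
  set A := ∑ k ∈ Finset.Icc 2 (m-1), (m.choose k : ℝ) * (k:ℝ)^(-β) with hA
  have hA0 : 0 ≤ A := Finset.sum_nonneg fun k _ =>
    mul_nonneg (Nat.cast_nonneg _) (Real.rpow_nonneg (Nat.cast_nonneg _) _)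
  have hmpow : 0 < (m:ℝ)^(-β) :=
    Real.rpow_pos_of_pos (by exact_mod_cast (by omega : 0 < m)) _
  have hε : 0 < (m:ℝ)^(-β) / (A+1) := div_pos hmpow (by linarith)
  have htd : Filter.Tendsto (fun n => r^n) Filter.atTop (nhds 0) :=
    tendsto_pow_atTop_nhds_zero_of_lt_one hr0 hr1
  obtain ⟨n, hrn, hn1⟩ :=
    ((htd.eventually (gt_mem_nhds hε)).and (Filter.eventually_ge_atTop 1)).exists
  -- key inequality
  set S := ∑ k ∈ Finset.Icc 2 (m - 1), (m.choose k : ℝ) * (k : ℝ) ^ (-β) * Real.log k ^ n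
    with hS
  have hSM : S < (m : ℝ) ^ (-β) * Real.log m ^ n := by
    have h1 : S ≤ A * Real.log ((m-1:ℕ):ℝ) ^ n := by
      rw [hA, Finset.sum_mul]
      apply Finset.sum_le_sum
      intro k hk
      rw [Finset.mem_Icc] at hk
      have hlk : 0 ≤ Real.log k :=
        Real.log_nonneg (by exact_mod_cast (by omega : 1 ≤ k))
      have hle : Real.log k ≤ Real.log ((m-1:ℕ):ℝ) :=
        Real.log_le_log (by exact_mod_cast (by omega : 0 < k))
          (by exact_mod_cast hk.2)
      exact mul_le_mul_of_nonneg_left (pow_le_pow_left₀ hlk hle n)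
        (mul_nonneg (Nat.cast_nonneg _) (Real.rpow_nonneg (Nat.cast_nonneg _) _))
    have h2 : Real.log ((m-1:ℕ):ℝ) = r * Real.log m := by
      rw [hr, div_mul_cancel₀ _ hL.ne']
    have h3 : A * Real.log ((m-1:ℕ):ℝ) ^ n ≤ (A+1) * r^n * Real.log m ^ n := by
      rw [h2, mul_pow, ← mul_assoc]
      have : A * r^n ≤ (A+1) * r^n :=
        mul_le_mul_of_nonneg_right (by linarith) (pow_nonneg hr0 n)
      exact mul_le_mul_of_nonneg_right this (pow_nonneg hL.le n)
    have h4 : (A+1) * r^n * Real.log m ^ n < (m:ℝ)^(-β) * Real.log m ^ n := by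
      have h5 : (A+1) * r^n < (A+1) * ((m:ℝ)^(-β) / (A+1)) :=
        mul_lt_mul_of_pos_left hrn (by linarith)
      rw [mul_div_cancel₀ _ (by linarith : A + 1 ≠ 0)] at h5
      exact mul_lt_mul_of_pos_right h5 (pow_pos hL n)
    linarith
  refine ⟨n, (m : ℝ) ^ (-β) * Real.log m ^ n - S, by linarith, fun t => ?_, hSM⟩
  -- abs of a single term
  have habs : ∀ k : ℕ, 1 ≤ k →
      ‖((m.choose k : ℂ) * (-1) ^ (m - k) *
        (((k : ℝ) ^ (-β) * Real.log k ^ n : ℝ) : ℂ) *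
        Complex.exp (-(t : ℂ) * (Real.log k : ℂ) * Complex.I))‖
      = (m.choose k : ℝ) * (k:ℝ)^(-β) * Real.log k ^ n := by
    intro k hk
    have h1 : 0 ≤ (k:ℝ)^(-β) * Real.log k ^ n :=
      mul_nonneg (Real.rpow_nonneg (Nat.cast_nonneg _) _)
        (pow_nonneg (Real.log_nonneg (by exact_mod_cast hk)) _)
    have hexp : -(t : ℂ) * (Real.log k : ℂ) * Complex.I
        = ((-(t * Real.log k) : ℝ) : ℂ) * Complex.I := by push_cast; ring
    rw [norm_mul, norm_mul, norm_mul, hexp, Complex.norm_exp_ofReal_mul_I,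
      Complex.norm_real, Real.norm_of_nonneg h1, norm_pow]
    simp only [norm_neg, norm_one, one_pow, Complex.norm_natCast, mul_one]
    ring
  have hsplit : Finset.Icc 1 m = insert 1 (insert m (Finset.Icc 2 (m-1))) := by
    ext x
    simp only [Finset.mem_Icc, Finset.mem_insert]
    omega
  rw [hsplit, Finset.sum_insert (by simp [Finset.mem_Icc]; omega),
    Finset.sum_insert (by simp [Finset.mem_Icc]; omega)]
  have hone : (m.choose 1 : ℂ) * (-1) ^ (m - 1) *
      (((1 : ℕ) : ℝ) ^ (-β) * Real.log ((1:ℕ):ℝ) ^ n : ℝ) *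
      Complex.exp (-(t : ℂ) * (Real.log ((1:ℕ):ℝ) : ℂ) * Complex.I) = 0 := by
    simp [Real.log_one, zero_pow (by omega : n ≠ 0)]
  rw [hone, zero_add]
  set b := ∑ k ∈ Finset.Icc 2 (m-1),
      ((m.choose k : ℂ) * (-1) ^ (m - k) *
        (((k : ℝ) ^ (-β) * Real.log k ^ n : ℝ) : ℂ) *
        Complex.exp (-(t : ℂ) * (Real.log k : ℂ) * Complex.I)) with hb
  set a := (m.choose m : ℂ) * (-1) ^ (m - m) *
        (((m : ℝ) ^ (-β) * Real.log m ^ n : ℝ) : ℂ) *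
        Complex.exp (-(t : ℂ) * (Real.log m : ℂ) * Complex.I) with ha
  have h1 : ‖a‖ = (m : ℝ) ^ (-β) * Real.log m ^ n := by
    rw [ha]
    have := habs m (by omega)
    rw [this]
    simp [Nat.choose_self]
  have h2 : ‖b‖ ≤ S := by
    rw [hb, hS]
    refine le_trans (norm_sum_le _ _) ?_
    apply Finset.sum_le_sum
    intro k hk
    rw [Finset.mem_Icc] at hk
    rw [habs k (by omega)]
  have h3 : ‖a‖ - ‖b‖ ≤ ‖a + b‖ := by
    have h := norm_add_le (a + b) (-b)
    simp only [add_neg_cancel_right, norm_neg] at h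
    linarith
  linarith
end

section
/- Let α > 0 and β ∈ (0,1). Then sup over all s ∈ ℝ and all θ with |θ| < π of the quantity (1 + |s|)^α (π - |θ|)^α e^{θ s} / |sin(π(β + is))| is finite. -/
open MeasureTheory Set Real

/-- For `α > 0` and `β ∈ (0,1)`, the supremum over `s ∈ ℝ` and `|θ| < π` of
`(1+|s|)^α (π-|θ|)^α e^(θs) / |sin(π(β+is))|` is finite. -/
theorem stmt_8 (α : ℝ) (hα : 0 < α) (β : ℝ) (hβ : β ∈ Ioo (0 : ℝ) 1) :
    ∃ C : ℝ, ∀ s θ : ℝ, |θ| < π →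
      (1 + |s|) ^ α * (π - |θ|) ^ α * Real.exp (θ * s) /
          ‖Complex.sin ((π : ℂ) * ((β : ℂ) + (s : ℂ) * Complex.I))‖ ≤ C := by
  obtain ⟨hβ0, hβ1⟩ := hβ
  have hπ := Real.pi_pos
  have hπ1 : (1 : ℝ) ≤ π := by linarith [Real.pi_gt_three]
  set c := Real.sin (π * β) with hc_def
  have hc : 0 < c := Real.sin_pos_of_pos_of_lt_pi (by positivity) (by nlinarith)
  set n := ⌈α⌉₊ with hn_def
  refine ⟨2 * (Nat.factorial n : ℝ) * Real.exp π / c, fun s θ hθ => ?_⟩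
  set t := |s| with ht_def
  set φ := |θ| with hφ_def
  have ht0 : 0 ≤ t := abs_nonneg s
  have hφπ : φ < π := hθ
  have hφ0 : 0 ≤ φ := abs_nonneg θ
  -- lower bound for |sin|
  have habs : c / 2 * Real.exp (π * t) ≤
      ‖Complex.sin ((π : ℂ) * ((β : ℂ) + (s : ℂ) * Complex.I))‖ := by
    have h1 : (π : ℂ) * ((β : ℂ) + (s : ℂ) * Complex.I) =
        ((π * β : ℝ) : ℂ) + ((π * s : ℝ) : ℂ) * Complex.I := by push_cast; ring
    rw [h1, Complex.sin_add_mul_I]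
    have hre : (Complex.sin ((π * β : ℝ) : ℂ) * Complex.cosh ((π * s : ℝ) : ℂ) +
        Complex.cos ((π * β : ℝ) : ℂ) * Complex.sinh ((π * s : ℝ) : ℂ) * Complex.I).re =
        c * Real.cosh (π * s) := by
      simp [← Complex.ofReal_sin, ← Complex.ofReal_cos, ← Complex.ofReal_cosh,
        ← Complex.ofReal_sinh, ← Complex.ofReal_mul, hc_def]
    calc c / 2 * Real.exp (π * t) ≤ c * Real.cosh (π * s) := by
          have : Real.cosh (π * s) = Real.cosh (π * t) := by
            rw [← Real.cosh_abs, abs_mul, abs_of_pos hπ]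
          rw [this, Real.cosh_eq]
          have := Real.exp_pos (-(π * t))
          nlinarith [Real.exp_pos (π * t)]
      _ = |c * Real.cosh (π * s)| := by
          rw [abs_of_nonneg]
          positivity
      _ ≤ _ := by rw [← hre]; exact Complex.abs_re_le_norm _
  rw [div_le_div_iff₀ (lt_of_lt_of_le (by positivity) habs) hc]
  -- numerator bound
  have hθs : θ * s ≤ φ * t := by
    calc θ * s ≤ |θ * s| := le_abs_self _
      _ = φ * t := abs_mul θ s
  set u := (π - φ) * t with hu_def
  have hu0 : 0 ≤ u := by
    apply mul_nonneg (by linarith) ht0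
  have key1 : (1 + t) ^ α * (π - φ) ^ α ≤ (π + u) ^ α := by
    rw [← Real.mul_rpow (by linarith) (by linarith)]
    apply Real.rpow_le_rpow (mul_nonneg (by linarith) (by linarith)) _ hα.le
    nlinarith
  have key2 : (π + u) ^ α ≤ (Nat.factorial n : ℝ) * Real.exp (π + u) := by
    have h1 : (π + u) ^ α ≤ (π + u) ^ (n : ℝ) := by
      apply Real.rpow_le_rpow_of_exponent_le (by linarith)
      exact Nat.le_ceil α
    have h2 : (π + u) ^ (n : ℝ) = (π + u) ^ n := Real.rpow_natCast _ n
    have h3 : (π + u) ^ n / (Nat.factorial n : ℝ) ≤ Real.exp (π + u) :=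
      Real.pow_div_factorial_le_exp (x := π + u) (by linarith) n
    have hfac : (0 : ℝ) < (Nat.factorial n : ℝ) := by positivity
    calc (π + u) ^ α ≤ (π + u) ^ n := by rw [← h2]; exact h1
      _ ≤ (Nat.factorial n : ℝ) * Real.exp (π + u) := by
          rw [div_le_iff₀ hfac] at h3; linarith [h3]
  -- assemble
  have hexp : Real.exp (θ * s) ≤ Real.exp (φ * t) := Real.exp_le_exp.2 hθs
  have hnum : (1 + t) ^ α * (π - φ) ^ α * Real.exp (θ * s) ≤
      (Nat.factorial n : ℝ) * Real.exp π * Real.exp (π * t) := by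
    calc (1 + t) ^ α * (π - φ) ^ α * Real.exp (θ * s)
        ≤ (π + u) ^ α * Real.exp (φ * t) := by
          apply mul_le_mul key1 hexp (Real.exp_pos _).le
          positivity
      _ ≤ (Nat.factorial n : ℝ) * Real.exp (π + u) * Real.exp (φ * t) := by
          apply mul_le_mul_of_nonneg_right key2 (Real.exp_pos _).le
      _ = (Nat.factorial n : ℝ) * Real.exp π * Real.exp (π * t) := by
          rw [mul_assoc, mul_assoc, ← Real.exp_add, ← Real.exp_add]
          congr 2
          rw [hu_def]; ring
  calc (1 + t) ^ α * (π - φ) ^ α * Real.exp (θ * s) * c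
      ≤ (Nat.factorial n : ℝ) * Real.exp π * Real.exp (π * t) * c := by
        apply mul_le_mul_of_nonneg_right hnum hc.le
    _ ≤ 2 * (Nat.factorial n : ℝ) * Real.exp π * (c / 2 * Real.exp (π * t)) := by
        ring_nf; rfl
    _ ≤ 2 * (Nat.factorial n : ℝ) * Real.exp π *
        ‖Complex.sin ((π : ℂ) * ((β : ℂ) + (s : ℂ) * Complex.I))‖ := by
        apply mul_le_mul_of_nonneg_left habs (by positivity)
end

section
/- Let α > 1/2. Then there exist constants c, C > 0 such that for all s ∈ ℝ: c · cosh(πs)² (1+|s|)^{-2α} ≤ ∫_{-π}^{π} (π - |θ|)^{2α - 1} e^{2θ s} dθ ≤ C · cosh(πs)² (1+|s|)^{-2α}. -/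
open MeasureTheory Set Real intervalIntegral

noncomputable def Jf (α s : ℝ) : ℝ := ∫ u in (0:ℝ)..π, u ^ (2*α - 1) * Real.exp (-(2*u*s))

lemma cont_rpow {α : ℝ} (hα : 1/2 < α) : Continuous fun x : ℝ => x ^ (2*α - 1) := by
  rw [continuous_iff_continuousAt]
  intro x
  exact Real.continuousAt_rpow_const x _ (Or.inr (by linarith))

lemma cont_J {α : ℝ} (hα : 1/2 < α) (s : ℝ) :
    Continuous fun u : ℝ => u ^ (2*α - 1) * Real.exp (-(2*u*s)) :=
  (cont_rpow hα).mul (Real.continuous_exp.comp (by continuity))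

lemma cont_I {α : ℝ} (hα : 1/2 < α) (s : ℝ) :
    Continuous fun θ : ℝ => (π - |θ|) ^ (2*α - 1) * Real.exp (2*θ*s) :=
  ((cont_rpow hα).comp (continuous_const.sub continuous_abs)).mul
    (Real.continuous_exp.comp (by continuity))

lemma decomp {α : ℝ} (hα : 1/2 < α) (s : ℝ) :
    (∫ θ in (-π)..π, (π - |θ|) ^ (2*α - 1) * Real.exp (2*θ*s)) =
      Real.exp (2*π*s) * Jf α s + Real.exp (-(2*π*s)) * Jf α (-s) := by
  have h1 : IntervalIntegrable (fun θ : ℝ => (π - |θ|) ^ (2*α - 1) * Real.exp (2*θ*s))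
      volume (-π) 0 := (cont_I hα s).intervalIntegrable _ _
  have h2 : IntervalIntegrable (fun θ : ℝ => (π - |θ|) ^ (2*α - 1) * Real.exp (2*θ*s))
      volume 0 π := (cont_I hα s).intervalIntegrable _ _
  rw [← intervalIntegral.integral_add_adjacent_intervals h1 h2]
  have e1 : (∫ θ in (-π)..(0:ℝ), (π - |θ|) ^ (2*α - 1) * Real.exp (2*θ*s))
      = Real.exp (-(2*π*s)) * Jf α (-s) := by
    have hc : ∀ θ ∈ uIcc (-π) (0:ℝ), (π - |θ|) ^ (2*α - 1) * Real.exp (2*θ*s)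
        = Real.exp (-(2*π*s)) * ((θ + π) ^ (2*α-1) * Real.exp (-(2*(θ+π)*(-s)))) := by
      intro θ hθ
      rw [uIcc_of_le (by linarith [Real.pi_pos])] at hθ
      rw [abs_of_nonpos hθ.2, show π - -θ = θ + π by ring, mul_left_comm, ← Real.exp_add]
      congr 2
      ring
    rw [intervalIntegral.integral_congr hc, intervalIntegral.integral_const_mul,
      intervalIntegral.integral_comp_add_right
        (fun u => u ^ (2*α-1) * Real.exp (-(2*u*(-s)))) π]
    norm_num [Jf]
  have e2 : (∫ θ in (0:ℝ)..π, (π - |θ|) ^ (2*α - 1) * Real.exp (2*θ*s))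
      = Real.exp (2*π*s) * Jf α s := by
    have hc : ∀ θ ∈ uIcc (0:ℝ) π, (π - |θ|) ^ (2*α - 1) * Real.exp (2*θ*s)
        = Real.exp (2*π*s) * ((π - θ) ^ (2*α-1) * Real.exp (-(2*(π-θ)*s))) := by
      intro θ hθ
      rw [uIcc_of_le Real.pi_pos.le] at hθ
      rw [abs_of_nonneg hθ.1, mul_left_comm, ← Real.exp_add]
      congr 2
      ring
    rw [intervalIntegral.integral_congr hc, intervalIntegral.integral_const_mul,
      intervalIntegral.integral_comp_sub_left
        (fun u => u ^ (2*α-1) * Real.exp (-(2*u*s))) π]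
    norm_num [Jf]
  rw [e1, e2, add_comm]

lemma J_nonneg {α : ℝ} (s : ℝ) : 0 ≤ Jf α s := by
  apply intervalIntegral.integral_nonneg Real.pi_pos.le
  intro u hu
  exact mul_nonneg (Real.rpow_nonneg hu.1 _) (Real.exp_pos _).le

lemma J_lower {α : ℝ} (hα : 1/2 < α) {s : ℝ} (hs : 0 ≤ s) :
    Real.exp (-2) / (2*α) * (1+s) ^ (-(2*α)) ≤ Jf α s := by
  have hα0 : 0 < 2*α := by linarith
  set b : ℝ := (1+s)⁻¹ with hb
  have hb0 : 0 < b := by positivity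
  have hbπ : b ≤ π := by
    have h1 : b ≤ 1 := by
      rw [hb]
      exact inv_le_one_of_one_le₀ (by linarith)
    linarith [Real.pi_gt_three]
  have int2 : IntervalIntegrable (fun u : ℝ => u ^ (2*α-1) * Real.exp (-(2*u*s)))
      volume 0 b := (cont_J hα s).intervalIntegrable _ _
  have int3 : IntervalIntegrable (fun u : ℝ => u ^ (2*α-1) * Real.exp (-(2*u*s)))
      volume b π := (cont_J hα s).intervalIntegrable _ _
  have int1 : IntervalIntegrable (fun u : ℝ => Real.exp (-2) * u ^ (2*α-1)) volume 0 b := by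
    apply Continuous.intervalIntegrable
    exact continuous_const.mul (cont_rpow hα)
  have key1 : (∫ u in (0:ℝ)..b, Real.exp (-2) * u ^ (2*α-1))
      ≤ ∫ u in (0:ℝ)..b, u ^ (2*α-1) * Real.exp (-(2*u*s)) := by
    apply intervalIntegral.integral_mono_on hb0.le int1 int2
    intro u hu
    rw [mul_comm]
    have hus : 2*u*s ≤ 2 := by
      have h2 : u * s ≤ b * s := mul_le_mul_of_nonneg_right hu.2 hs
      have h3 : b * s ≤ 1 := by
        rw [hb]
        rw [inv_mul_le_iff₀ (by linarith)]
        linarith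
      linarith
    have : Real.exp (-2) ≤ Real.exp (-(2*u*s)) := Real.exp_le_exp.mpr (by linarith)
    exact mul_le_mul_of_nonneg_left this (Real.rpow_nonneg hu.1 _)
  have key2 : (∫ u in (0:ℝ)..b, Real.exp (-2) * u ^ (2*α-1))
      = Real.exp (-2) / (2*α) * (1+s) ^ (-(2*α)) := by
    rw [intervalIntegral.integral_const_mul, integral_rpow (Or.inl (by linarith))]
    rw [show 2*α - 1 + 1 = 2*α by ring, Real.zero_rpow (by positivity)]
    rw [hb, Real.inv_rpow (by linarith), ← Real.rpow_neg (by linarith)]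
    ring
  have key3 : (∫ u in (0:ℝ)..b, u ^ (2*α-1) * Real.exp (-(2*u*s))) ≤ Jf α s := by
    have hsplit : Jf α s = (∫ u in (0:ℝ)..b, u ^ (2*α-1) * Real.exp (-(2*u*s)))
        + ∫ u in b..π, u ^ (2*α-1) * Real.exp (-(2*u*s)) := by
      rw [Jf, ← intervalIntegral.integral_add_adjacent_intervals int2 int3]
    have hpos : 0 ≤ ∫ u in b..π, u ^ (2*α-1) * Real.exp (-(2*u*s)) := by
      apply intervalIntegral.integral_nonneg hbπ
      intro u hu
      exact mul_nonneg (Real.rpow_nonneg (le_trans hb0.le hu.1) _) (Real.exp_pos _).le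
    linarith
  linarith [key2 ▸ key1]

lemma J_neg {α : ℝ} (hα : 1/2 < α) {s : ℝ} (hs : 0 ≤ s) :
    Jf α (-s) ≤ π ^ (2*α) * Real.exp (2*π*s) := by
  have h : Jf α (-s) ≤ ∫ _u in (0:ℝ)..π, π ^ (2*α-1) * Real.exp (2*π*s) := by
    apply intervalIntegral.integral_mono_on Real.pi_pos.le
      ((cont_J hα (-s)).intervalIntegrable _ _) (by apply Continuous.intervalIntegrable; continuity)
    intro u hu
    have h1 : u ^ (2*α-1) ≤ π ^ (2*α-1) := Real.rpow_le_rpow hu.1 hu.2 (by linarith)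
    have h2 : Real.exp (-(2*u*(-s))) ≤ Real.exp (2*π*s) := by
      apply Real.exp_le_exp.mpr
      have := mul_le_mul_of_nonneg_right hu.2 hs
      nlinarith
    exact mul_le_mul h1 h2 (Real.exp_pos _).le (Real.rpow_nonneg Real.pi_pos.le _)
  rw [intervalIntegral.integral_const] at h
  calc Jf α (-s) ≤ (π - 0) • (π ^ (2*α-1) * Real.exp (2*π*s)) := h
    _ = π ^ (2*α) * Real.exp (2*π*s) := by
        rw [smul_eq_mul, show (2:ℝ)*α = 2*α - 1 + 1 by ring,
          Real.rpow_add_one Real.pi_ne_zero]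
        ring

lemma J_upper {α : ℝ} (hα : 1/2 < α) {s : ℝ} (hs : 0 ≤ s) :
    Jf α s ≤ (Real.exp (2*π) * ((1/2) ^ (2*α) * Real.Gamma (2*α))) * (1+s) ^ (-(2*α)) := by
  have hα0 : (0:ℝ) < 2*α := by linarith
  set r : ℝ := 2*(1+s) with hr
  have hr0 : 0 < r := by positivity
  -- integrability on Ioi 0
  have hGam := Real.GammaIntegral_convergent hα0
  have hcomp : IntegrableOn (fun x : ℝ => Real.exp (-(r*x)) * (r*x) ^ (2*α - 1)) (Ioi 0) := by
    have := (integrableOn_Ioi_comp_mul_left_iff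
      (fun x : ℝ => Real.exp (-x) * x ^ (2*α - 1)) 0 hr0).mpr (by simpa using hGam)
    simpa using this
  have hInt : IntegrableOn (fun u : ℝ => u ^ (2*α-1) * Real.exp (-(r*u))) (Ioi 0) := by
    have hc : IntegrableOn (fun x : ℝ => (r ^ (2*α-1))⁻¹ *
        (Real.exp (-(r*x)) * (r*x) ^ (2*α - 1))) (Ioi 0) := hcomp.const_mul _
    apply hc.congr_fun _ measurableSet_Ioi
    intro x hx
    simp only
    rw [Real.mul_rpow hr0.le (le_of_lt hx)]
    have hne : r ^ (2*α-1) ≠ 0 := (Real.rpow_pos_of_pos hr0 (2*α-1)).ne'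
    field_simp
  -- step 1: pointwise bound
  have h1 : Jf α s ≤ Real.exp (2*π) * ∫ u in (0:ℝ)..π, u ^ (2*α-1) * Real.exp (-(r*u)) := by
    rw [← intervalIntegral.integral_const_mul]
    apply intervalIntegral.integral_mono_on Real.pi_pos.le
      ((cont_J hα s).intervalIntegrable _ _)
      (by
        apply Continuous.intervalIntegrable
        exact continuous_const.mul ((cont_rpow hα).mul
          (Real.continuous_exp.comp (by continuity))))
    intro u hu
    have he : Real.exp (-(2*u*s)) = Real.exp (2*u) * Real.exp (-(r*u)) := by
      rw [← Real.exp_add]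
      congr 1
      rw [hr]; ring
    calc u ^ (2*α-1) * Real.exp (-(2*u*s))
        = Real.exp (2*u) * (u ^ (2*α-1) * Real.exp (-(r*u))) := by rw [he]; ring
      _ ≤ Real.exp (2*π) * (u ^ (2*α-1) * Real.exp (-(r*u))) :=
          mul_le_mul_of_nonneg_right (Real.exp_le_exp.mpr (by linarith [hu.2]))
            (mul_nonneg (Real.rpow_nonneg hu.1 _) (Real.exp_pos _).le)
  -- step 2: extend to Ioi 0
  have h2 : (∫ u in (0:ℝ)..π, u ^ (2*α-1) * Real.exp (-(r*u)))
      ≤ ∫ u in Ioi (0:ℝ), u ^ (2*α-1) * Real.exp (-(r*u)) := by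
    rw [intervalIntegral.integral_of_le Real.pi_pos.le]
    apply setIntegral_mono_set hInt
    · filter_upwards [ae_restrict_mem measurableSet_Ioi] with x hx
      exact mul_nonneg (Real.rpow_nonneg (le_of_lt hx) _) (Real.exp_pos _).le
    · exact (Ioc_subset_Ioi_self).eventuallyLE
  -- step 3: Gamma value
  have h3 : (∫ u in Ioi (0:ℝ), u ^ (2*α-1) * Real.exp (-(r*u)))
      = (1/r) ^ (2*α) * Real.Gamma (2*α) := by
    exact Real.integral_rpow_mul_exp_neg_mul_Ioi hα0 hr0
  have h4 : ((1:ℝ)/r) ^ (2*α) = (1/2) ^ (2*α) * (1+s) ^ (-(2*α)) := by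
    rw [hr, show (1:ℝ)/(2*(1+s)) = (1/2) * (1+s)⁻¹ by field_simp,
      Real.mul_rpow (by norm_num) (by positivity),
      Real.inv_rpow (by linarith), ← Real.rpow_neg (by linarith)]
  calc Jf α s ≤ Real.exp (2*π) * ∫ u in (0:ℝ)..π, u ^ (2*α-1) * Real.exp (-(r*u)) := h1
    _ ≤ Real.exp (2*π) * ((1/r) ^ (2*α) * Real.Gamma (2*α)) := by
        rw [← h3]
        exact mul_le_mul_of_nonneg_left h2 (Real.exp_pos _).le
    _ = (Real.exp (2*π) * ((1/2) ^ (2*α) * Real.Gamma (2*α))) * (1+s) ^ (-(2*α)) := by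
        rw [h4]; ring

lemma poly_bound {α : ℝ} (hα : 1/2 < α) :
    ∃ C₃ : ℝ, 0 < C₃ ∧ ∀ s : ℝ, 0 ≤ s → (1+s) ^ (2*α) ≤ C₃ * Real.exp (2*π*s) := by
  set n : ℕ := ⌈2*α⌉₊ + 7 with hn
  have hn0 : 0 < (n:ℝ) := by positivity
  have hn2α : 2*α ≤ (n:ℝ) := by
    have := Nat.le_ceil (2*α)
    have h7 : (⌈2*α⌉₊ : ℝ) ≤ (n:ℝ) := by
      rw [hn]; push_cast; linarith
    linarith
  have hn2π : 2*π ≤ (n:ℝ) := by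
    have : (7:ℝ) ≤ (n:ℝ) := by rw [hn]; push_cast; linarith [Nat.cast_nonneg (α := ℝ) ⌈2*α⌉₊]
    nlinarith [Real.pi_lt_d2]
  refine ⟨((n:ℝ)/(2*π))^n, by positivity, fun s hs => ?_⟩
  have h1 : (1+s) ^ (2*α) ≤ (1+s) ^ ((n:ℝ)) :=
    Real.rpow_le_rpow_of_exponent_le (by linarith) hn2α
  rw [Real.rpow_natCast] at h1
  have h2 : 1 + s ≤ ((n:ℝ)/(2*π)) * Real.exp (2*π*s/n) := by
    have he : 2*π*s/n + 1 ≤ Real.exp (2*π*s/n) := Real.add_one_le_exp _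
    have hq : (1:ℝ) ≤ (n:ℝ)/(2*π) := by
      rw [le_div_iff₀ (by positivity)]
      linarith
    have := mul_le_mul_of_nonneg_left he (le_trans zero_le_one hq)
    have hcalc : ((n:ℝ)/(2*π)) * (2*π*s/n + 1) = s + (n:ℝ)/(2*π) := by
      field_simp
    nlinarith
  have h3 : (1+s)^n ≤ (((n:ℝ)/(2*π)) * Real.exp (2*π*s/n))^n :=
    pow_le_pow_left₀ (by linarith) h2 n
  have h4 : (((n:ℝ)/(2*π)) * Real.exp (2*π*s/n))^n
      = ((n:ℝ)/(2*π))^n * Real.exp (2*π*s) := by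
    rw [mul_pow, ← Real.exp_nat_mul]
    congr 2
    field_simp
  calc (1+s) ^ (2*α) ≤ (1+s)^n := h1
    _ ≤ (((n:ℝ)/(2*π)) * Real.exp (2*π*s/n))^n := h3
    _ = ((n:ℝ)/(2*π))^n * Real.exp (2*π*s) := h4

lemma cosh_sq_le {x : ℝ} (hx : 0 ≤ x) : Real.cosh x ^ 2 ≤ Real.exp (2*x) := by
  have h1 : Real.cosh x ≤ Real.exp x := by
    rw [Real.cosh_eq]
    have := Real.exp_le_exp.mpr (neg_le_self hx)
    linarith
  have h2 : Real.exp (2*x) = Real.exp x ^ 2 := by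
    rw [sq, ← Real.exp_add]; ring_nf
  rw [h2]
  exact pow_le_pow_left₀ ((Real.cosh_pos (x := x)).le) h1 2

lemma exp_le_cosh_sq (x : ℝ) : Real.exp (2*x) ≤ 4 * Real.cosh x ^ 2 := by
  have h1 : Real.exp x ≤ 2 * Real.cosh x := by
    rw [Real.cosh_eq]
    have := (Real.exp_pos (-x)).le
    linarith
  have h2 : Real.exp (2*x) = Real.exp x ^ 2 := by
    rw [sq, ← Real.exp_add]; ring_nf
  rw [h2]
  calc Real.exp x ^ 2 ≤ (2 * Real.cosh x)^2 :=
      pow_le_pow_left₀ (Real.exp_pos x).le h1 2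
    _ = 4 * Real.cosh x ^ 2 := by ring

/-- For `α > 1/2` there are constants `c, C > 0` such that for all `s ∈ ℝ`,
`c·cosh(πs)²(1+|s|)^(-2α) ≤ ∫_{-π}^{π} (π-|θ|)^(2α-1) e^(2θs) dθ ≤ C·cosh(πs)²(1+|s|)^(-2α)`. -/
theorem stmt_10 (α : ℝ) (hα : 1 / 2 < α) :
    ∃ c C : ℝ, 0 < c ∧ 0 < C ∧ ∀ s : ℝ,
      c * Real.cosh (π * s) ^ 2 * (1 + |s|) ^ (-(2 * α)) ≤
          (∫ θ in (-π)..π, (π - |θ|) ^ (2 * α - 1) * Real.exp (2 * θ * s)) ∧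
      (∫ θ in (-π)..π, (π - |θ|) ^ (2 * α - 1) * Real.exp (2 * θ * s)) ≤
          C * Real.cosh (π * s) ^ 2 * (1 + |s|) ^ (-(2 * α)) := by
  obtain ⟨C₃, hC₃, hpoly⟩ := poly_bound hα
  set c : ℝ := Real.exp (-2) / (2*α) with hc
  set K : ℝ := Real.exp (2*π) * ((1/2) ^ (2*α) * Real.Gamma (2*α)) with hK
  have hc0 : 0 < c := by
    rw [hc]; positivity
  have hK0 : 0 < K := by
    rw [hK]
    have := Real.Gamma_pos_of_pos (show (0:ℝ) < 2*α by linarith)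
    positivity
  set C : ℝ := 4*K + 4 * π ^ (2*α) * C₃ with hCdef
  have hπα : (0:ℝ) < π ^ (2*α) := Real.rpow_pos_of_pos Real.pi_pos _
  have hC0 : 0 < C := by rw [hCdef]; positivity
  refine ⟨c, C, hc0, hC0, ?_⟩
  -- main claim for t ≥ 0
  have claim : ∀ t : ℝ, 0 ≤ t →
      (c * Real.cosh (π * t) ^ 2 * (1 + t) ^ (-(2 * α)) ≤
        Real.exp (2*π*t) * Jf α t + Real.exp (-(2*π*t)) * Jf α (-t)) ∧
      (Real.exp (2*π*t) * Jf α t + Real.exp (-(2*π*t)) * Jf α (-t) ≤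
        C * Real.cosh (π * t) ^ 2 * (1 + t) ^ (-(2 * α))) := by
    intro t ht
    have hX : (0:ℝ) < (1 + t) ^ (-(2 * α)) := Real.rpow_pos_of_pos (by linarith) _
    have hcosh2 : Real.cosh (π*t) ^ 2 ≤ Real.exp (2*π*t) := by
      have := cosh_sq_le (mul_nonneg Real.pi_pos.le ht)
      rwa [show 2*(π*t) = 2*π*t by ring] at this
    have hcosh4 : Real.exp (2*π*t) ≤ 4 * Real.cosh (π*t) ^ 2 := by
      have := exp_le_cosh_sq (π*t)
      rwa [show 2*(π*t) = 2*π*t by ring] at this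
    constructor
    · have hJl := J_lower hα ht
      have h1 : c * Real.cosh (π * t) ^ 2 * (1 + t) ^ (-(2 * α)) ≤
          Real.exp (2*π*t) * (c * (1 + t) ^ (-(2 * α))) := by
        rw [show Real.exp (2*π*t) * (c * (1 + t) ^ (-(2 * α)))
          = c * Real.exp (2*π*t) * (1 + t) ^ (-(2 * α)) by ring]
        apply mul_le_mul_of_nonneg_right _ hX.le
        exact mul_le_mul_of_nonneg_left hcosh2 hc0.le
      have h2 : Real.exp (2*π*t) * (c * (1 + t) ^ (-(2 * α))) ≤
          Real.exp (2*π*t) * Jf α t := by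
        apply mul_le_mul_of_nonneg_left _ (Real.exp_pos _).le
        rw [hc]; exact hJl
      have h3 : (0:ℝ) ≤ Real.exp (-(2*π*t)) * Jf α (-t) :=
        mul_nonneg (Real.exp_pos _).le (J_nonneg _)
      linarith
    · have hJu := J_upper hα ht
      have hJn := J_neg hα ht
      have h1 : Real.exp (2*π*t) * Jf α t ≤
          (4*K) * Real.cosh (π*t) ^ 2 * (1 + t) ^ (-(2 * α)) := by
        calc Real.exp (2*π*t) * Jf α t
            ≤ Real.exp (2*π*t) * (K * (1 + t) ^ (-(2 * α))) :=
              mul_le_mul_of_nonneg_left hJu (Real.exp_pos _).le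
          _ ≤ (4 * Real.cosh (π*t) ^ 2) * (K * (1 + t) ^ (-(2 * α))) :=
              mul_le_mul_of_nonneg_right hcosh4 (by positivity)
          _ = (4*K) * Real.cosh (π*t) ^ 2 * (1 + t) ^ (-(2 * α)) := by ring
      have h2 : Real.exp (-(2*π*t)) * Jf α (-t) ≤ π ^ (2*α) := by
        calc Real.exp (-(2*π*t)) * Jf α (-t)
            ≤ Real.exp (-(2*π*t)) * (π ^ (2*α) * Real.exp (2*π*t)) :=
              mul_le_mul_of_nonneg_left hJn (Real.exp_pos _).le
          _ = π ^ (2*α) := by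
              rw [show Real.exp (-(2*π*t)) * (π ^ (2*α) * Real.exp (2*π*t))
                = π ^ (2*α) * (Real.exp (-(2*π*t)) * Real.exp (2*π*t)) by ring,
                ← Real.exp_add]
              norm_num
      have h3 : (1:ℝ) ≤ C₃ * Real.exp (2*π*t) * (1 + t) ^ (-(2 * α)) := by
        have hp := hpoly t ht
        have := mul_le_mul_of_nonneg_right hp hX.le
        rwa [← Real.rpow_add (by linarith : (0:ℝ) < 1 + t), add_neg_cancel,
          Real.rpow_zero] at this
      have h4 : π ^ (2*α) ≤ (4 * π ^ (2*α) * C₃) * Real.cosh (π*t) ^ 2 * (1 + t) ^ (-(2 * α)) := by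
        have h5 : π ^ (2*α) ≤ π ^ (2*α) * (C₃ * Real.exp (2*π*t) * (1 + t) ^ (-(2 * α))) := by
          nlinarith
        have h6 : π ^ (2*α) * (C₃ * Real.exp (2*π*t) * (1 + t) ^ (-(2 * α)))
            ≤ π ^ (2*α) * (C₃ * (4 * Real.cosh (π*t) ^ 2) * (1 + t) ^ (-(2 * α))) := by
          apply mul_le_mul_of_nonneg_left _ hπα.le
          apply mul_le_mul_of_nonneg_right _ hX.le
          exact mul_le_mul_of_nonneg_left hcosh4 hC₃.le
        calc π ^ (2*α) ≤ π ^ (2*α) * (C₃ * Real.exp (2*π*t) * (1 + t) ^ (-(2 * α))) := h5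
          _ ≤ π ^ (2*α) * (C₃ * (4 * Real.cosh (π*t) ^ 2) * (1 + t) ^ (-(2 * α))) := h6
          _ = (4 * π ^ (2*α) * C₃) * Real.cosh (π*t) ^ 2 * (1 + t) ^ (-(2 * α)) := by ring
      rw [hCdef]
      have : (4*K + 4 * π ^ (2*α) * C₃) * Real.cosh (π*t) ^ 2 * (1 + t) ^ (-(2 * α))
          = (4*K) * Real.cosh (π*t) ^ 2 * (1 + t) ^ (-(2 * α))
            + (4 * π ^ (2*α) * C₃) * Real.cosh (π*t) ^ 2 * (1 + t) ^ (-(2 * α)) := by ring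
      linarith
  intro s
  rw [decomp hα s]
  rcases le_or_gt 0 s with hs | hs
  · rw [abs_of_nonneg hs]
    exact claim s hs
  · rw [abs_of_neg hs]
    have h := claim (-s) (by linarith)
    rw [mul_neg, Real.cosh_neg, show 2*π*(-s) = -(2*π*s) by ring, neg_neg] at h
    simp only [neg_neg] at h
    exact ⟨by linarith [h.1], by linarith [h.2]⟩
end

section
/- There exists a constant C > 0 such that for every complex number z with |z| = 1 and Re z > 0, the function h_z(t) = e^{-zt}(1 - e^{-t}) on (0,∞) satisfies ∫₀^∞ (|h_z(t)|² + t² |h_z'(t)|²) dt/t ≤ C (1 + (Re z)^{-2}). -/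
open MeasureTheory Set

/-- There is a constant `C > 0` such that for every `z : ℂ` with `|z| = 1`
and `Re z > 0`, the function `h_z(t) = e^(-zt)(1 - e^(-t))` on `(0,∞)`, with derivative
`h_z'(t) = e^(-zt)(e^(-t) - z(1 - e^(-t)))`, satisfies
`∫₀^∞ (|h_z(t)|² + t²|h_z'(t)|²) dt/t ≤ C (1 + (Re z)⁻²)` (stated via the lower Lebesgue
integral, so finiteness of the integral is part of the claim). -/
theorem stmt_11 :
    ∃ C : ℝ, 0 < C ∧ ∀ z : ℂ, ‖z‖ = 1 → 0 < z.re →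
      ∫⁻ t in Ioi (0 : ℝ),
          ENNReal.ofReal
            ((‖(Complex.exp (-z * (t : ℂ)) * (1 - Complex.exp (-(t : ℂ))))‖ ^ 2 +
              t ^ 2 * ‖(Complex.exp (-z * (t : ℂ)) *
                (Complex.exp (-(t : ℂ)) - z * (1 - Complex.exp (-(t : ℂ)))))‖ ^ 2) / t)
        ≤ ENNReal.ofReal (C * (1 + ((z.re)⁻¹) ^ 2)) := by
  refine ⟨1, one_pos, fun z hz ha => ?_⟩
  set a := z.re with haa
  have ha1 : a ≤ 1 := by
    calc a ≤ ‖z‖ := Complex.re_le_norm z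
    _ = 1 := hz
  set r : ℝ := 2 * a with hr
  have hrpos : 0 < r := by positivity
  -- the dominating function
  set F : ℝ → ℝ := fun t => 2 * (t * Real.exp (-(r * t))) with hF
  have hFnn : ∀ t ∈ Ioi (0:ℝ), 0 ≤ F t := by
    intro t ht
    have := Real.exp_pos (-(r * t))
    have ht' : 0 < t := ht
    positivity
  -- pointwise bound
  have hbound : ∀ t ∈ Ioi (0:ℝ),
      ENNReal.ofReal
            ((‖(Complex.exp (-z * (t : ℂ)) * (1 - Complex.exp (-(t : ℂ))))‖ ^ 2 +
              t ^ 2 * ‖(Complex.exp (-z * (t : ℂ)) *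
                (Complex.exp (-(t : ℂ)) - z * (1 - Complex.exp (-(t : ℂ)))))‖ ^ 2) / t)
        ≤ ENNReal.ofReal (F t) := by
    intro t ht
    rw [mem_Ioi] at ht
    apply ENNReal.ofReal_le_ofReal
    have hexpabs : ‖(Complex.exp (-z * (t : ℂ)))‖ = Real.exp (-(a * t)) := by
      rw [Complex.norm_exp]
      congr 1
      simp [Complex.mul_re, haa]
    have hone : (1 : ℂ) - Complex.exp (-(t : ℂ)) = ((1 - Real.exp (-t) : ℝ) : ℂ) := by
      rw [show (-(t:ℂ)) = ((-t : ℝ) : ℂ) by push_cast; ring, ← Complex.ofReal_exp]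
      push_cast
      ring
    have habs1 : ‖(1 - Complex.exp (-(t : ℂ)))‖ = 1 - Real.exp (-t) := by
      rw [hone, Complex.norm_real, Real.norm_eq_abs, abs_of_nonneg]
      have : Real.exp (-t) ≤ 1 := Real.exp_le_one_iff.mpr (by linarith)
      linarith
    have h1 : 1 - Real.exp (-t) ≤ t := by
      have := Real.add_one_le_exp (-t)
      linarith
    have h0 : 0 ≤ 1 - Real.exp (-t) := by
      have : Real.exp (-t) ≤ 1 := Real.exp_le_one_iff.mpr (by linarith)
      linarith
    -- first term
    have hA : ‖(Complex.exp (-z * (t : ℂ)) * (1 - Complex.exp (-(t : ℂ))))‖ ^ 2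
        ≤ Real.exp (-(a*t)) ^ 2 * t ^ 2 := by
      rw [norm_mul, hexpabs, habs1, mul_pow]
      gcongr
    -- second term
    have hB : ‖(Complex.exp (-z * (t : ℂ)) *
        (Complex.exp (-(t : ℂ)) - z * (1 - Complex.exp (-(t : ℂ)))))‖ ^ 2
        ≤ Real.exp (-(a*t)) ^ 2 := by
      rw [norm_mul, hexpabs]
      have hin : ‖(Complex.exp (-(t : ℂ)) - z * (1 - Complex.exp (-(t : ℂ))))‖ ≤ 1 := by
        calc ‖(Complex.exp (-(t : ℂ)) - z * (1 - Complex.exp (-(t : ℂ))))‖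
            ≤ ‖(Complex.exp (-(t : ℂ)))‖
              + ‖(z * (1 - Complex.exp (-(t : ℂ))))‖ := by
              exact (norm_sub_le _ _)
          _ = Real.exp (-t) + (1 - Real.exp (-t)) := by
              rw [norm_mul, hz, one_mul, habs1]
              congr 1
              rw [show (-(t:ℂ)) = ((-t : ℝ) : ℂ) by push_cast; ring, ← Complex.ofReal_exp,
                Complex.norm_real, Real.norm_eq_abs, abs_of_nonneg (Real.exp_pos _).le]
          _ = 1 := by ring
      calc (Real.exp (-(a*t)) * ‖(Complex.exp (-(t : ℂ))
              - z * (1 - Complex.exp (-(t : ℂ))))‖) ^ 2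
          ≤ (Real.exp (-(a*t)) * 1) ^ 2 := by
            gcongr
        _ = Real.exp (-(a*t)) ^ 2 := by ring
    have hexp2 : Real.exp (-(a*t)) ^ 2 = Real.exp (-(r * t)) := by
      rw [← Real.exp_nat_mul]
      congr 1
      rw [hr]; ring
    rw [div_le_iff₀ ht]
    have hE : (0:ℝ) ≤ Real.exp (-(a*t)) ^ 2 := by positivity
    calc ‖(Complex.exp (-z * (t : ℂ)) * (1 - Complex.exp (-(t : ℂ))))‖ ^ 2 +
          t ^ 2 * ‖(Complex.exp (-z * (t : ℂ)) *
            (Complex.exp (-(t : ℂ)) - z * (1 - Complex.exp (-(t : ℂ)))))‖ ^ 2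
        ≤ Real.exp (-(a*t)) ^ 2 * t ^ 2 + t ^ 2 * Real.exp (-(a*t)) ^ 2 := by
          gcongr
      _ = F t * t := by rw [hF, hexp2]; ring
  -- integrability of F
  have hint : IntegrableOn F (Ioi (0:ℝ)) := by
    have h0 : IntegrableOn (fun x : ℝ => x ^ (1:ℝ) * Real.exp (- r * x ^ (1:ℝ))) (Ioi 0) :=
      integrableOn_rpow_mul_exp_neg_mul_rpow (by norm_num) one_pos hrpos
    have h1 : IntegrableOn (fun x : ℝ => x * Real.exp (-(r * x))) (Ioi 0) := by
      refine h0.congr_fun (fun x _ => ?_) measurableSet_Ioi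
      simp only [Real.rpow_one, neg_mul]
    exact h1.const_mul 2
  -- value of the integral
  have hval : ∫ t in Ioi (0:ℝ), F t = 2 * ((1 / r) ^ (2:ℝ) * Real.Gamma 2) := by
    simp only [hF]
    rw [MeasureTheory.integral_const_mul]
    congr 1
    rw [← Real.integral_rpow_mul_exp_neg_mul_Ioi (by norm_num : (0:ℝ) < 2) hrpos]
    refine setIntegral_congr_fun measurableSet_Ioi (fun x hx => ?_)
    rw [show (2:ℝ) - 1 = 1 by norm_num, Real.rpow_one]
  have hGamma : Real.Gamma 2 = 1 := by
    rw [Real.Gamma_two]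
  -- put it together
  calc ∫⁻ t in Ioi (0 : ℝ),
          ENNReal.ofReal
            ((‖(Complex.exp (-z * (t : ℂ)) * (1 - Complex.exp (-(t : ℂ))))‖ ^ 2 +
              t ^ 2 * ‖(Complex.exp (-z * (t : ℂ)) *
                (Complex.exp (-(t : ℂ)) - z * (1 - Complex.exp (-(t : ℂ)))))‖ ^ 2) / t)
      ≤ ∫⁻ t in Ioi (0:ℝ), ENNReal.ofReal (F t) :=
        setLIntegral_mono' measurableSet_Ioi hbound
    _ = ENNReal.ofReal (∫ t in Ioi (0:ℝ), F t) := by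
        rw [MeasureTheory.ofReal_integral_eq_lintegral_ofReal hint]
        exact (ae_restrict_iff' measurableSet_Ioi).2 (Filter.Eventually.of_forall hFnn)
    _ ≤ ENNReal.ofReal (1 * (1 + (a⁻¹) ^ 2)) := by
        apply ENNReal.ofReal_le_ofReal
        rw [hval, hGamma]
        have h2 : (1 / r) ^ (2:ℝ) = (1/r)^(2:ℕ) := by
          rw [← Real.rpow_natCast]; norm_num
        rw [h2]
        have hainv : a⁻¹ ^ 2 = (a^2)⁻¹ := by rw [inv_pow]
        rw [hainv, hr]
        have ha2 : 0 < a ^ 2 := by positivity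
        rw [div_pow, one_pow, mul_pow]
        have key : 2 * (1 / ((2:ℝ)^2 * a^2) * 1) = (1/2) * (a^2)⁻¹ := by
          field_simp
        rw [key]
        have hpos : (0:ℝ) < (a^2)⁻¹ := by positivity
        linarith
end
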